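/- arXiv:1612.09540 — 6 statements merged into one kernel-verified Lean document; each statement's English description precedes it below -/
import Mathlib

section
/- Let C be a monoidal category with coequalizers and A an algebra in C that is left coflat (i.e., − ⊗ A preserves coequalizers). If X is a right A-module and Y is an A-bimodule, then X ⊗_A Y carries a right A-module structure induced by the right action of A on Y, and the canonical epimorphism q : X ⊗ Y → X ⊗_A Y is right A-linear; moreover (X ⊗_A Y, q) is a coequalizer in the category of right A-modules. -/
open CategoryTheory MonoidalCategory Limits

section Aux

variable {C : Type*} [Category C] [MonoidalCategory C] [HasCoequalizers C]
    (A : Mon C)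
    (coflatA : PreservesColimitsOfShape WalkingParallelPair
      (MonoidalCategory.tensorRight A.X))
    (X : C) (μ : X ⊗ A.X ⟶ X) (Y : Bimod A A)

theorem stmt6.wf : ((μ ▷ Y.X) ▷ A.X) ≫ ((α_ _ _ _).hom ≫ (X ◁ Y.actRight)) =
    ((α_ _ _ _).hom ≫ (α_ _ _ _).hom ≫ (X ◁ A.X ◁ Y.actRight) ≫ (α_ _ _ _).inv) ≫
      (μ ▷ Y.X) := by
  slice_lhs 1 2 => rw [associator_naturality_left]
  slice_lhs 2 3 => rw [← whisker_exchange]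
  simp

theorem stmt6.wg : (((α_ X A.X Y.X).hom ≫ (X ◁ Y.actLeft)) ▷ A.X) ≫
      ((α_ _ _ _).hom ≫ (X ◁ Y.actRight)) =
    ((α_ _ _ _).hom ≫ (α_ _ _ _).hom ≫ (X ◁ A.X ◁ Y.actRight) ≫ (α_ _ _ _).inv) ≫
      ((α_ X A.X Y.X).hom ≫ (X ◁ Y.actLeft)) := by
  simp only [comp_whiskerRight, whisker_assoc, Category.assoc, Iso.inv_hom_id_assoc]
  slice_lhs 3 4 =>
    rw [← MonoidalCategory.whiskerLeft_comp, Y.middle_assoc, MonoidalCategory.whiskerLeft_comp]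
  simp

/-- The right action of `A` on `X ⊗_A Y`. -/
noncomputable def stmt6.act :
    (coequalizer (μ ▷ Y.X) ((α_ X A.X Y.X).hom ≫ (X ◁ Y.actLeft))) ⊗ A.X ⟶
      coequalizer (μ ▷ Y.X) ((α_ X A.X Y.X).hom ≫ (X ◁ Y.actLeft)) :=
  letI := coflatA
  (PreservesCoequalizer.iso (tensorRight A.X) _ _).inv ≫
    colimMap (parallelPairHom ((μ ▷ Y.X) ▷ A.X)
      (((α_ X A.X Y.X).hom ≫ (X ◁ Y.actLeft)) ▷ A.X)
      (μ ▷ Y.X) ((α_ X A.X Y.X).hom ≫ (X ◁ Y.actLeft))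
      ((α_ _ _ _).hom ≫ (α_ _ _ _).hom ≫ (X ◁ A.X ◁ Y.actRight) ≫ (α_ _ _ _).inv)
      ((α_ _ _ _).hom ≫ (X ◁ Y.actRight)) (stmt6.wf A X μ Y) (stmt6.wg A X Y))

theorem stmt6.π_act :
    (coequalizer.π _ _ ▷ A.X) ≫ stmt6.act A coflatA X μ Y =
      (α_ X Y.X A.X).hom ≫ (X ◁ Y.actRight) ≫
        coequalizer.π (μ ▷ Y.X) ((α_ X A.X Y.X).hom ≫ (X ◁ Y.actLeft)) := by
  letI := coflatA
  dsimp only [stmt6.act]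
  erw [map_π_preserves_coequalizer_inv_colimMap (tensorRight A.X)]
  simp only [Category.assoc]

end Aux

/-- if `A` is a left coflat algebra (`− ⊗ A` preserves coequalizers), `X` a right
`A`-module and `Y` an `A`-bimodule, then `X ⊗_A Y` carries a right `A`-module structure induced
by the right `A`-action on `Y`, the canonical epimorphism `q : X ⊗ Y → X ⊗_A Y` is right
`A`-linear, and `(X ⊗_A Y, q)` is a coequalizer in the category of right `A`-modules
(expressed by the universal property among right `A`-linear morphisms). -/
theorem stmt6 {C : Type*} [Category C] [MonoidalCategory C] [HasCoequalizers C]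
    (A : Mon C)
    (coflatA : PreservesColimitsOfShape WalkingParallelPair
      (MonoidalCategory.tensorRight A.X))
    (X : C) (μ : X ⊗ A.X ⟶ X)
    (act_one : (X ◁ A.mon.one) ≫ μ = (ρ_ X).hom)
    (act_assoc : (α_ X A.X A.X).inv ≫ (μ ▷ A.X) ≫ μ = (X ◁ A.mon.mul) ≫ μ) (Y : Bimod A A) :
    ∃ act : (coequalizer (μ ▷ Y.X) ((α_ X A.X Y.X).hom ≫ (X ◁ Y.actLeft))) ⊗ A.X ⟶
        coequalizer (μ ▷ Y.X) ((α_ X A.X Y.X).hom ≫ (X ◁ Y.actLeft)),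
      -- right `A`-module axioms for `X ⊗_A Y`
      ((_ ◁ A.mon.one) ≫ act = (ρ_ _).hom) ∧
      ((α_ _ A.X A.X).inv ≫ (act ▷ A.X) ≫ act = (_ ◁ A.mon.mul) ≫ act) ∧
      -- the canonical epimorphism `q` is right `A`-linear
      ((coequalizer.π _ _ ▷ A.X) ≫ act =
        (α_ X Y.X A.X).hom ≫ (X ◁ Y.actRight) ≫ coequalizer.π _ _) ∧
      -- `(X ⊗_A Y, q)` is a coequalizer in the category of right `A`-modules
      (∀ (P : C) (actP : P ⊗ A.X ⟶ P),
        ((P ◁ A.mon.one) ≫ actP = (ρ_ P).hom) →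
        ((α_ P A.X A.X).inv ≫ (actP ▷ A.X) ≫ actP = (P ◁ A.mon.mul) ≫ actP) →
        ∀ h : X ⊗ Y.X ⟶ P,
          (μ ▷ Y.X) ≫ h = ((α_ X A.X Y.X).hom ≫ (X ◁ Y.actLeft)) ≫ h →
          ((h ▷ A.X) ≫ actP = (α_ X Y.X A.X).hom ≫ (X ◁ Y.actRight) ≫ h) →
          ∃! g : coequalizer (μ ▷ Y.X) ((α_ X A.X Y.X).hom ≫ (X ◁ Y.actLeft)) ⟶ P,
            coequalizer.π _ _ ≫ g = h ∧ act ≫ g = (g ▷ A.X) ≫ actP) := by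
  letI := coflatA
  have π_act := stmt6.π_act A coflatA X μ Y
  set act := stmt6.act A coflatA X μ Y with hact
  set q := coequalizer.π (μ ▷ Y.X) ((α_ X A.X Y.X).hom ≫ (X ◁ Y.actLeft)) with hq
  haveI e1 : Epi ((q ▷ A.X) ▷ A.X) :=
    show Epi ((tensorRight A.X ⋙ tensorRight A.X).map q) from inferInstance
  haveI e0 : Epi (q ▷ A.X) :=
    show Epi ((tensorRight A.X).map q) from inferInstance
  haveI e2 : Epi (q ▷ (A.X ⊗ A.X)) := by
    rw [show q ▷ (A.X ⊗ A.X) = (α_ _ _ _).inv ≫ ((q ▷ A.X) ▷ A.X) ≫ (α_ _ _ _).hom by simp]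
    infer_instance
  haveI e3 : Epi (q ▷ 𝟙_ C) := by
    rw [show q ▷ 𝟙_ C = (ρ_ _).hom ≫ q ≫ (ρ_ _).inv by simp]
    infer_instance
  refine ⟨act, ?_, ?_, π_act, ?_⟩
  · -- unit axiom
    refine (cancel_epi (q ▷ 𝟙_ C)).1 ?_
    slice_lhs 1 2 => rw [← whisker_exchange]
    slice_lhs 2 3 => rw [π_act]
    slice_lhs 1 2 => rw [associator_naturality_right]
    slice_lhs 2 3 => rw [← MonoidalCategory.whiskerLeft_comp, Y.actRight_one]
    simp
  · -- associativity axiom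
    refine (cancel_epi (q ▷ (A.X ⊗ A.X))).1 ?_
    symm
    slice_lhs 1 2 => rw [← whisker_exchange]
    slice_lhs 2 3 => rw [π_act]
    slice_lhs 1 2 => rw [associator_naturality_right]
    slice_lhs 2 3 => rw [← MonoidalCategory.whiskerLeft_comp, Y.right_assoc,
      MonoidalCategory.whiskerLeft_comp, MonoidalCategory.whiskerLeft_comp]
    slice_rhs 1 2 => rw [associator_inv_naturality_left]
    slice_rhs 2 3 => rw [← comp_whiskerRight, π_act, comp_whiskerRight, comp_whiskerRight]
    slice_rhs 4 5 => rw [π_act]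
    simp
  · -- universal property
    intro P actP _ _ h hcoeq hlin
    have π_actr := reassoc_of% π_act
    refine ⟨coequalizer.desc h hcoeq, ⟨coequalizer.π_desc _ _, ?_⟩, ?_⟩
    · refine (cancel_epi (q ▷ A.X)).1 ?_
      rw [π_actr, hq, coequalizer.π_desc, ← comp_whiskerRight_assoc, coequalizer.π_desc, hlin]
    · rintro g' ⟨hg1, _⟩
      apply coequalizer.hom_ext
      rw [← hq, hg1, hq, coequalizer.π_desc]
end

section
/- Let C be a monoidal category with coequalizers and A a left coflat algebra in C. If X and Y are A-bimodules that are left coflat as objects of C and robust as left A-modules, then X ⊗_A Y is left coflat as an object of C. -/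
open CategoryTheory MonoidalCategory Limits

/-- `(f, g, π)` is a coequalizer diagram. -/
def IsCoeq {C : Type*} [Category C] {M N P : C} (f g : M ⟶ N) (π : N ⟶ P) : Prop :=
  ∃ w : f ≫ π = g ≫ π, Nonempty (IsColimit (Cofork.ofπ π w))

/-- A left `A`-module `(Y, ν)` is robust: for every right `A`-module `(W, actW)` and any
coequalizer `(W ⊗_A Y, π)` of the canonical pair, tensoring on the left with any `M` again
gives a coequalizer. -/
def Robust {C : Type*} [Category C] [MonoidalCategory C] (A : Mon C)
    (Y : C) (ν : A.X ⊗ Y ⟶ Y) : Prop :=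
  ∀ (M W : C) (actW : W ⊗ A.X ⟶ W),
    ((W ◁ (MonObj.one (X := A.X))) ≫ actW = (ρ_ W).hom) →
    ((α_ W A.X A.X).inv ≫ (actW ▷ A.X) ≫ actW = (W ◁ (MonObj.mul (X := A.X))) ≫ actW) →
    ∀ (Q : C) (π : W ⊗ Y ⟶ Q),
      IsCoeq (actW ▷ Y) ((α_ W A.X Y).hom ≫ (W ◁ ν)) π →
      IsCoeq (M ◁ (actW ▷ Y)) (M ◁ ((α_ W A.X Y).hom ≫ (W ◁ ν))) (M ◁ π)

section Aux

variable {C : Type*} [Category C]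

lemma IsCoeq.epi {M N P : C} {f g : M ⟶ N} {π : N ⟶ P} (h : IsCoeq f g π) : Epi π := by
  obtain ⟨w, ⟨hc⟩⟩ := h
  exact ⟨fun a b hab => Cofork.IsColimit.hom_ext hc (by simpa using hab)⟩

variable [MonoidalCategory C]

lemma IsCoeq.whiskerRightObj {M N P : C} {f g : M ⟶ N} {π : N ⟶ P}
    (h : IsCoeq f g π) (Z : C)
    (hZ : PreservesColimitsOfShape WalkingParallelPair (tensorRight Z)) :
    IsCoeq (f ▷ Z) (g ▷ Z) (π ▷ Z) := by
  obtain ⟨w, ⟨hc⟩⟩ := h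
  haveI := hZ
  refine ⟨by rw [← comp_whiskerRight, w, comp_whiskerRight], ⟨?_⟩⟩
  exact isColimitCoforkMapOfIsColimit (tensorRight Z) w hc

lemma coflat_tensorObj {Z W : C}
    (hZ : PreservesColimitsOfShape WalkingParallelPair (tensorRight Z))
    (hW : PreservesColimitsOfShape WalkingParallelPair (tensorRight W)) :
    PreservesColimitsOfShape WalkingParallelPair (tensorRight (Z ⊗ W)) := by
  haveI := hZ; haveI := hW
  haveI : PreservesColimitsOfShape WalkingParallelPair (tensorRight Z ⋙ tensorRight W) :=
    comp_preservesColimitsOfShape _ _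
  exact preservesColimitsOfShape_of_natIso (tensorRightTensor Z W).symm

end Aux

/-- over a left coflat algebra `A`, if `X` and `Y` are `A`-bimodules which are
left coflat in `C` and robust as left `A`-modules, then `X ⊗_A Y` is left coflat in `C`. -/
theorem stmt7 {C : Type*} [Category C] [MonoidalCategory C] [HasCoequalizers C]
    (A : Mon C)
    (coflatA : PreservesColimitsOfShape WalkingParallelPair
      (MonoidalCategory.tensorRight A.X))
    (X Y : Bimod A A)
    (coflatX : PreservesColimitsOfShape WalkingParallelPair
      (MonoidalCategory.tensorRight X.X))
    (coflatY : PreservesColimitsOfShape WalkingParallelPair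
      (MonoidalCategory.tensorRight Y.X))
    (robustX : Robust A X.X X.actLeft) (robustY : Robust A Y.X Y.actLeft) :
    Nonempty (PreservesColimitsOfShape WalkingParallelPair
      (MonoidalCategory.tensorRight
        (coequalizer (X.actRight ▷ Y.X) ((α_ X.X A.X Y.X).hom ≫ (X.X ◁ Y.actLeft))))) := by
  -- Notation.
  set s : (X.X ⊗ A.X) ⊗ Y.X ⟶ X.X ⊗ Y.X := X.actRight ▷ Y.X with hs
  set t : (X.X ⊗ A.X) ⊗ Y.X ⟶ X.X ⊗ Y.X := (α_ X.X A.X Y.X).hom ≫ (X.X ◁ Y.actLeft) with ht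
  set T : C := coequalizer s t with hT
  set k : X.X ⊗ Y.X ⟶ T := coequalizer.π s t with hk
  have hkcoeq : IsCoeq s t k :=
    ⟨coequalizer.condition s t, ⟨coequalizerIsCoequalizer s t⟩⟩
  -- robustness of `Y` applied to the right module `X`:
  have hrob : ∀ M : C, IsCoeq (M ◁ s) (M ◁ t) (M ◁ k) := fun M =>
    robustY M X.X X.actRight X.actRight_one X.right_assoc.symm T k hkcoeq
  -- coflatness of `X.X ⊗ Y.X` and of `(X.X ⊗ A.X) ⊗ Y.X`:
  have coflatXY : PreservesColimitsOfShape WalkingParallelPair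
      (tensorRight (X.X ⊗ Y.X)) := coflat_tensorObj coflatX coflatY
  have coflatXAY : PreservesColimitsOfShape WalkingParallelPair
      (tensorRight ((X.X ⊗ A.X) ⊗ Y.X)) :=
    coflat_tensorObj (coflat_tensorObj coflatX coflatA) coflatY
  -- The key step: whiskering a coequalizer with `T` yields a coequalizer.
  have key : ∀ {M N Q : C} (f g : M ⟶ N) (π : N ⟶ Q), IsCoeq f g π →
      IsCoeq (f ▷ T) (g ▷ T) (π ▷ T) := by
    intro M N Q f g π hπ
    have wT : f ▷ T ≫ π ▷ T = g ▷ T ≫ π ▷ T := by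
      rw [← comp_whiskerRight, ← comp_whiskerRight, hπ.choose]
    -- π ▷ (X⊗Y) is a coequalizer
    obtain ⟨wXY, ⟨hfXY⟩⟩ := hπ.whiskerRightObj (X.X ⊗ Y.X) coflatXY
    -- N ◁ k and Q ◁ k are coequalizers
    obtain ⟨wN, ⟨hNk⟩⟩ := hrob N
    obtain ⟨wQ, ⟨hQk⟩⟩ := hrob Q
    -- epis we shall need
    have epiNk : Epi (N ◁ k) := (hrob N).epi
    have epiQk : Epi (Q ◁ k) := (hrob Q).epi
    have epiπXY : Epi (π ▷ (X.X ⊗ Y.X)) := (hπ.whiskerRightObj _ coflatXY).epi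
    have epiπXAY : Epi (π ▷ ((X.X ⊗ A.X) ⊗ Y.X)) := (hπ.whiskerRightObj _ coflatXAY).epi
    have epiπT : Epi (π ▷ T) := by
      constructor
      intro Z a b hab
      have h1 : N ◁ k ≫ π ▷ T = π ▷ (X.X ⊗ Y.X) ≫ Q ◁ k := whisker_exchange π k
      have : π ▷ (X.X ⊗ Y.X) ≫ Q ◁ k ≫ a = π ▷ (X.X ⊗ Y.X) ≫ Q ◁ k ≫ b := by
        rw [← Category.assoc, ← Category.assoc, ← h1, Category.assoc, Category.assoc, hab]
      rw [cancel_epi] at this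
      rwa [cancel_epi] at this
    refine ⟨wT, ⟨Cofork.IsColimit.mk' _ (fun c => ?_)⟩⟩
    -- `c.π : N ⊗ T ⟶ c.pt` coequalizes `f ▷ T` and `g ▷ T`.
    have hcπ : f ▷ T ≫ c.π = g ▷ T ≫ c.π := c.condition
    -- Step 1: descend `N ◁ k ≫ c.π` along `π ▷ (X⊗Y)`.
    have hcomm : f ▷ (X.X ⊗ Y.X) ≫ N ◁ k ≫ c.π = g ▷ (X.X ⊗ Y.X) ≫ N ◁ k ≫ c.π := by
      rw [← Category.assoc, ← whisker_exchange f k, ← Category.assoc, ← whisker_exchange g k,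
        Category.assoc, Category.assoc, hcπ]
    obtain ⟨u, hu⟩ := Cofork.IsColimit.desc' hfXY (N ◁ k ≫ c.π) hcomm
    rw [Cofork.π_ofπ] at hu
    -- Step 2: `u` coequalizes `Q ◁ s` and `Q ◁ t`.
    have hus : Q ◁ s ≫ u = Q ◁ t ≫ u := by
      rw [← cancel_epi (π ▷ ((X.X ⊗ A.X) ⊗ Y.X))]
      conv_lhs => rw [← Category.assoc, ← whisker_exchange, Category.assoc, hu,
        ← Category.assoc, wN]
      conv_rhs => rw [← Category.assoc, ← whisker_exchange, Category.assoc, hu,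
        ← Category.assoc]
    -- Step 3: descend `u` along `Q ◁ k`.
    obtain ⟨v, hv⟩ := Cofork.IsColimit.desc' hQk u hus
    rw [Cofork.π_ofπ] at hv
    have hfac : π ▷ T ≫ v = c.π := by
      rw [← cancel_epi (N ◁ k), ← Category.assoc, whisker_exchange π k, Category.assoc, hv, hu]
    refine ⟨v, ?_, ?_⟩
    · simpa using hfac
    · -- uniqueness
      intro m hm
      rw [Cofork.π_ofπ] at hm
      rw [← cancel_epi (π ▷ T), hm, hfac]
  -- Now assemble the preservation statement.
  refine ⟨⟨fun {K} => ?_⟩⟩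
  have : PreservesColimit (parallelPair (K.map WalkingParallelPairHom.left)
      (K.map WalkingParallelPairHom.right)) (tensorRight T) := by
    set f := K.map WalkingParallelPairHom.left
    set g := K.map WalkingParallelPairHom.right
    obtain ⟨w, ⟨hc⟩⟩ := key f g (coequalizer.π f g)
      ⟨coequalizer.condition f g, ⟨coequalizerIsCoequalizer f g⟩⟩
    exact preservesColimit_of_preserves_colimit_cocone (coequalizerIsCoequalizer f g)
      ((isColimitMapCoconeCoforkEquiv (tensorRight T) (coequalizer.condition f g)).symm hc)
  exact preservesColimit_of_iso_diagram (tensorRight T) (diagramIsoParallelPair K).symm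
end

section
/- Let A be an algebra in a monoidal category C and (X, ψ) a right transfer morphism through A (ψ : X⊗A → A⊗X satisfying ψ ∘ (X⊗m) = (m⊗X) ∘ (A⊗ψ) ∘ (ψ⊗A) and ψ ∘ (X⊗η) = η⊗X). If X ⊣ Y in C with unit b and counit d, then φ = (Y⊗A⊗d) ∘ (Y⊗ψ⊗Y) ∘ (b⊗A⊗Y) : A⊗Y → Y⊗A is a left transfer morphism through A, i.e., φ ∘ (m⊗Y) = (Y⊗m) ∘ (φ⊗A) ∘ (A⊗φ) and φ ∘ (η⊗Y) = Y⊗η. -/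
open CategoryTheory MonoidalCategory

namespace Stmt9Aux

variable {C : Type*} [Category C] [MonoidalCategory C] {X Y : C}
  (b : 𝟙_ C ⟶ Y ⊗ X) (d : X ⊗ Y ⟶ 𝟙_ C)

private def mate {P Q : C} (f : X ⊗ P ⟶ Q ⊗ X) : P ⊗ Y ⟶ Y ⊗ Q :=
  (λ_ (P ⊗ Y)).inv ≫ (b ▷ (P ⊗ Y)) ≫ (α_ Y X (P ⊗ Y)).hom ≫
    Y ◁ ((α_ X P Y).inv ≫ (f ▷ Y) ≫ (α_ Q X Y).hom ≫ (Q ◁ d) ≫ (ρ_ Q).hom)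

private theorem mate_natL {P P' Q : C} (u : P' ⟶ P) (f : X ⊗ P ⟶ Q ⊗ X) :
    (u ▷ Y) ≫ mate b d f = mate b d ((X ◁ u) ≫ f) := by
  have inner : X ◁ u ▷ Y ≫ (α_ X P Y).inv ≫ (f ▷ Y) ≫ (α_ Q X Y).hom ≫ (Q ◁ d) ≫ (ρ_ Q).hom =
      (α_ X P' Y).inv ≫ (((X ◁ u) ≫ f) ▷ Y) ≫ (α_ Q X Y).hom ≫ (Q ◁ d) ≫ (ρ_ Q).hom := by
    rw [associator_inv_naturality_middle_assoc, ← comp_whiskerRight_assoc]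
  rw [mate, mate, leftUnitor_inv_naturality_assoc, whisker_exchange_assoc,
    associator_naturality_right_assoc]
  simp only [Category.assoc, ← MonoidalCategory.whiskerLeft_comp]
  rw [inner]

private theorem mate_natR {P Q Q' : C} (v : Q ⟶ Q') (f : X ⊗ P ⟶ Q ⊗ X) :
    mate b d (f ≫ (v ▷ X)) = mate b d f ≫ (Y ◁ v) := by
  have inner : (α_ X P Y).inv ≫ (f ▷ Y) ≫ v ▷ X ▷ Y ≫ (α_ Q' X Y).hom ≫ (Q' ◁ d) ≫ (ρ_ Q').hom =
      ((α_ X P Y).inv ≫ (f ▷ Y) ≫ (α_ Q X Y).hom ≫ (Q ◁ d) ≫ (ρ_ Q).hom) ≫ v := by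
    rw [associator_naturality_left_assoc, ← whisker_exchange_assoc, rightUnitor_naturality]
    simp only [Category.assoc]
  rw [mate, mate, comp_whiskerRight]
  simp only [Category.assoc, ← MonoidalCategory.whiskerLeft_comp]
  rw [inner]
  simp only [MonoidalCategory.whiskerLeft_comp, Category.assoc]

private theorem mate_id (tri1 : (λ_ Y).inv ≫ (b ▷ Y) ≫ (α_ Y X Y).hom ≫ (Y ◁ d) ≫ (ρ_ Y).hom = 𝟙 Y) :
    mate b d ((ρ_ X).hom ≫ (λ_ X).inv) = (λ_ Y).hom ≫ (ρ_ Y).inv := by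
  have : (λ_ Y).hom ≫ (ρ_ Y).inv =
      (λ_ Y).hom ≫ ((λ_ Y).inv ≫ (b ▷ Y) ≫ (α_ Y X Y).hom ≫ (Y ◁ d) ≫ (ρ_ Y).hom) ≫ (ρ_ Y).inv := by
    rw [tri1]; simp
  rw [this, mate]
  monoidal

set_option maxHeartbeats 10000000 in
private theorem mate_pair
    (tri2 : (ρ_ X).inv ≫ (X ◁ b) ≫ (α_ X Y X).inv ≫ (d ▷ X) ≫ (λ_ X).hom = 𝟙 X)
    {P P' Q Q' : C} (f : X ⊗ P ⟶ Q ⊗ X) (g : X ⊗ P' ⟶ Q' ⊗ X) :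
    mate b d ((α_ X P P').inv ≫ (f ▷ P') ≫ (α_ Q X P').hom ≫ (Q ◁ g) ≫ (α_ Q Q' X).inv)
      = (α_ P P' Y).hom ≫ (P ◁ mate b d g) ≫ (α_ P Y Q').inv ≫ ((mate b d f) ▷ Q') ≫
        (α_ Y Q Q').hom := by
  have snake : (X ◁ b) ≫ (α_ X Y X).inv ≫ (d ▷ X) = (ρ_ X).hom ≫ (λ_ X).inv := by
    rw [← cancel_epi (ρ_ X).inv, ← cancel_mono (λ_ X).hom]
    simpa [Category.assoc] using tri2
  symm
  calc (α_ P P' Y).hom ≫ (P ◁ mate b d g) ≫ (α_ P Y Q').inv ≫ ((mate b d f) ▷ Q') ≫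
        (α_ Y Q Q').hom
      = 𝟙 (((P : C) ⊗ P') ⊗ Y) ⊗≫ P ◁ (b ▷ (P' ⊗ Y)) ⊗≫ P ◁ (Y ◁ (g ▷ Y)) ⊗≫
          ((𝟙_ C ◁ (P ◁ (Y ◁ ((Q' ◁ d) ≫ (ρ_ Q').hom)))) ≫ (b ▷ ((P : C) ⊗ (Y ⊗ Q')))) ⊗≫
          Y ◁ (f ▷ (Y ⊗ Q')) ⊗≫ Y ◁ (Q ◁ (d ▷ Q')) ⊗≫
          𝟙 (MonoidalCategory.tensorObj Y (MonoidalCategory.tensorObj Q Q')) := by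
        rw [mate, mate]; monoidal
    _ = 𝟙 (((P : C) ⊗ P') ⊗ Y) ⊗≫ P ◁ (b ▷ (P' ⊗ Y)) ⊗≫ P ◁ (Y ◁ (g ▷ Y)) ⊗≫
          ((b ▷ ((P : C) ⊗ (Y ⊗ (Q' ⊗ (X ⊗ Y))))) ≫
            ((Y ⊗ X) ◁ (P ◁ (Y ◁ ((Q' ◁ d) ≫ (ρ_ Q').hom))))) ⊗≫
          Y ◁ (f ▷ (Y ⊗ Q')) ⊗≫ Y ◁ (Q ◁ (d ▷ Q')) ⊗≫
          𝟙 (MonoidalCategory.tensorObj Y (MonoidalCategory.tensorObj Q Q')) := by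
        rw [whisker_exchange]
    _ = 𝟙 (((P : C) ⊗ P') ⊗ Y) ⊗≫ P ◁ (b ▷ (P' ⊗ Y)) ⊗≫
          ((𝟙_ C ◁ (P ◁ (Y ◁ (g ▷ Y)))) ≫ (b ▷ ((P : C) ⊗ (Y ⊗ ((Q' ⊗ X) ⊗ Y))))) ⊗≫
          ((Y ⊗ X) ◁ (P ◁ (Y ◁ ((Q' ◁ d) ≫ (ρ_ Q').hom)))) ⊗≫
          Y ◁ (f ▷ (Y ⊗ Q')) ⊗≫ Y ◁ (Q ◁ (d ▷ Q')) ⊗≫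
          𝟙 (MonoidalCategory.tensorObj Y (MonoidalCategory.tensorObj Q Q')) := by
        monoidal
    _ = 𝟙 (((P : C) ⊗ P') ⊗ Y) ⊗≫ P ◁ (b ▷ (P' ⊗ Y)) ⊗≫
          ((b ▷ ((P : C) ⊗ (Y ⊗ ((X ⊗ P') ⊗ Y)))) ≫ ((Y ⊗ X) ◁ (P ◁ (Y ◁ (g ▷ Y))))) ⊗≫
          ((Y ⊗ X) ◁ (P ◁ (Y ◁ ((Q' ◁ d) ≫ (ρ_ Q').hom)))) ⊗≫
          Y ◁ (f ▷ (Y ⊗ Q')) ⊗≫ Y ◁ (Q ◁ (d ▷ Q')) ⊗≫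
          𝟙 (MonoidalCategory.tensorObj Y (MonoidalCategory.tensorObj Q Q')) := by
        rw [whisker_exchange]
    _ = 𝟙 (((P : C) ⊗ P') ⊗ Y) ⊗≫
          ((𝟙_ C ◁ (P ◁ ((λ_ ((P' : C) ⊗ Y)).inv ≫ (b ▷ (P' ⊗ Y))))) ≫
            (b ▷ ((P : C) ⊗ ((Y ⊗ X) ⊗ (P' ⊗ Y))))) ⊗≫
          ((Y ⊗ X) ◁ (P ◁ (Y ◁ (g ▷ Y)))) ⊗≫
          ((Y ⊗ X) ◁ (P ◁ (Y ◁ ((Q' ◁ d) ≫ (ρ_ Q').hom)))) ⊗≫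
          Y ◁ (f ▷ (Y ⊗ Q')) ⊗≫ Y ◁ (Q ◁ (d ▷ Q')) ⊗≫
          𝟙 (MonoidalCategory.tensorObj Y (MonoidalCategory.tensorObj Q Q')) := by
        monoidal
    _ = 𝟙 (((P : C) ⊗ P') ⊗ Y) ⊗≫
          ((b ▷ ((P : C) ⊗ (P' ⊗ Y))) ≫
            ((Y ⊗ X) ◁ (P ◁ ((λ_ ((P' : C) ⊗ Y)).inv ≫ (b ▷ (P' ⊗ Y)))))) ⊗≫
          ((Y ⊗ X) ◁ (P ◁ (Y ◁ (g ▷ Y)))) ⊗≫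
          ((Y ⊗ X) ◁ (P ◁ (Y ◁ ((Q' ◁ d) ≫ (ρ_ Q').hom)))) ⊗≫
          Y ◁ (f ▷ (Y ⊗ Q')) ⊗≫ Y ◁ (Q ◁ (d ▷ Q')) ⊗≫
          𝟙 (MonoidalCategory.tensorObj Y (MonoidalCategory.tensorObj Q Q')) := by
        rw [whisker_exchange]
    -- order now: b2 b1 g1 d1 f2 d2 ; move f2 left past d1, g1, b1
    _ = 𝟙 (((P : C) ⊗ P') ⊗ Y) ⊗≫ b ▷ ((P ⊗ P') ⊗ Y) ⊗≫
          ((Y ⊗ (X ⊗ P)) ◁ ((λ_ ((P' : C) ⊗ Y)).inv ≫ (b ▷ (P' ⊗ Y)))) ⊗≫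
          ((Y ⊗ (X ⊗ P)) ◁ (Y ◁ (g ▷ Y))) ⊗≫
          (((Y ⊗ (X ⊗ P)) ◁ (Y ◁ ((Q' ◁ d) ≫ (ρ_ Q').hom))) ≫ ((Y ◁ f) ▷ ((Y : C) ⊗ Q'))) ⊗≫
          Y ◁ (Q ◁ (d ▷ Q')) ⊗≫
          𝟙 (MonoidalCategory.tensorObj Y (MonoidalCategory.tensorObj Q Q')) := by
        monoidal
    _ = 𝟙 (((P : C) ⊗ P') ⊗ Y) ⊗≫ b ▷ ((P ⊗ P') ⊗ Y) ⊗≫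
          ((Y ⊗ (X ⊗ P)) ◁ ((λ_ ((P' : C) ⊗ Y)).inv ≫ (b ▷ (P' ⊗ Y)))) ⊗≫
          ((Y ⊗ (X ⊗ P)) ◁ (Y ◁ (g ▷ Y))) ⊗≫
          (((Y ◁ f) ▷ ((Y : C) ⊗ (Q' ⊗ (X ⊗ Y)))) ≫
            ((Y ⊗ (Q ⊗ X)) ◁ (Y ◁ ((Q' ◁ d) ≫ (ρ_ Q').hom)))) ⊗≫
          Y ◁ (Q ◁ (d ▷ Q')) ⊗≫
          𝟙 (MonoidalCategory.tensorObj Y (MonoidalCategory.tensorObj Q Q')) := by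
        rw [whisker_exchange]
    _ = 𝟙 (((P : C) ⊗ P') ⊗ Y) ⊗≫ b ▷ ((P ⊗ P') ⊗ Y) ⊗≫
          ((Y ⊗ (X ⊗ P)) ◁ ((λ_ ((P' : C) ⊗ Y)).inv ≫ (b ▷ (P' ⊗ Y)))) ⊗≫
          (((Y ⊗ (X ⊗ P)) ◁ (Y ◁ (g ▷ Y))) ≫ ((Y ◁ f) ▷ ((Y : C) ⊗ ((Q' ⊗ X) ⊗ Y)))) ⊗≫
          ((Y ⊗ (Q ⊗ X)) ◁ (Y ◁ ((Q' ◁ d) ≫ (ρ_ Q').hom))) ⊗≫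
          Y ◁ (Q ◁ (d ▷ Q')) ⊗≫
          𝟙 (MonoidalCategory.tensorObj Y (MonoidalCategory.tensorObj Q Q')) := by
        monoidal
    _ = 𝟙 (((P : C) ⊗ P') ⊗ Y) ⊗≫ b ▷ ((P ⊗ P') ⊗ Y) ⊗≫
          ((Y ⊗ (X ⊗ P)) ◁ ((λ_ ((P' : C) ⊗ Y)).inv ≫ (b ▷ (P' ⊗ Y)))) ⊗≫
          (((Y ◁ f) ▷ ((Y : C) ⊗ ((X ⊗ P') ⊗ Y))) ≫ ((Y ⊗ (Q ⊗ X)) ◁ (Y ◁ (g ▷ Y)))) ⊗≫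
          ((Y ⊗ (Q ⊗ X)) ◁ (Y ◁ ((Q' ◁ d) ≫ (ρ_ Q').hom))) ⊗≫
          Y ◁ (Q ◁ (d ▷ Q')) ⊗≫
          𝟙 (MonoidalCategory.tensorObj Y (MonoidalCategory.tensorObj Q Q')) := by
        rw [whisker_exchange]
    _ = 𝟙 (((P : C) ⊗ P') ⊗ Y) ⊗≫ b ▷ ((P ⊗ P') ⊗ Y) ⊗≫
          (((Y ⊗ (X ⊗ P)) ◁ ((λ_ ((P' : C) ⊗ Y)).inv ≫ (b ▷ (P' ⊗ Y)))) ≫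
            ((Y ◁ f) ▷ ((Y ⊗ X) ⊗ (P' ⊗ Y)))) ⊗≫
          ((Y ⊗ (Q ⊗ X)) ◁ (Y ◁ (g ▷ Y))) ⊗≫
          ((Y ⊗ (Q ⊗ X)) ◁ (Y ◁ ((Q' ◁ d) ≫ (ρ_ Q').hom))) ⊗≫
          Y ◁ (Q ◁ (d ▷ Q')) ⊗≫
          𝟙 (MonoidalCategory.tensorObj Y (MonoidalCategory.tensorObj Q Q')) := by
        monoidal
    _ = 𝟙 (((P : C) ⊗ P') ⊗ Y) ⊗≫ b ▷ ((P ⊗ P') ⊗ Y) ⊗≫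
          (((Y ◁ f) ▷ ((P' : C) ⊗ Y)) ≫
            ((Y ⊗ (Q ⊗ X)) ◁ ((λ_ ((P' : C) ⊗ Y)).inv ≫ (b ▷ (P' ⊗ Y))))) ⊗≫
          ((Y ⊗ (Q ⊗ X)) ◁ (Y ◁ (g ▷ Y))) ⊗≫
          ((Y ⊗ (Q ⊗ X)) ◁ (Y ◁ ((Q' ◁ d) ≫ (ρ_ Q').hom))) ⊗≫
          Y ◁ (Q ◁ (d ▷ Q')) ⊗≫
          𝟙 (MonoidalCategory.tensorObj Y (MonoidalCategory.tensorObj Q Q')) := by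
        rw [whisker_exchange]
    -- order now: b2 f2 b1 g1 d1 d2 ; move d2 left past d1, g1
    _ = 𝟙 (((P : C) ⊗ P') ⊗ Y) ⊗≫ b ▷ ((P ⊗ P') ⊗ Y) ⊗≫ Y ◁ (f ▷ (P' ⊗ Y)) ⊗≫
          ((Y ⊗ (Q ⊗ X)) ◁ (b ▷ (P' ⊗ Y))) ⊗≫
          ((Y ⊗ (Q ⊗ (X ⊗ Y))) ◁ (g ▷ Y)) ⊗≫
          (((Y ⊗ (Q ⊗ (X ⊗ Y))) ◁ ((Q' ◁ d) ≫ (ρ_ Q').hom)) ≫ ((Y ◁ (Q ◁ d)) ▷ Q')) ⊗≫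
          𝟙 (MonoidalCategory.tensorObj Y (MonoidalCategory.tensorObj Q Q')) := by
        monoidal
    _ = 𝟙 (((P : C) ⊗ P') ⊗ Y) ⊗≫ b ▷ ((P ⊗ P') ⊗ Y) ⊗≫ Y ◁ (f ▷ (P' ⊗ Y)) ⊗≫
          ((Y ⊗ (Q ⊗ X)) ◁ (b ▷ (P' ⊗ Y))) ⊗≫
          ((Y ⊗ (Q ⊗ (X ⊗ Y))) ◁ (g ▷ Y)) ⊗≫
          (((Y ◁ (Q ◁ d)) ▷ ((Q' : C) ⊗ (X ⊗ Y))) ≫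
            ((Y ⊗ (Q ⊗ 𝟙_ C)) ◁ ((Q' ◁ d) ≫ (ρ_ Q').hom))) ⊗≫
          𝟙 (MonoidalCategory.tensorObj Y (MonoidalCategory.tensorObj Q Q')) := by
        rw [whisker_exchange]
    _ = 𝟙 (((P : C) ⊗ P') ⊗ Y) ⊗≫ b ▷ ((P ⊗ P') ⊗ Y) ⊗≫ Y ◁ (f ▷ (P' ⊗ Y)) ⊗≫
          ((Y ⊗ (Q ⊗ X)) ◁ (b ▷ (P' ⊗ Y))) ⊗≫
          (((Y ⊗ (Q ⊗ (X ⊗ Y))) ◁ (g ▷ Y)) ≫ ((Y ◁ (Q ◁ d)) ▷ ((Q' ⊗ X) ⊗ Y))) ⊗≫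
          ((Y ⊗ (Q ⊗ 𝟙_ C)) ◁ ((Q' ◁ d) ≫ (ρ_ Q').hom)) ⊗≫
          𝟙 (MonoidalCategory.tensorObj Y (MonoidalCategory.tensorObj Q Q')) := by
        monoidal
    _ = 𝟙 (((P : C) ⊗ P') ⊗ Y) ⊗≫ b ▷ ((P ⊗ P') ⊗ Y) ⊗≫ Y ◁ (f ▷ (P' ⊗ Y)) ⊗≫
          ((Y ⊗ (Q ⊗ X)) ◁ (b ▷ (P' ⊗ Y))) ⊗≫
          (((Y ◁ (Q ◁ d)) ▷ ((X ⊗ P') ⊗ Y)) ≫ ((Y ⊗ (Q ⊗ 𝟙_ C)) ◁ (g ▷ Y))) ⊗≫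
          ((Y ⊗ (Q ⊗ 𝟙_ C)) ◁ ((Q' ◁ d) ≫ (ρ_ Q').hom)) ⊗≫
          𝟙 (MonoidalCategory.tensorObj Y (MonoidalCategory.tensorObj Q Q')) := by
        rw [whisker_exchange]
    -- order now: b2 f2 b1 d2 g1 d1 ; apply the snake (tri2)
    _ = 𝟙 (((P : C) ⊗ P') ⊗ Y) ⊗≫ b ▷ ((P ⊗ P') ⊗ Y) ⊗≫ Y ◁ (f ▷ (P' ⊗ Y)) ⊗≫
          ((Y ⊗ Q) ◁ ((((X ◁ b) ≫ (α_ X Y X).inv ≫ (d ▷ X))) ▷ ((P' : C) ⊗ Y))) ⊗≫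
          ((Y ⊗ Q) ◁ (g ▷ Y)) ⊗≫ ((Y ⊗ Q) ◁ (Q' ◁ d)) ⊗≫
          𝟙 (MonoidalCategory.tensorObj Y (MonoidalCategory.tensorObj Q Q')) := by
        monoidal
    _ = 𝟙 (((P : C) ⊗ P') ⊗ Y) ⊗≫ b ▷ ((P ⊗ P') ⊗ Y) ⊗≫ Y ◁ (f ▷ (P' ⊗ Y)) ⊗≫
          ((Y ⊗ Q) ◁ (((ρ_ X).hom ≫ (λ_ X).inv) ▷ ((P' : C) ⊗ Y))) ⊗≫
          ((Y ⊗ Q) ◁ (g ▷ Y)) ⊗≫ ((Y ⊗ Q) ◁ (Q' ◁ d)) ⊗≫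
          𝟙 (MonoidalCategory.tensorObj Y (MonoidalCategory.tensorObj Q Q')) := by
        rw [snake]
    _ = mate b d ((α_ X P P').inv ≫ (f ▷ P') ≫ (α_ Q X P').hom ≫ (Q ◁ g) ≫
          (α_ Q Q' X).inv) := by
        rw [mate]; monoidal

end Stmt9Aux

/-- if `(X, ψ)` is a right transfer morphism through `A` and `X ⊣ Y` in `C`
(unit `b`, counit `d`), then `φ = (Y⊗A⊗d) ∘ (Y⊗ψ⊗Y) ∘ (b⊗A⊗Y) : A⊗Y ⟶ Y⊗A` is a left
transfer morphism through `A`. -/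
theorem stmt9 {C : Type*} [Category C] [MonoidalCategory C]
    (A : Mon C) (X Y : C) (ψ : X ⊗ A.X ⟶ A.X ⊗ X)
    -- right transfer morphism axioms
    (hψm : (X ◁ A.mon.mul) ≫ ψ =
      (α_ X A.X A.X).inv ≫ (ψ ▷ A.X) ≫ (α_ A.X X A.X).hom ≫ (A.X ◁ ψ) ≫
        (α_ A.X A.X X).inv ≫ (A.mon.mul ▷ X))
    (hψu : (X ◁ A.mon.one) ≫ ψ = (ρ_ X).hom ≫ (λ_ X).inv ≫ (A.mon.one ▷ X))
    -- adjunction `X ⊣ Y`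
    (b : 𝟙_ C ⟶ Y ⊗ X) (d : X ⊗ Y ⟶ 𝟙_ C)
    (tri1 : (λ_ Y).inv ≫ (b ▷ Y) ≫ (α_ Y X Y).hom ≫ (Y ◁ d) ≫ (ρ_ Y).hom = 𝟙 Y)
    (tri2 : (ρ_ X).inv ≫ (X ◁ b) ≫ (α_ X Y X).inv ≫ (d ▷ X) ≫ (λ_ X).hom = 𝟙 X) :
    ∀ φ : A.X ⊗ Y ⟶ Y ⊗ A.X,
      φ = (λ_ (A.X ⊗ Y)).inv ≫ (b ▷ (A.X ⊗ Y)) ≫ (α_ Y X (A.X ⊗ Y)).hom ≫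
            (Y ◁ (α_ X A.X Y).inv) ≫ (Y ◁ (ψ ▷ Y)) ≫ (Y ◁ (α_ A.X X Y).hom) ≫
            (Y ◁ (A.X ◁ d)) ≫ (Y ◁ (ρ_ A.X).hom) →
      -- left transfer morphism axioms for `φ`
      ((α_ A.X A.X Y).inv ≫ (A.mon.mul ▷ Y) ≫ φ =
        (A.X ◁ φ) ≫ (α_ A.X Y A.X).inv ≫ (φ ▷ A.X) ≫ (α_ Y A.X A.X).hom ≫
          (Y ◁ A.mon.mul)) ∧
      ((A.mon.one ▷ Y) ≫ φ = (λ_ Y).hom ≫ (ρ_ Y).inv ≫ (Y ◁ A.mon.one)) := by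
  intro φ hφ
  have hφ' : φ = Stmt9Aux.mate b d ψ := by
    rw [hφ, Stmt9Aux.mate]
    simp only [MonoidalCategory.whiskerLeft_comp, Category.assoc]
  constructor
  · rw [hφ', Stmt9Aux.mate_natL b d A.mon.mul ψ, hψm,
      show (α_ X A.X A.X).inv ≫ (ψ ▷ A.X) ≫ (α_ A.X X A.X).hom ≫ (A.X ◁ ψ) ≫
          (α_ A.X A.X X).inv ≫ (A.mon.mul ▷ X) =
        ((α_ X A.X A.X).inv ≫ (ψ ▷ A.X) ≫ (α_ A.X X A.X).hom ≫ (A.X ◁ ψ) ≫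
          (α_ A.X A.X X).inv) ≫ (A.mon.mul ▷ X) by simp only [Category.assoc],
      Stmt9Aux.mate_natR, Stmt9Aux.mate_pair b d tri2 ψ ψ]
    simp
  · rw [hφ', Stmt9Aux.mate_natL b d A.mon.one ψ, hψu,
      show (ρ_ X).hom ≫ (λ_ X).inv ≫ (A.mon.one ▷ X) =
        ((ρ_ X).hom ≫ (λ_ X).inv) ≫ (A.mon.one ▷ X) by simp only [Category.assoc],
      Stmt9Aux.mate_natR, Stmt9Aux.mate_id b d tri1]
    simp
end

section
/- Let A be an algebra in a monoidal category C. If (X, ψ) and (X', ψ') are right transfer morphisms through A with X ⊣ Y and X' ⊣ Y' in C, and φ, φ' are the induced left transfer morphisms on Y, Y', then Y' ⊗ Y is a right adjoint of X ⊗ X' and the induced left transfer morphism on Y'⊗Y from ψ·ψ' = (ψ⊗X') ∘ (X⊗ψ') equals the composite φ'·φ = (Y'⊗φ) ∘ (φ'⊗Y) of the two left transfer morphisms. -/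
open CategoryTheory MonoidalCategory

set_option maxHeartbeats 4000000 in
/-- for right transfer morphisms `(X, ψ)`, `(X', ψ')` through `A` with `X ⊣ Y`,
`X' ⊣ Y'`, the object `Y' ⊗ Y` is a right adjoint of `X ⊗ X'` (via the composite adjunction),
and the left transfer morphism induced on `Y' ⊗ Y` by `ψ·ψ' = (ψ⊗X') ∘ (X⊗ψ')` coincides with
the composite `φ'·φ = (Y'⊗φ) ∘ (φ'⊗Y)` of the two induced left transfer morphisms. -/
theorem stmt10 {C : Type*} [Category C] [MonoidalCategory C]
    (A : Mon C) (X Y X' Y' : C)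
    (ψ : X ⊗ A.X ⟶ A.X ⊗ X) (ψ' : X' ⊗ A.X ⟶ A.X ⊗ X')
    (hψm : (X ◁ MonObj.mul (X := A.X)) ≫ ψ =
      (α_ X A.X A.X).inv ≫ (ψ ▷ A.X) ≫ (α_ A.X X A.X).hom ≫ (A.X ◁ ψ) ≫
        (α_ A.X A.X X).inv ≫ (MonObj.mul (X := A.X) ▷ X))
    (hψu : (X ◁ MonObj.one (X := A.X)) ≫ ψ = (ρ_ X).hom ≫ (λ_ X).inv ≫ (MonObj.one (X := A.X) ▷ X))
    (hψ'm : (X' ◁ MonObj.mul (X := A.X)) ≫ ψ' =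
      (α_ X' A.X A.X).inv ≫ (ψ' ▷ A.X) ≫ (α_ A.X X' A.X).hom ≫ (A.X ◁ ψ') ≫
        (α_ A.X A.X X').inv ≫ (MonObj.mul (X := A.X) ▷ X'))
    (hψ'u : (X' ◁ MonObj.one (X := A.X)) ≫ ψ' = (ρ_ X').hom ≫ (λ_ X').inv ≫ (MonObj.one (X := A.X) ▷ X'))
    (b : 𝟙_ C ⟶ Y ⊗ X) (d : X ⊗ Y ⟶ 𝟙_ C)
    (b' : 𝟙_ C ⟶ Y' ⊗ X') (d' : X' ⊗ Y' ⟶ 𝟙_ C)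
    (tri1 : (λ_ Y).inv ≫ (b ▷ Y) ≫ (α_ Y X Y).hom ≫ (Y ◁ d) ≫ (ρ_ Y).hom = 𝟙 Y)
    (tri2 : (ρ_ X).inv ≫ (X ◁ b) ≫ (α_ X Y X).inv ≫ (d ▷ X) ≫ (λ_ X).hom = 𝟙 X)
    (tri1' : (λ_ Y').inv ≫ (b' ▷ Y') ≫ (α_ Y' X' Y').hom ≫ (Y' ◁ d') ≫ (ρ_ Y').hom = 𝟙 Y')
    (tri2' : (ρ_ X').inv ≫ (X' ◁ b') ≫ (α_ X' Y' X').inv ≫ (d' ▷ X') ≫ (λ_ X').hom = 𝟙 X') :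
    ∀ (B : 𝟙_ C ⟶ (Y' ⊗ Y) ⊗ (X ⊗ X')) (D : (X ⊗ X') ⊗ (Y' ⊗ Y) ⟶ 𝟙_ C)
      (ψψ' : (X ⊗ X') ⊗ A.X ⟶ A.X ⊗ (X ⊗ X'))
      (φ : A.X ⊗ Y ⟶ Y ⊗ A.X) (φ' : A.X ⊗ Y' ⟶ Y' ⊗ A.X),
      -- unit and counit of the composite adjunction `X ⊗ X' ⊣ Y' ⊗ Y`
      B = b' ≫ (Y' ◁ (λ_ X').inv) ≫ (Y' ◁ (b ▷ X')) ≫ (Y' ◁ (α_ Y X X').hom) ≫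
            (α_ Y' Y (X ⊗ X')).inv →
      D = (α_ X X' (Y' ⊗ Y)).hom ≫ (X ◁ (α_ X' Y' Y).inv) ≫ (X ◁ (d' ▷ Y)) ≫
            (X ◁ (λ_ Y).hom) ≫ d →
      -- the tensor product transfer morphism `ψ·ψ'`
      ψψ' = (α_ X X' A.X).hom ≫ (X ◁ ψ') ≫ (α_ X A.X X').inv ≫ (ψ ▷ X') ≫
            (α_ A.X X X').hom →
      -- the induced left transfer morphisms on `Y` and `Y'`
      φ = (λ_ (A.X ⊗ Y)).inv ≫ (b ▷ (A.X ⊗ Y)) ≫ (α_ Y X (A.X ⊗ Y)).hom ≫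
            (Y ◁ (α_ X A.X Y).inv) ≫ (Y ◁ (ψ ▷ Y)) ≫ (Y ◁ (α_ A.X X Y).hom) ≫
            (Y ◁ (A.X ◁ d)) ≫ (Y ◁ (ρ_ A.X).hom) →
      φ' = (λ_ (A.X ⊗ Y')).inv ≫ (b' ▷ (A.X ⊗ Y')) ≫ (α_ Y' X' (A.X ⊗ Y')).hom ≫
            (Y' ◁ (α_ X' A.X Y').inv) ≫ (Y' ◁ (ψ' ▷ Y')) ≫ (Y' ◁ (α_ A.X X' Y').hom) ≫
            (Y' ◁ (A.X ◁ d')) ≫ (Y' ◁ (ρ_ A.X).hom) →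
      -- `Y' ⊗ Y` is a right adjoint of `X ⊗ X'`: triangle identities
      ((λ_ (Y' ⊗ Y)).inv ≫ (B ▷ (Y' ⊗ Y)) ≫ (α_ (Y' ⊗ Y) (X ⊗ X') (Y' ⊗ Y)).hom ≫
          ((Y' ⊗ Y) ◁ D) ≫ (ρ_ (Y' ⊗ Y)).hom = 𝟙 (Y' ⊗ Y)) ∧
      ((ρ_ (X ⊗ X')).inv ≫ ((X ⊗ X') ◁ B) ≫ (α_ (X ⊗ X') (Y' ⊗ Y) (X ⊗ X')).inv ≫
          (D ▷ (X ⊗ X')) ≫ (λ_ (X ⊗ X')).hom = 𝟙 (X ⊗ X')) ∧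
      -- the induced left transfer morphism on `Y' ⊗ Y` from `ψ·ψ'` equals `φ'·φ`
      ((λ_ (A.X ⊗ (Y' ⊗ Y))).inv ≫ (B ▷ (A.X ⊗ (Y' ⊗ Y))) ≫
          (α_ (Y' ⊗ Y) (X ⊗ X') (A.X ⊗ (Y' ⊗ Y))).hom ≫
          ((Y' ⊗ Y) ◁ (α_ (X ⊗ X') A.X (Y' ⊗ Y)).inv) ≫
          ((Y' ⊗ Y) ◁ (ψψ' ▷ (Y' ⊗ Y))) ≫
          ((Y' ⊗ Y) ◁ (α_ A.X (X ⊗ X') (Y' ⊗ Y)).hom) ≫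
          ((Y' ⊗ Y) ◁ (A.X ◁ D)) ≫ ((Y' ⊗ Y) ◁ (ρ_ A.X).hom) =
        (α_ A.X Y' Y).inv ≫ (φ' ▷ Y) ≫ (α_ Y' A.X Y).hom ≫ (Y' ◁ φ) ≫
          (α_ Y' Y A.X).inv) := by

  intro B D psps ph ph' hB hD hpsps hph hph'
  subst hB hD hpsps hph hph'
  have z1 : b ▷ Y ≫ (α_ Y X Y).hom ≫ (Y ◁ d) = (λ_ Y).hom ≫ (ρ_ Y).inv := by
    simpa using congrArg (fun t => (λ_ Y).hom ≫ t ≫ (ρ_ Y).inv) tri1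
  have z1' : b' ▷ Y' ≫ (α_ Y' X' Y').hom ≫ (Y' ◁ d') = (λ_ Y').hom ≫ (ρ_ Y').inv := by
    simpa using congrArg (fun t => (λ_ Y').hom ≫ t ≫ (ρ_ Y').inv) tri1'
  have z2 : X ◁ b ≫ (α_ X Y X).inv ≫ (d ▷ X) = (ρ_ X).hom ≫ (λ_ X).inv := by
    simpa using congrArg (fun t => (ρ_ X).hom ≫ t ≫ (λ_ X).inv) tri2
  have z2' : X' ◁ b' ≫ (α_ X' Y' X').inv ≫ (d' ▷ X') = (ρ_ X').hom ≫ (λ_ X').inv := by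
    simpa using congrArg (fun t => (ρ_ X').hom ≫ t ≫ (λ_ X').inv) tri2'
  refine ⟨?_, ?_, ?_⟩
  · -- triangle 1 for the composite adjunction
    trans (𝟙 (Y' ⊗ Y) ⊗≫ b' ▷ (Y' ⊗ Y) ⊗≫
      Y' ◁ (b ▷ ((X' ⊗ Y') ⊗ Y) ≫ (Y ⊗ X) ◁ (d' ▷ Y ≫ (λ_ Y).hom)) ⊗≫
      Y' ◁ (Y ◁ d) ⊗≫ 𝟙 (Y' ⊗ Y))
    · monoidal
    rw [← whisker_exchange b (d' ▷ Y ≫ (λ_ Y).hom)]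
    trans (𝟙 (Y' ⊗ Y) ⊗≫ (b' ▷ Y' ≫ (α_ Y' X' Y').hom ≫ (Y' ◁ d')) ▷ Y ⊗≫
      Y' ◁ (b ▷ Y ≫ (α_ Y X Y).hom ≫ (Y ◁ d)) ⊗≫ 𝟙 (Y' ⊗ Y))
    · monoidal
    rw [z1', z1]
    monoidal
  · -- triangle 2 for the composite adjunction
    trans (𝟙 (X ⊗ X') ⊗≫ X ◁ (X' ◁ b') ⊗≫
      X ◁ ((X' ⊗ Y') ◁ ((λ_ X').inv ≫ b ▷ X') ≫ d' ▷ ((Y ⊗ X) ⊗ X')) ⊗≫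
      d ▷ (X ⊗ X') ⊗≫ 𝟙 (X ⊗ X'))
    · monoidal
    rw [whisker_exchange d' ((λ_ X').inv ≫ b ▷ X')]
    trans (𝟙 (X ⊗ X') ⊗≫ X ◁ (X' ◁ b' ≫ (α_ X' Y' X').inv ≫ (d' ▷ X')) ⊗≫
      (X ◁ b ≫ (α_ X Y X).inv ≫ (d ▷ X)) ▷ X' ⊗≫ 𝟙 (X ⊗ X'))
    · monoidal
    rw [z2', z2]
    monoidal
  · -- the transfer morphisms agree
    trans (𝟙 (A.X ⊗ (Y' ⊗ Y)) ⊗≫ b' ▷ (A.X ⊗ (Y' ⊗ Y)) ⊗≫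
      Y' ◁ (b ▷ ((X' ⊗ A.X) ⊗ (Y' ⊗ Y)) ≫ (Y ⊗ X) ◁ (ψ' ▷ (Y' ⊗ Y))) ⊗≫
      (Y' ⊗ Y) ◁ (ψ ▷ (X' ⊗ (Y' ⊗ Y)) ≫
        (A.X ⊗ X) ◁ ((α_ X' Y' Y).inv ≫ d' ▷ Y ≫ (λ_ Y).hom)) ⊗≫
      ((Y' ⊗ Y) ⊗ A.X) ◁ d ⊗≫ 𝟙 ((Y' ⊗ Y) ⊗ A.X))
    · monoidal
    rw [← whisker_exchange b (ψ' ▷ (Y' ⊗ Y))]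
    rw [← whisker_exchange ψ ((α_ X' Y' Y).inv ≫ d' ▷ Y ≫ (λ_ Y).hom)]
    trans (𝟙 (A.X ⊗ (Y' ⊗ Y)) ⊗≫ b' ▷ (A.X ⊗ (Y' ⊗ Y)) ⊗≫
      Y' ◁ (ψ' ▷ (Y' ⊗ Y)) ⊗≫
      Y' ◁ (b ▷ (A.X ⊗ (X' ⊗ (Y' ⊗ Y))) ≫
        (Y ⊗ X) ◁ (A.X ◁ ((α_ X' Y' Y).inv ≫ d' ▷ Y ≫ (λ_ Y).hom))) ⊗≫
      (Y' ⊗ Y) ◁ (ψ ▷ Y) ⊗≫ ((Y' ⊗ Y) ⊗ A.X) ◁ d ⊗≫ 𝟙 ((Y' ⊗ Y) ⊗ A.X))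
    · monoidal
    rw [← whisker_exchange b (A.X ◁ ((α_ X' Y' Y).inv ≫ d' ▷ Y ≫ (λ_ Y).hom))]
    monoidal
end

section
/- Let C be a monoidal category. A coalgebra C (with comultiplication Δ and counit ε) is coseparable if and only if there exists a morphism B : C⊗C → 1 such that B∘Δ = ε and (C⊗B)∘(Δ⊗C) = (B⊗C)∘(C⊗Δ). Equivalently, this holds if and only if Δ has a C-bicolinear left inverse γ : C⊗C → C (γ∘Δ = id, with (C⊗γ)∘(Δ⊗C) = Δ∘γ = (γ⊗C)∘(C⊗Δ)). -/
open CategoryTheory MonoidalCategory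

variable {C : Type*} [CategoryTheory.Category C] [CategoryTheory.MonoidalCategory C]

/-- `(M, l, r)` is a `C₀`-bicomodule over the coalgebra `(C₀, Δ, ε)`. -/
def IsBicomod (C₀ : C) (Δ : C₀ ⟶ C₀ ⊗ C₀) (ε : C₀ ⟶ 𝟙_ C)
    (M : C) (l : M ⟶ C₀ ⊗ M) (r : M ⟶ M ⊗ C₀) : Prop :=
  (l ≫ (C₀ ◁ l) = l ≫ (Δ ▷ M) ≫ (α_ C₀ C₀ M).hom) ∧
  (l ≫ (ε ▷ M) ≫ (λ_ M).hom = 𝟙 M) ∧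
  (r ≫ (r ▷ C₀) = r ≫ (M ◁ Δ) ≫ (α_ M C₀ C₀).inv) ∧
  (r ≫ (M ◁ ε) ≫ (ρ_ M).hom = 𝟙 M) ∧
  (l ≫ (C₀ ◁ r) = r ≫ (l ▷ C₀) ≫ (α_ C₀ M C₀).hom)

/-- `f` is a bicolinear morphism of `C₀`-bicomodules. -/
def IsBicolinear (C₀ : C) {M N : C} (l : M ⟶ C₀ ⊗ M) (r : M ⟶ M ⊗ C₀)
    (l' : N ⟶ C₀ ⊗ N) (r' : N ⟶ N ⊗ C₀) (f : M ⟶ N) : Prop :=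
  (l ≫ (C₀ ◁ f) = f ≫ l') ∧ (r ≫ (f ▷ C₀) = f ≫ r')

/-- A coalgebra `(C₀, Δ, ε)` is coseparable: it is relative injective as a
`C₀`-bicomodule; every bicolinear `f : M ⟶ C₀` factors bicolinearly through any bicolinear
`i : M ⟶ N` admitting a left inverse in `C`. -/
def Coseparable (C₀ : C) (Δ : C₀ ⟶ C₀ ⊗ C₀) (ε : C₀ ⟶ 𝟙_ C) : Prop :=
  ∀ (M : C) (lM : M ⟶ C₀ ⊗ M) (rM : M ⟶ M ⊗ C₀),
    IsBicomod C₀ Δ ε M lM rM →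
  ∀ (N : C) (lN : N ⟶ C₀ ⊗ N) (rN : N ⟶ N ⊗ C₀),
    IsBicomod C₀ Δ ε N lN rN →
  ∀ i : M ⟶ N, IsBicolinear C₀ lM rM lN rN i →
  ∀ p : N ⟶ M, i ≫ p = 𝟙 M →
  ∀ f : M ⟶ C₀,
    IsBicolinear C₀ lM rM (Δ : C₀ ⟶ C₀ ⊗ C₀) (Δ : C₀ ⟶ C₀ ⊗ C₀) f →
    ∃ g : N ⟶ C₀,
      IsBicolinear C₀ lN rN (Δ : C₀ ⟶ C₀ ⊗ C₀) (Δ : C₀ ⟶ C₀ ⊗ C₀) g ∧ i ≫ g = f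

/-- A bicolinear left inverse of `Δ` makes the coalgebra coseparable. -/
lemma gamma_to_cosep (C₀ : C) (Δ : C₀ ⟶ C₀ ⊗ C₀) (ε : C₀ ⟶ 𝟙_ C)
    (γ : C₀ ⊗ C₀ ⟶ C₀) (hγ1 : Δ ≫ γ = 𝟙 C₀)
    (hγ2 : (Δ ▷ C₀) ≫ (α_ C₀ C₀ C₀).hom ≫ (C₀ ◁ γ) = γ ≫ Δ)
    (hγ3 : (C₀ ◁ Δ) ≫ (α_ C₀ C₀ C₀).inv ≫ (γ ▷ C₀) = γ ≫ Δ) :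
    Coseparable C₀ Δ ε := by
  intro M lM rM hM N lN rN hN i hi p hp f hf
  obtain ⟨hM1, hM2, hM3, hM4, hM5⟩ := hM
  obtain ⟨hN1, hN2, hN3, hN4, hN5⟩ := hN
  obtain ⟨hil, hir⟩ := hi
  obtain ⟨hfl, hfr⟩ := hf
  obtain ⟨q, hq⟩ : ∃ q : N ⟶ C₀, q = p ≫ f := ⟨_, rfl⟩
  obtain ⟨h₁, hh₁⟩ : ∃ h : N ⟶ C₀, h = rN ≫ (q ▷ C₀) ≫ γ := ⟨_, rfl⟩
  have hih₁ : i ≫ h₁ = f := by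
    rw [hh₁, hq]
    slice_lhs 1 2 => rw [← hir]
    slice_lhs 2 3 => rw [← comp_whiskerRight]
    rw [show i ≫ p ≫ f = f by rw [← Category.assoc, hp, Category.id_comp]]
    slice_lhs 1 2 => rw [hfr]
    slice_lhs 2 3 => rw [hγ1]
    simp
  have hr₁ : rN ≫ (h₁ ▷ C₀) = h₁ ≫ Δ := by
    rw [hh₁]
    simp only [comp_whiskerRight, Category.assoc]
    slice_lhs 1 2 => rw [hN3]
    slice_lhs 3 4 => rw [← associator_inv_naturality_left]
    slice_lhs 2 3 => rw [whisker_exchange]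
    slice_lhs 3 5 => rw [hγ3]
  refine ⟨lN ≫ (C₀ ◁ h₁) ≫ γ, ⟨?_, ?_⟩, ?_⟩
  · simp only [MonoidalCategory.whiskerLeft_comp, Category.assoc]
    slice_lhs 1 2 => rw [hN1]
    slice_lhs 3 4 => rw [← associator_naturality_right]
    slice_lhs 2 3 => rw [← whisker_exchange]
    slice_lhs 3 5 => rw [hγ2]
  · simp only [comp_whiskerRight, Category.assoc]
    have e5 : rN ≫ (lN ▷ C₀) = lN ≫ (C₀ ◁ rN) ≫ (α_ C₀ N C₀).inv := by
      simp only [← Category.assoc]; rw [hN5]; simp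
    slice_lhs 1 2 => rw [e5]
    slice_lhs 3 4 => rw [← associator_inv_naturality_middle]
    slice_lhs 2 3 => rw [← MonoidalCategory.whiskerLeft_comp, hr₁,
      MonoidalCategory.whiskerLeft_comp]
    slice_lhs 3 5 => rw [hγ3]
  · slice_lhs 1 2 => rw [← hil]
    slice_lhs 2 3 => rw [← MonoidalCategory.whiskerLeft_comp, hih₁]
    slice_lhs 1 2 => rw [hfl]
    slice_lhs 2 3 => rw [hγ1]
    simp

/-- `C₀ ⊗ C₀` is a `C₀`-bicomodule via `Δ` on the outer factors. -/
lemma bicomod_tensor (C₀ : C) (Δ : C₀ ⟶ C₀ ⊗ C₀) (ε : C₀ ⟶ 𝟙_ C)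
    (coassoc : Δ ≫ (Δ ▷ C₀) ≫ (α_ C₀ C₀ C₀).hom = Δ ≫ (C₀ ◁ Δ))
    (counit_left : Δ ≫ (ε ▷ C₀) ≫ (λ_ C₀).hom = 𝟙 C₀)
    (counit_right : Δ ≫ (C₀ ◁ ε) ≫ (ρ_ C₀).hom = 𝟙 C₀) :
    IsBicomod C₀ Δ ε (C₀ ⊗ C₀) ((Δ ▷ C₀) ≫ (α_ C₀ C₀ C₀).hom)
      ((C₀ ◁ Δ) ≫ (α_ C₀ C₀ C₀).inv) := by
  have coassoc2 : Δ ≫ (Δ ▷ C₀) = Δ ≫ (C₀ ◁ Δ) ≫ (α_ C₀ C₀ C₀).inv := by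
    simp only [← Category.assoc]; rw [← coassoc]; simp
  refine ⟨?_, ?_, ?_, ?_, ?_⟩
  · simp only [MonoidalCategory.whiskerLeft_comp, comp_whiskerRight, Category.assoc]
    slice_lhs 2 3 => rw [← associator_naturality_middle]
    slice_lhs 1 2 => rw [← comp_whiskerRight, ← coassoc]
    simp only [comp_whiskerRight, Category.assoc]
    slice_rhs 2 3 => rw [← associator_naturality_left]
    coherence
  · simp only [Category.assoc]
    slice_lhs 2 3 => rw [← associator_naturality_left]
    rw [leftUnitor_tensor_hom]
    simp only [Category.assoc, Iso.hom_inv_id_assoc]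
    simp only [← comp_whiskerRight, Category.assoc]
    rw [counit_left]
    simp
  · simp only [MonoidalCategory.whiskerLeft_comp, comp_whiskerRight, Category.assoc]
    slice_lhs 2 3 => rw [← associator_inv_naturality_middle]
    slice_lhs 1 2 => rw [← MonoidalCategory.whiskerLeft_comp, coassoc2]
    simp only [MonoidalCategory.whiskerLeft_comp, Category.assoc]
    slice_rhs 2 3 => rw [← associator_inv_naturality_right]
    coherence
  · simp only [Category.assoc]
    slice_lhs 2 3 => rw [← associator_inv_naturality_right]
    rw [rightUnitor_tensor_hom]
    simp only [Category.assoc, Iso.inv_hom_id_assoc]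
    simp only [← MonoidalCategory.whiskerLeft_comp, Category.assoc]
    rw [counit_right]
    simp
  · simp only [MonoidalCategory.whiskerLeft_comp, comp_whiskerRight, Category.assoc]
    slice_lhs 2 3 => rw [← associator_naturality_right]
    slice_lhs 1 2 => rw [← whisker_exchange]
    slice_rhs 2 3 => rw [← associator_inv_naturality_left]
    coherence

/-- A coseparable coalgebra admits a bicolinear left inverse of `Δ`. -/
lemma cosep_to_gamma (C₀ : C) (Δ : C₀ ⟶ C₀ ⊗ C₀) (ε : C₀ ⟶ 𝟙_ C)
    (coassoc : Δ ≫ (Δ ▷ C₀) ≫ (α_ C₀ C₀ C₀).hom = Δ ≫ (C₀ ◁ Δ))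
    (counit_left : Δ ≫ (ε ▷ C₀) ≫ (λ_ C₀).hom = 𝟙 C₀)
    (counit_right : Δ ≫ (C₀ ◁ ε) ≫ (ρ_ C₀).hom = 𝟙 C₀)
    (hc : Coseparable C₀ Δ ε) :
    ∃ γ : C₀ ⊗ C₀ ⟶ C₀,
      (Δ ≫ γ = 𝟙 C₀) ∧
      ((Δ ▷ C₀) ≫ (α_ C₀ C₀ C₀).hom ≫ (C₀ ◁ γ) = γ ≫ Δ) ∧
      ((C₀ ◁ Δ) ≫ (α_ C₀ C₀ C₀).inv ≫ (γ ▷ C₀) = γ ≫ Δ) := by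
  have coassoc2 : Δ ≫ (Δ ▷ C₀) = Δ ≫ (C₀ ◁ Δ) ≫ (α_ C₀ C₀ C₀).inv := by
    simp only [← Category.assoc]; rw [← coassoc]; simp
  have hM : IsBicomod C₀ Δ ε C₀ Δ Δ :=
    ⟨coassoc.symm, counit_left, coassoc2, counit_right, coassoc.symm⟩
  have hN := bicomod_tensor C₀ Δ ε coassoc counit_left counit_right
  have hi : IsBicolinear C₀ Δ Δ ((Δ ▷ C₀) ≫ (α_ C₀ C₀ C₀).hom)
      ((C₀ ◁ Δ) ≫ (α_ C₀ C₀ C₀).inv) Δ := ⟨coassoc.symm, coassoc2⟩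
  obtain ⟨g, ⟨hgl, hgr⟩, hig⟩ :=
    hc C₀ Δ Δ hM (C₀ ⊗ C₀) _ _ hN Δ hi ((C₀ ◁ ε) ≫ (ρ_ C₀).hom) counit_right
      (𝟙 C₀) ⟨by simp, by simp⟩
  exact ⟨g, hig, by simpa using hgl, by simpa using hgr⟩

/-- From a bicolinear left inverse `γ` of `Δ`, the morphism `γ ≫ ε` is a Casimir form. -/
lemma gamma_to_B (C₀ : C) (Δ : C₀ ⟶ C₀ ⊗ C₀) (ε : C₀ ⟶ 𝟙_ C)
    (counit_left : Δ ≫ (ε ▷ C₀) ≫ (λ_ C₀).hom = 𝟙 C₀)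
    (counit_right : Δ ≫ (C₀ ◁ ε) ≫ (ρ_ C₀).hom = 𝟙 C₀)
    (γ : C₀ ⊗ C₀ ⟶ C₀) (hγ1 : Δ ≫ γ = 𝟙 C₀)
    (hγ2 : (Δ ▷ C₀) ≫ (α_ C₀ C₀ C₀).hom ≫ (C₀ ◁ γ) = γ ≫ Δ)
    (hγ3 : (C₀ ◁ Δ) ≫ (α_ C₀ C₀ C₀).inv ≫ (γ ▷ C₀) = γ ≫ Δ) :
    ∃ B : C₀ ⊗ C₀ ⟶ 𝟙_ C,
      (Δ ≫ B = ε) ∧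
      ((Δ ▷ C₀) ≫ (α_ C₀ C₀ C₀).hom ≫ (C₀ ◁ B) ≫ (ρ_ C₀).hom =
        (C₀ ◁ Δ) ≫ (α_ C₀ C₀ C₀).inv ≫ (B ▷ C₀) ≫ (λ_ C₀).hom) := by
  refine ⟨γ ≫ ε, by rw [← Category.assoc, hγ1, Category.id_comp], ?_⟩
  simp only [MonoidalCategory.whiskerLeft_comp, comp_whiskerRight, Category.assoc]
  slice_lhs 1 3 => rw [hγ2]
  slice_lhs 2 4 => rw [counit_right]
  slice_rhs 1 3 => rw [hγ3]
  slice_rhs 2 4 => rw [counit_left]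

/-- From a Casimir form `B`, one builds a bicolinear left inverse of `Δ`. -/
lemma B_to_gamma (C₀ : C) (Δ : C₀ ⟶ C₀ ⊗ C₀) (ε : C₀ ⟶ 𝟙_ C)
    (coassoc : Δ ≫ (Δ ▷ C₀) ≫ (α_ C₀ C₀ C₀).hom = Δ ≫ (C₀ ◁ Δ))
    (counit_right : Δ ≫ (C₀ ◁ ε) ≫ (ρ_ C₀).hom = 𝟙 C₀)
    (B : C₀ ⊗ C₀ ⟶ 𝟙_ C) (hB1 : Δ ≫ B = ε)
    (hB2 : (Δ ▷ C₀) ≫ (α_ C₀ C₀ C₀).hom ≫ (C₀ ◁ B) ≫ (ρ_ C₀).hom =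
      (C₀ ◁ Δ) ≫ (α_ C₀ C₀ C₀).inv ≫ (B ▷ C₀) ≫ (λ_ C₀).hom) :
    ∃ γ : C₀ ⊗ C₀ ⟶ C₀,
      (Δ ≫ γ = 𝟙 C₀) ∧
      ((Δ ▷ C₀) ≫ (α_ C₀ C₀ C₀).hom ≫ (C₀ ◁ γ) = γ ≫ Δ) ∧
      ((C₀ ◁ Δ) ≫ (α_ C₀ C₀ C₀).inv ≫ (γ ▷ C₀) = γ ≫ Δ) := by
  have coassoc2 : Δ ≫ (Δ ▷ C₀) = Δ ≫ (C₀ ◁ Δ) ≫ (α_ C₀ C₀ C₀).inv := by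
    simp only [← Category.assoc]; rw [← coassoc]; simp
  refine ⟨(Δ ▷ C₀) ≫ (α_ C₀ C₀ C₀).hom ≫ (C₀ ◁ B) ≫ (ρ_ C₀).hom, ?_, ?_, ?_⟩
  · slice_lhs 1 3 => rw [coassoc]
    slice_lhs 2 3 => rw [← MonoidalCategory.whiskerLeft_comp, hB1]
    exact counit_right
  · simp only [MonoidalCategory.whiskerLeft_comp, comp_whiskerRight, Category.assoc]
    slice_lhs 2 3 => rw [← associator_naturality_middle]
    slice_lhs 1 2 => rw [← comp_whiskerRight, ← coassoc]
    simp only [comp_whiskerRight, Category.assoc]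
    slice_lhs 3 5 => rw [pentagon]
    slice_lhs 4 5 => rw [← associator_naturality_right]
    slice_lhs 5 6 => rw [← rightUnitor_tensor_hom]
    slice_lhs 2 3 => rw [associator_naturality_left]
    slice_rhs 4 5 => rw [← rightUnitor_naturality]
    slice_rhs 3 4 => rw [whisker_exchange]
    simp only [Category.assoc]
  · rw [hB2]
    simp only [MonoidalCategory.whiskerLeft_comp, comp_whiskerRight, Category.assoc]
    slice_lhs 2 3 => rw [← associator_inv_naturality_middle]
    slice_lhs 1 2 => rw [← MonoidalCategory.whiskerLeft_comp, coassoc2]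
    simp only [MonoidalCategory.whiskerLeft_comp, Category.assoc]
    slice_lhs 3 5 => rw [pentagon_inv]
    slice_lhs 4 5 => rw [← associator_inv_naturality_left]
    slice_lhs 5 6 => rw [← leftUnitor_tensor_hom]
    slice_lhs 2 3 => rw [associator_inv_naturality_right]
    slice_rhs 4 5 => rw [← leftUnitor_naturality]
    slice_rhs 3 4 => rw [← whisker_exchange]
    simp only [Category.assoc]

/-- a coalgebra `(C₀, Δ, ε)` in a monoidal category is coseparable iff there
is a morphism `B : C₀ ⊗ C₀ ⟶ 𝟙` with `B ∘ Δ = ε` and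
`(C₀ ⊗ B) ∘ (Δ ⊗ C₀) = (B ⊗ C₀) ∘ (C₀ ⊗ Δ)`, iff `Δ` has a `C₀`-bicolinear left inverse
`γ : C₀ ⊗ C₀ ⟶ C₀`. -/
theorem stmt17 (C₀ : C) (Δ : C₀ ⟶ C₀ ⊗ C₀) (ε : C₀ ⟶ 𝟙_ C)
    (coassoc : Δ ≫ (Δ ▷ C₀) ≫ (α_ C₀ C₀ C₀).hom = Δ ≫ (C₀ ◁ Δ))
    (counit_left : Δ ≫ (ε ▷ C₀) ≫ (λ_ C₀).hom = 𝟙 C₀)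
    (counit_right : Δ ≫ (C₀ ◁ ε) ≫ (ρ_ C₀).hom = 𝟙 C₀) :
    (Coseparable C₀ Δ ε ↔
      ∃ B : C₀ ⊗ C₀ ⟶ 𝟙_ C,
        (Δ ≫ B = ε) ∧
        ((Δ ▷ C₀) ≫ (α_ C₀ C₀ C₀).hom ≫ (C₀ ◁ B) ≫ (ρ_ C₀).hom =
          (C₀ ◁ Δ) ≫ (α_ C₀ C₀ C₀).inv ≫ (B ▷ C₀) ≫ (λ_ C₀).hom)) ∧
    (Coseparable C₀ Δ ε ↔
      ∃ γ : C₀ ⊗ C₀ ⟶ C₀,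
        (Δ ≫ γ = 𝟙 C₀) ∧
        ((Δ ▷ C₀) ≫ (α_ C₀ C₀ C₀).hom ≫ (C₀ ◁ γ) = γ ≫ Δ) ∧
        ((C₀ ◁ Δ) ≫ (α_ C₀ C₀ C₀).inv ≫ (γ ▷ C₀) = γ ≫ Δ)) := by
  constructor
  · constructor
    · intro hc
      obtain ⟨γ, hγ1, hγ2, hγ3⟩ :=
        cosep_to_gamma C₀ Δ ε coassoc counit_left counit_right hc
      exact gamma_to_B C₀ Δ ε counit_left counit_right γ hγ1 hγ2 hγ3
    · rintro ⟨B, hB1, hB2⟩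
      obtain ⟨γ, hγ1, hγ2, hγ3⟩ := B_to_gamma C₀ Δ ε coassoc counit_right B hB1 hB2
      exact gamma_to_cosep C₀ Δ ε γ hγ1 hγ2 hγ3
  · constructor
    · exact cosep_to_gamma C₀ Δ ε coassoc counit_left counit_right
    · rintro ⟨γ, hγ1, hγ2, hγ3⟩
      exact gamma_to_cosep C₀ Δ ε γ hγ1 hγ2 hγ3
end

section
/- Let (A, X, ψ) be a cowreath in a monoidal category C whose unit object 1 is a left ⊗-generator. Then the forgetful functor F : C(ψ)_A^X → C_A is separable if and only if there exists a Casimir morphism B : X⊗X → A for the coalgebra (X, ψ) in T_A^# (i.e., B is a morphism X⊗X → 1 in T_A^# satisfying the Casimir condition (c) of Lemma 4.3) such that m ∘ (A⊗B) ∘ δ = ε. -/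
open CategoryTheory MonoidalCategory

/-- A monoid object in a monoidal category (Mathlib's former `Mon_`, removed upstream). -/
structure Mon_ (C : Type*) [CategoryTheory.Category C] [CategoryTheory.MonoidalCategory C] where
  X : C
  one : 𝟙_ C ⟶ X
  mul : X ⊗ X ⟶ X
  one_mul : (one ▷ X) ≫ mul = (λ_ X).hom
  mul_one : (X ◁ one) ≫ mul = (ρ_ X).hom
  mul_assoc : (mul ▷ X) ≫ mul = (α_ X X X).hom ≫ (X ◁ mul) ≫ mul

/-- A cowreath `(A, X, ψ)` in `C`: `(X, ψ)` is a coalgebra in the Eilenberg–Moore category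
`T_A^#`, with comultiplication `δ : X ⟶ A ⊗ X ⊗ X` and counit `ε : X ⟶ A` satisfying
the axioms (a)–(e) of Section 2.2 of the paper. -/
structure Cowreath {C : Type*} [CategoryTheory.Category C]
    [CategoryTheory.MonoidalCategory C] (A : Mon_ C) where
  X : C
  ψ : X ⊗ A.X ⟶ A.X ⊗ X
  ψ_mul : (X ◁ A.mul) ≫ ψ =
    (α_ X A.X A.X).inv ≫ (ψ ▷ A.X) ≫ (α_ A.X X A.X).hom ≫ (A.X ◁ ψ) ≫
      (α_ A.X A.X X).inv ≫ (A.mul ▷ X)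
  ψ_one : (X ◁ A.one) ≫ ψ = (ρ_ X).hom ≫ (λ_ X).inv ≫ (A.one ▷ X)
  δ : X ⟶ A.X ⊗ (X ⊗ X)
  ε : X ⟶ A.X
  /-- (a): `δ` is a morphism `X → X ⊗ X` in `T_A^#`. -/
  δ_compat : (δ ▷ A.X) ≫ (α_ A.X (X ⊗ X) A.X).hom ≫ (A.X ◁ (α_ X X A.X).hom) ≫
      (A.X ◁ (X ◁ ψ)) ≫ (A.X ◁ (α_ X A.X X).inv) ≫ (A.X ◁ (ψ ▷ X)) ≫
      (A.X ◁ (α_ A.X X X).hom) ≫ (α_ A.X A.X (X ⊗ X)).inv ≫ (A.mul ▷ (X ⊗ X)) =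
    ψ ≫ (A.X ◁ δ) ≫ (α_ A.X A.X (X ⊗ X)).inv ≫ (A.mul ▷ (X ⊗ X))
  /-- (b): coassociativity of `δ`. -/
  δ_coassoc : δ ≫ (A.X ◁ (δ ▷ X)) ≫ (A.X ◁ (α_ A.X (X ⊗ X) X).hom) ≫
      (α_ A.X A.X ((X ⊗ X) ⊗ X)).inv ≫ (A.mul ▷ ((X ⊗ X) ⊗ X)) ≫
      (A.X ◁ (α_ X X X).hom) =
    δ ≫ (A.X ◁ (X ◁ δ)) ≫ (A.X ◁ (α_ X A.X (X ⊗ X)).inv) ≫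
      (A.X ◁ (ψ ▷ (X ⊗ X))) ≫ (A.X ◁ (α_ A.X X (X ⊗ X)).hom) ≫
      (α_ A.X A.X (X ⊗ (X ⊗ X))).inv ≫ (A.mul ▷ (X ⊗ (X ⊗ X)))
  /-- (c): `ε` is a morphism `X → 𝟙` in `T_A^#`. -/
  ε_compat : ψ ≫ (A.X ◁ ε) ≫ A.mul = (ε ▷ A.X) ≫ A.mul
  /-- (d): left counit axiom. -/
  counit_left : δ ≫ (A.X ◁ (ε ▷ X)) ≫ (α_ A.X A.X X).inv ≫ (A.mul ▷ X) =
    (λ_ X).inv ≫ (A.one ▷ X)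
  /-- (e): right counit axiom. -/
  counit_right : δ ≫ (A.X ◁ (X ◁ ε)) ≫ (A.X ◁ ψ) ≫ (α_ A.X A.X X).inv ≫
      (A.mul ▷ X) = (λ_ X).inv ≫ (A.one ▷ X)
variable {C : Type*} [CategoryTheory.Category C] [CategoryTheory.MonoidalCategory C]

open CategoryTheory MonoidalCategory

/-- The category of right `A`-modules in `C`. -/
structure RMod (A : Mon_ C) where
  carrier : C
  act : carrier ⊗ A.X ⟶ carrier
  act_one : (carrier ◁ A.one) ≫ act = (ρ_ carrier).hom
  act_mul : (α_ carrier A.X A.X).inv ≫ (act ▷ A.X) ≫ act = (carrier ◁ A.mul) ≫ act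

@[ext]
structure RModHom {A : Mon_ C} (M N : RMod A) where
  hom : M.carrier ⟶ N.carrier
  linear : M.act ≫ hom = (hom ▷ A.X) ≫ N.act

instance {A : Mon_ C} : Category (RMod A) where
  Hom := RModHom
  id M := ⟨𝟙 M.carrier, by simp⟩
  comp f g := ⟨f.hom ≫ g.hom, by
    rw [← Category.assoc, f.linear, Category.assoc, g.linear, ← Category.assoc,
      ← MonoidalCategory.comp_whiskerRight]⟩
  id_comp f := by apply RModHom.ext; simp
  comp_id f := by apply RModHom.ext; simp
  assoc f g h := by apply RModHom.ext; simp

@[simp] lemma RMod_id_hom {A : Mon_ C} (M : RMod A) :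
    RModHom.hom (𝟙 M) = 𝟙 M.carrier := rfl

@[simp] lemma RMod_comp_hom {A : Mon_ C} {M N K : RMod A} (f : M ⟶ N) (g : N ⟶ K) :
    RModHom.hom (f ≫ g) = f.hom ≫ g.hom := rfl

/-- The regular right `A`-module. -/
def regMod (A : Mon_ C) : RMod A where
  carrier := A.X
  act := A.mul
  act_one := A.mul_one
  act_mul := by rw [A.mul_assoc]; simp

/-- The category of entwined modules in `C` over the cowreath `(A, X, ψ)`. -/
structure Ent (A : Mon_ C) (W : Cowreath A) where
  carrier : C
  act : carrier ⊗ A.X ⟶ carrier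
  act_one : (carrier ◁ A.one) ≫ act = (ρ_ carrier).hom
  act_mul : (α_ carrier A.X A.X).inv ≫ (act ▷ A.X) ≫ act = (carrier ◁ A.mul) ≫ act
  coact : carrier ⟶ carrier ⊗ W.X
  /-- the coaction is right `A`-linear -/
  coact_linear : act ≫ coact =
    (coact ▷ A.X) ≫ (α_ carrier W.X A.X).hom ≫ (carrier ◁ W.ψ) ≫
      (α_ carrier A.X W.X).inv ≫ (act ▷ W.X)
  /-- coassociativity of the coaction -/
  coact_coassoc : coact ≫ (coact ▷ W.X) ≫ (α_ carrier W.X W.X).hom =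
    coact ≫ (carrier ◁ W.δ) ≫ (α_ carrier A.X (W.X ⊗ W.X)).inv ≫
      (act ▷ (W.X ⊗ W.X))
  /-- counit property of the coaction -/
  coact_counit : coact ≫ (carrier ◁ W.ε) ≫ act = 𝟙 carrier

@[ext]
structure EntHom {A : Mon_ C} {W : Cowreath A} (M N : Ent A W) where
  hom : M.carrier ⟶ N.carrier
  linear : M.act ≫ hom = (hom ▷ A.X) ≫ N.act
  colinear : M.coact ≫ (hom ▷ W.X) = hom ≫ N.coact

instance {A : Mon_ C} {W : Cowreath A} : Category (Ent A W) where
  Hom := EntHom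
  id M := ⟨𝟙 M.carrier, by simp, by simp⟩
  comp f g := ⟨f.hom ≫ g.hom, by
      rw [← Category.assoc, f.linear, Category.assoc, g.linear, ← Category.assoc,
        ← MonoidalCategory.comp_whiskerRight], by
      rw [MonoidalCategory.comp_whiskerRight, ← Category.assoc, f.colinear,
        Category.assoc, g.colinear, ← Category.assoc]⟩
  id_comp f := by apply EntHom.ext; simp
  comp_id f := by apply EntHom.ext; simp
  assoc f g h := by apply EntHom.ext; simp

@[simp] lemma Ent_id_hom {A : Mon_ C} {W : Cowreath A} (M : Ent A W) :
    EntHom.hom (𝟙 M) = 𝟙 M.carrier := rfl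

@[simp] lemma Ent_comp_hom {A : Mon_ C} {W : Cowreath A} {M N K : Ent A W}
    (f : M ⟶ N) (g : N ⟶ K) : EntHom.hom (f ≫ g) = f.hom ≫ g.hom := rfl

/-- The forgetful functor from entwined modules to right `A`-modules. -/
def forgetF (A : Mon_ C) (W : Cowreath A) : Ent A W ⥤ RMod A where
  obj M := ⟨M.carrier, M.act, M.act_one, M.act_mul⟩
  map f := ⟨f.hom, f.linear⟩
  map_id M := rfl
  map_comp f g := rfl

/-- A separable functor (Năstăsescu–Van den Bergh–Van Oystaeyen): the maps
`Hom(M, N) → Hom(FM, FN)` split naturally. -/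
def FunctorSeparable {A B : Type*} [Category A] [Category B] (F : A ⥤ B) : Prop :=
  ∃ P : ∀ (M N : A), (F.obj M ⟶ F.obj N) → (M ⟶ N),
    (∀ (M N : A) (f : M ⟶ N), P M N (F.map f) = f) ∧
    (∀ (M M' N N' : A) (a : M' ⟶ M) (b : N ⟶ N') (f : F.obj M ⟶ F.obj N),
      P M' N' (F.map a ≫ f ≫ F.map b) = a ≫ P M N f ≫ b)


/-! ### Auxiliary development for `stmt18` -/

section Stmt18Aux

set_option maxHeartbeats 4000000

variable {A : Mon_ C} (W : Cowreath A)

/-- pull a unit-inserted core past a whiskered morphism -/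
private lemma st18_unit_pull {Y Z V : C} (g : 𝟙_ C ⟶ V) (f : Y ⟶ Z) :
    (λ_ Y).inv ≫ (g ▷ Y) ≫ (V ◁ f) = f ≫ (λ_ Z).inv ≫ (g ▷ Z) := by
  rw [← whisker_exchange]; monoidal

/-- The induced entwined module on `R ⊗ X`. -/
def st18_mkG (R : RMod A) : Ent A W where
  carrier := R.carrier ⊗ W.X
  act := (α_ _ _ _).hom ≫ (R.carrier ◁ W.ψ) ≫ (α_ _ _ _).inv ≫ (R.act ▷ W.X)
  act_one := by
    calc ((R.carrier ⊗ W.X) ◁ A.one) ≫ (α_ _ _ _).hom ≫ (R.carrier ◁ W.ψ) ≫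
        (α_ _ _ _).inv ≫ (R.act ▷ W.X)
        = 𝟙 _ ⊗≫ (R.carrier ◁ ((W.X ◁ A.one) ≫ W.ψ)) ⊗≫ (R.act ▷ W.X) ⊗≫ 𝟙 _ := by
          monoidal
      _ = 𝟙 _ ⊗≫ (R.carrier ◁ ((ρ_ W.X).hom ≫ (λ_ W.X).inv ≫ (A.one ▷ W.X))) ⊗≫
            (R.act ▷ W.X) ⊗≫ 𝟙 _ := by rw [W.ψ_one]
      _ = 𝟙 _ ⊗≫ (((R.carrier ◁ A.one) ≫ R.act) ▷ W.X) ⊗≫ 𝟙 _ := by monoidal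
      _ = 𝟙 _ ⊗≫ ((ρ_ R.carrier).hom ▷ W.X) ⊗≫ 𝟙 _ := by rw [R.act_one]
      _ = (ρ_ (R.carrier ⊗ W.X)).hom := by monoidal
  act_mul := by
    calc (α_ _ _ _).inv ≫
        (((α_ _ _ _).hom ≫ (R.carrier ◁ W.ψ) ≫ (α_ _ _ _).inv ≫ (R.act ▷ W.X)) ▷ A.X) ≫
        ((α_ _ _ _).hom ≫ (R.carrier ◁ W.ψ) ≫ (α_ _ _ _).inv ≫ (R.act ▷ W.X))
        = 𝟙 _ ⊗≫ (R.carrier ◁ (W.ψ ▷ A.X)) ⊗≫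
            ((R.act ▷ (W.X ⊗ A.X)) ≫ (R.carrier ◁ W.ψ)) ⊗≫ (R.act ▷ W.X) ⊗≫ 𝟙 _ := by
          monoidal
      _ = 𝟙 _ ⊗≫ (R.carrier ◁ (W.ψ ▷ A.X)) ⊗≫
            (((R.carrier ⊗ A.X) ◁ W.ψ) ≫ (R.act ▷ (A.X ⊗ W.X))) ⊗≫
            (R.act ▷ W.X) ⊗≫ 𝟙 _ := by rw [← whisker_exchange]
      _ = 𝟙 _ ⊗≫ (R.carrier ◁ (W.ψ ▷ A.X)) ⊗≫ ((R.carrier ⊗ A.X) ◁ W.ψ) ⊗≫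
            (((α_ _ _ _).inv ≫ (R.act ▷ A.X) ≫ R.act) ▷ W.X) ⊗≫ 𝟙 _ := by monoidal
      _ = 𝟙 _ ⊗≫ (R.carrier ◁ (W.ψ ▷ A.X)) ⊗≫ ((R.carrier ⊗ A.X) ◁ W.ψ) ⊗≫
            (((R.carrier ◁ A.mul) ≫ R.act) ▷ W.X) ⊗≫ 𝟙 _ := by rw [R.act_mul]
      _ = 𝟙 _ ⊗≫ (R.carrier ◁ ((α_ _ _ _).inv ≫ (W.ψ ▷ A.X) ≫ (α_ _ _ _).hom ≫
            (A.X ◁ W.ψ) ≫ (α_ _ _ _).inv ≫ (A.mul ▷ W.X))) ⊗≫ (R.act ▷ W.X) ⊗≫ 𝟙 _ := by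
          monoidal
      _ = 𝟙 _ ⊗≫ (R.carrier ◁ ((W.X ◁ A.mul) ≫ W.ψ)) ⊗≫ (R.act ▷ W.X) ⊗≫ 𝟙 _ := by
          rw [← W.ψ_mul]
      _ = ((R.carrier ⊗ W.X) ◁ A.mul) ≫ (α_ _ _ _).hom ≫ (R.carrier ◁ W.ψ) ≫
            (α_ _ _ _).inv ≫ (R.act ▷ W.X) := by monoidal
  coact := (R.carrier ◁ W.δ) ≫ (α_ _ _ _).inv ≫ (R.act ▷ (W.X ⊗ W.X)) ≫ (α_ _ _ _).inv
  coact_linear := by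
    calc ((α_ _ _ _).hom ≫ (R.carrier ◁ W.ψ) ≫ (α_ _ _ _).inv ≫ (R.act ▷ W.X)) ≫
        ((R.carrier ◁ W.δ) ≫ (α_ _ _ _).inv ≫ (R.act ▷ (W.X ⊗ W.X)) ≫ (α_ _ _ _).inv)
        = 𝟙 _ ⊗≫ (R.carrier ◁ W.ψ) ⊗≫ ((R.act ▷ W.X) ≫ (R.carrier ◁ W.δ)) ⊗≫
            (R.act ▷ (W.X ⊗ W.X)) ⊗≫ 𝟙 _ := by monoidal
      _ = 𝟙 _ ⊗≫ (R.carrier ◁ W.ψ) ⊗≫ (((R.carrier ⊗ A.X) ◁ W.δ) ≫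
            (R.act ▷ (A.X ⊗ (W.X ⊗ W.X)))) ⊗≫ (R.act ▷ (W.X ⊗ W.X)) ⊗≫ 𝟙 _ := by
          rw [← whisker_exchange]
      _ = 𝟙 _ ⊗≫ (R.carrier ◁ W.ψ) ⊗≫ ((R.carrier ⊗ A.X) ◁ W.δ) ⊗≫
            (((α_ _ _ _).inv ≫ (R.act ▷ A.X) ≫ R.act) ▷ (W.X ⊗ W.X)) ⊗≫ 𝟙 _ := by
          monoidal
      _ = 𝟙 _ ⊗≫ (R.carrier ◁ W.ψ) ⊗≫ ((R.carrier ⊗ A.X) ◁ W.δ) ⊗≫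
            (((R.carrier ◁ A.mul) ≫ R.act) ▷ (W.X ⊗ W.X)) ⊗≫ 𝟙 _ := by rw [R.act_mul]
      _ = 𝟙 _ ⊗≫ (R.carrier ◁ (W.ψ ≫ (A.X ◁ W.δ) ≫ (α_ _ _ _).inv ≫
            (A.mul ▷ (W.X ⊗ W.X)))) ⊗≫ (R.act ▷ (W.X ⊗ W.X)) ⊗≫ 𝟙 _ := by monoidal
      _ = 𝟙 _ ⊗≫ (R.carrier ◁ ((W.δ ▷ A.X) ≫ (α_ A.X (W.X ⊗ W.X) A.X).hom ≫
            (A.X ◁ (α_ W.X W.X A.X).hom) ≫ (A.X ◁ (W.X ◁ W.ψ)) ≫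
            (A.X ◁ (α_ W.X A.X W.X).inv) ≫ (A.X ◁ (W.ψ ▷ W.X)) ≫
            (A.X ◁ (α_ A.X W.X W.X).hom) ≫ (α_ A.X A.X (W.X ⊗ W.X)).inv ≫
            (A.mul ▷ (W.X ⊗ W.X)))) ⊗≫ (R.act ▷ (W.X ⊗ W.X)) ⊗≫ 𝟙 _ := by
          rw [W.δ_compat]
      _ = 𝟙 _ ⊗≫ (R.carrier ◁ (W.δ ▷ A.X)) ⊗≫
            ((R.carrier ⊗ A.X) ◁ ((α_ W.X W.X A.X).hom ≫ (W.X ◁ W.ψ) ≫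
              (α_ W.X A.X W.X).inv ≫ (W.ψ ▷ W.X) ≫ (α_ A.X W.X W.X).hom)) ⊗≫
            (((R.carrier ◁ A.mul) ≫ R.act) ▷ (W.X ⊗ W.X)) ⊗≫ 𝟙 _ := by monoidal
      _ = 𝟙 _ ⊗≫ (R.carrier ◁ (W.δ ▷ A.X)) ⊗≫
            ((R.carrier ⊗ A.X) ◁ ((α_ W.X W.X A.X).hom ≫ (W.X ◁ W.ψ) ≫
              (α_ W.X A.X W.X).inv ≫ (W.ψ ▷ W.X) ≫ (α_ A.X W.X W.X).hom)) ⊗≫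
            (((α_ _ _ _).inv ≫ (R.act ▷ A.X) ≫ R.act) ▷ (W.X ⊗ W.X)) ⊗≫ 𝟙 _ := by
          rw [← R.act_mul]
      _ = 𝟙 _ ⊗≫ (R.carrier ◁ (W.δ ▷ A.X)) ⊗≫
            (((R.carrier ⊗ A.X) ◁ ((α_ W.X W.X A.X).hom ≫ (W.X ◁ W.ψ) ≫
              (α_ W.X A.X W.X).inv ≫ (W.ψ ▷ W.X) ≫ (α_ A.X W.X W.X).hom)) ≫
              (R.act ▷ (A.X ⊗ (W.X ⊗ W.X)))) ⊗≫ (R.act ▷ (W.X ⊗ W.X)) ⊗≫ 𝟙 _ := by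
          monoidal
      _ = 𝟙 _ ⊗≫ (R.carrier ◁ (W.δ ▷ A.X)) ⊗≫
            ((R.act ▷ ((W.X ⊗ W.X) ⊗ A.X)) ≫ (R.carrier ◁ ((α_ W.X W.X A.X).hom ≫
              (W.X ◁ W.ψ) ≫ (α_ W.X A.X W.X).inv ≫ (W.ψ ▷ W.X) ≫
              (α_ A.X W.X W.X).hom))) ⊗≫ (R.act ▷ (W.X ⊗ W.X)) ⊗≫ 𝟙 _ := by
          rw [whisker_exchange]
      _ = _ := by monoidal
  coact_coassoc := by
    calc ((R.carrier ◁ W.δ) ≫ (α_ _ _ _).inv ≫ (R.act ▷ (W.X ⊗ W.X)) ≫ (α_ _ _ _).inv) ≫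
        ((((R.carrier ◁ W.δ) ≫ (α_ _ _ _).inv ≫ (R.act ▷ (W.X ⊗ W.X)) ≫
          (α_ _ _ _).inv)) ▷ W.X) ≫ (α_ (R.carrier ⊗ W.X) W.X W.X).hom
        = 𝟙 _ ⊗≫ (R.carrier ◁ W.δ) ⊗≫ ((R.act ▷ (W.X ⊗ W.X)) ≫
            (R.carrier ◁ (W.δ ▷ W.X))) ⊗≫ (R.act ▷ ((W.X ⊗ W.X) ⊗ W.X)) ⊗≫
            (R.carrier ◁ (α_ W.X W.X W.X).hom) ⊗≫ 𝟙 _ := by monoidal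
      _ = 𝟙 _ ⊗≫ (R.carrier ◁ W.δ) ⊗≫ (((R.carrier ⊗ A.X) ◁ (W.δ ▷ W.X)) ≫
            (R.act ▷ ((A.X ⊗ (W.X ⊗ W.X)) ⊗ W.X))) ⊗≫
            (R.act ▷ ((W.X ⊗ W.X) ⊗ W.X)) ⊗≫ (R.carrier ◁ (α_ W.X W.X W.X).hom) ⊗≫
            𝟙 _ := by rw [← whisker_exchange]
      _ = 𝟙 _ ⊗≫ (R.carrier ◁ W.δ) ⊗≫ ((R.carrier ⊗ A.X) ◁ (W.δ ▷ W.X)) ⊗≫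
            (((α_ _ _ _).inv ≫ (R.act ▷ A.X) ≫ R.act) ▷ ((W.X ⊗ W.X) ⊗ W.X)) ⊗≫
            (R.carrier ◁ (α_ W.X W.X W.X).hom) ⊗≫ 𝟙 _ := by monoidal
      _ = 𝟙 _ ⊗≫ (R.carrier ◁ W.δ) ⊗≫ ((R.carrier ⊗ A.X) ◁ (W.δ ▷ W.X)) ⊗≫
            (((R.carrier ◁ A.mul) ≫ R.act) ▷ ((W.X ⊗ W.X) ⊗ W.X)) ⊗≫
            (R.carrier ◁ (α_ W.X W.X W.X).hom) ⊗≫ 𝟙 _ := by rw [R.act_mul]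
      _ = 𝟙 _ ⊗≫ (R.carrier ◁ (W.δ ≫ (A.X ◁ (W.δ ▷ W.X)) ≫
            (A.X ◁ (α_ A.X (W.X ⊗ W.X) W.X).hom) ≫
            (α_ A.X A.X ((W.X ⊗ W.X) ⊗ W.X)).inv ≫ (A.mul ▷ ((W.X ⊗ W.X) ⊗ W.X)) ≫
            (A.X ◁ (α_ W.X W.X W.X).hom))) ⊗≫ (R.act ▷ (W.X ⊗ (W.X ⊗ W.X))) ⊗≫ 𝟙 _ := by
          monoidal
      _ = 𝟙 _ ⊗≫ (R.carrier ◁ (W.δ ≫ (A.X ◁ (W.X ◁ W.δ)) ≫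
            (A.X ◁ (α_ W.X A.X (W.X ⊗ W.X)).inv) ≫ (A.X ◁ (W.ψ ▷ (W.X ⊗ W.X))) ≫
            (A.X ◁ (α_ A.X W.X (W.X ⊗ W.X)).hom) ≫
            (α_ A.X A.X (W.X ⊗ (W.X ⊗ W.X))).inv ≫
            (A.mul ▷ (W.X ⊗ (W.X ⊗ W.X))))) ⊗≫ (R.act ▷ (W.X ⊗ (W.X ⊗ W.X))) ⊗≫ 𝟙 _ := by
          rw [W.δ_coassoc]
      _ = 𝟙 _ ⊗≫ (R.carrier ◁ W.δ) ⊗≫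
            ((R.carrier ⊗ A.X) ◁ ((W.X ◁ W.δ) ≫ (α_ W.X A.X (W.X ⊗ W.X)).inv ≫
              (W.ψ ▷ (W.X ⊗ W.X)))) ⊗≫
            (((R.carrier ◁ A.mul) ≫ R.act) ▷ (W.X ⊗ (W.X ⊗ W.X))) ⊗≫ 𝟙 _ := by monoidal
      _ = 𝟙 _ ⊗≫ (R.carrier ◁ W.δ) ⊗≫
            ((R.carrier ⊗ A.X) ◁ ((W.X ◁ W.δ) ≫ (α_ W.X A.X (W.X ⊗ W.X)).inv ≫
              (W.ψ ▷ (W.X ⊗ W.X)))) ⊗≫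
            (((α_ _ _ _).inv ≫ (R.act ▷ A.X) ≫ R.act) ▷ (W.X ⊗ (W.X ⊗ W.X))) ⊗≫ 𝟙 _ := by
          rw [← R.act_mul]
      _ = 𝟙 _ ⊗≫ (R.carrier ◁ W.δ) ⊗≫
            (((R.carrier ⊗ A.X) ◁ ((W.X ◁ W.δ) ≫ (α_ W.X A.X (W.X ⊗ W.X)).inv ≫
              (W.ψ ▷ (W.X ⊗ W.X)))) ≫ (R.act ▷ ((A.X ⊗ W.X) ⊗ (W.X ⊗ W.X)))) ⊗≫
            (R.act ▷ (W.X ⊗ (W.X ⊗ W.X))) ⊗≫ 𝟙 _ := by monoidal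
      _ = 𝟙 _ ⊗≫ (R.carrier ◁ W.δ) ⊗≫
            ((R.act ▷ (W.X ⊗ W.X)) ≫ (R.carrier ◁ ((W.X ◁ W.δ) ≫
              (α_ W.X A.X (W.X ⊗ W.X)).inv ≫ (W.ψ ▷ (W.X ⊗ W.X))))) ⊗≫
            (R.act ▷ (W.X ⊗ (W.X ⊗ W.X))) ⊗≫ 𝟙 _ := by rw [whisker_exchange]
      _ = _ := by monoidal
  coact_counit := by
    calc ((R.carrier ◁ W.δ) ≫ (α_ _ _ _).inv ≫ (R.act ▷ (W.X ⊗ W.X)) ≫ (α_ _ _ _).inv) ≫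
        ((R.carrier ⊗ W.X) ◁ W.ε) ≫
        ((α_ _ _ _).hom ≫ (R.carrier ◁ W.ψ) ≫ (α_ _ _ _).inv ≫ (R.act ▷ W.X))
        = 𝟙 _ ⊗≫ (R.carrier ◁ W.δ) ⊗≫ ((R.act ▷ (W.X ⊗ W.X)) ≫
            (R.carrier ◁ ((W.X ◁ W.ε) ≫ W.ψ))) ⊗≫ (R.act ▷ W.X) ⊗≫ 𝟙 _ := by monoidal
      _ = 𝟙 _ ⊗≫ (R.carrier ◁ W.δ) ⊗≫ (((R.carrier ⊗ A.X) ◁ ((W.X ◁ W.ε) ≫ W.ψ)) ≫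
            (R.act ▷ (A.X ⊗ W.X))) ⊗≫ (R.act ▷ W.X) ⊗≫ 𝟙 _ := by
          rw [← whisker_exchange]
      _ = 𝟙 _ ⊗≫ (R.carrier ◁ W.δ) ⊗≫ ((R.carrier ⊗ A.X) ◁ ((W.X ◁ W.ε) ≫ W.ψ)) ⊗≫
            (((α_ _ _ _).inv ≫ (R.act ▷ A.X) ≫ R.act) ▷ W.X) ⊗≫ 𝟙 _ := by monoidal
      _ = 𝟙 _ ⊗≫ (R.carrier ◁ W.δ) ⊗≫ ((R.carrier ⊗ A.X) ◁ ((W.X ◁ W.ε) ≫ W.ψ)) ⊗≫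
            (((R.carrier ◁ A.mul) ≫ R.act) ▷ W.X) ⊗≫ 𝟙 _ := by rw [R.act_mul]
      _ = 𝟙 _ ⊗≫ (R.carrier ◁ (W.δ ≫ (A.X ◁ (W.X ◁ W.ε)) ≫ (A.X ◁ W.ψ) ≫
            (α_ A.X A.X W.X).inv ≫ (A.mul ▷ W.X))) ⊗≫ (R.act ▷ W.X) ⊗≫ 𝟙 _ := by
          monoidal
      _ = 𝟙 _ ⊗≫ (R.carrier ◁ ((λ_ W.X).inv ≫ (A.one ▷ W.X))) ⊗≫ (R.act ▷ W.X) ⊗≫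
            𝟙 _ := by rw [W.counit_right]
      _ = 𝟙 _ ⊗≫ (((R.carrier ◁ A.one) ≫ R.act) ▷ W.X) ⊗≫ 𝟙 _ := by monoidal
      _ = 𝟙 _ ⊗≫ ((ρ_ R.carrier).hom ▷ W.X) ⊗≫ 𝟙 _ := by rw [R.act_one]
      _ = 𝟙 (R.carrier ⊗ W.X) := by monoidal

/-- `mkG` on morphisms. -/
def st18_mkGmap {R S : RMod A} (φ : R ⟶ S) : st18_mkG W R ⟶ st18_mkG W S where
  hom := φ.hom ▷ W.X
  linear := by
    show ((α_ _ _ _).hom ≫ (R.carrier ◁ W.ψ) ≫ (α_ _ _ _).inv ≫ (R.act ▷ W.X)) ≫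
        (φ.hom ▷ W.X) = ((φ.hom ▷ W.X) ▷ A.X) ≫
        ((α_ _ _ _).hom ≫ (S.carrier ◁ W.ψ) ≫ (α_ _ _ _).inv ≫ (S.act ▷ W.X))
    calc ((α_ _ _ _).hom ≫ (R.carrier ◁ W.ψ) ≫ (α_ _ _ _).inv ≫ (R.act ▷ W.X)) ≫
        (φ.hom ▷ W.X)
        = 𝟙 _ ⊗≫ (R.carrier ◁ W.ψ) ⊗≫ ((R.act ≫ φ.hom) ▷ W.X) ⊗≫ 𝟙 _ := by monoidal
      _ = 𝟙 _ ⊗≫ (R.carrier ◁ W.ψ) ⊗≫ (((φ.hom ▷ A.X) ≫ S.act) ▷ W.X) ⊗≫ 𝟙 _ := by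
          rw [φ.linear]
      _ = 𝟙 _ ⊗≫ ((R.carrier ◁ W.ψ) ≫ (φ.hom ▷ (A.X ⊗ W.X))) ⊗≫ (S.act ▷ W.X) ⊗≫
            𝟙 _ := by monoidal
      _ = 𝟙 _ ⊗≫ ((φ.hom ▷ (W.X ⊗ A.X)) ≫ (S.carrier ◁ W.ψ)) ⊗≫ (S.act ▷ W.X) ⊗≫
            𝟙 _ := by rw [whisker_exchange]
      _ = _ := by monoidal
  colinear := by
    show ((R.carrier ◁ W.δ) ≫ (α_ _ _ _).inv ≫ (R.act ▷ (W.X ⊗ W.X)) ≫ (α_ _ _ _).inv) ≫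
        ((φ.hom ▷ W.X) ▷ W.X) = (φ.hom ▷ W.X) ≫
        ((S.carrier ◁ W.δ) ≫ (α_ _ _ _).inv ≫ (S.act ▷ (W.X ⊗ W.X)) ≫ (α_ _ _ _).inv)
    calc ((R.carrier ◁ W.δ) ≫ (α_ _ _ _).inv ≫ (R.act ▷ (W.X ⊗ W.X)) ≫ (α_ _ _ _).inv) ≫
        ((φ.hom ▷ W.X) ▷ W.X)
        = 𝟙 _ ⊗≫ (R.carrier ◁ W.δ) ⊗≫ ((R.act ≫ φ.hom) ▷ (W.X ⊗ W.X)) ⊗≫ 𝟙 _ := by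
          monoidal
      _ = 𝟙 _ ⊗≫ (R.carrier ◁ W.δ) ⊗≫ (((φ.hom ▷ A.X) ≫ S.act) ▷ (W.X ⊗ W.X)) ⊗≫
            𝟙 _ := by rw [φ.linear]
      _ = 𝟙 _ ⊗≫ ((R.carrier ◁ W.δ) ≫ (φ.hom ▷ (A.X ⊗ (W.X ⊗ W.X)))) ⊗≫
            (S.act ▷ (W.X ⊗ W.X)) ⊗≫ 𝟙 _ := by monoidal
      _ = 𝟙 _ ⊗≫ ((φ.hom ▷ W.X) ≫ (S.carrier ◁ W.δ)) ⊗≫ (S.act ▷ (W.X ⊗ W.X)) ⊗≫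
            𝟙 _ := by rw [whisker_exchange]
      _ = _ := by monoidal

/-- The counit of the adjunction. -/
def st18_sigma (R : RMod A) : (forgetF A W).obj (st18_mkG W R) ⟶ R where
  hom := (R.carrier ◁ W.ε) ≫ R.act
  linear := by
    show ((α_ _ _ _).hom ≫ (R.carrier ◁ W.ψ) ≫ (α_ _ _ _).inv ≫ (R.act ▷ W.X)) ≫
        ((R.carrier ◁ W.ε) ≫ R.act) =
        (((R.carrier ◁ W.ε) ≫ R.act) ▷ A.X) ≫ R.act
    calc ((α_ _ _ _).hom ≫ (R.carrier ◁ W.ψ) ≫ (α_ _ _ _).inv ≫ (R.act ▷ W.X)) ≫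
        ((R.carrier ◁ W.ε) ≫ R.act)
        = 𝟙 _ ⊗≫ (R.carrier ◁ W.ψ) ⊗≫ ((R.act ▷ W.X) ≫ (R.carrier ◁ W.ε)) ≫
            R.act := by monoidal
      _ = 𝟙 _ ⊗≫ (R.carrier ◁ W.ψ) ⊗≫ (((R.carrier ⊗ A.X) ◁ W.ε) ≫
            (R.act ▷ A.X)) ≫ R.act := by rw [← whisker_exchange]
      _ = 𝟙 _ ⊗≫ (R.carrier ◁ W.ψ) ⊗≫ ((R.carrier ⊗ A.X) ◁ W.ε) ⊗≫
            ((α_ _ _ _).inv ≫ (R.act ▷ A.X) ≫ R.act) := by monoidal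
      _ = 𝟙 _ ⊗≫ (R.carrier ◁ W.ψ) ⊗≫ ((R.carrier ⊗ A.X) ◁ W.ε) ⊗≫
            ((R.carrier ◁ A.mul) ≫ R.act) := by rw [R.act_mul]
      _ = 𝟙 _ ⊗≫ (R.carrier ◁ (W.ψ ≫ (A.X ◁ W.ε) ≫ A.mul)) ⊗≫ R.act := by monoidal
      _ = 𝟙 _ ⊗≫ (R.carrier ◁ ((W.ε ▷ A.X) ≫ A.mul)) ⊗≫ R.act := by rw [W.ε_compat]
      _ = 𝟙 _ ⊗≫ (R.carrier ◁ (W.ε ▷ A.X)) ⊗≫ ((R.carrier ◁ A.mul) ≫ R.act) := by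
          monoidal
      _ = 𝟙 _ ⊗≫ (R.carrier ◁ (W.ε ▷ A.X)) ⊗≫
            ((α_ _ _ _).inv ≫ (R.act ▷ A.X) ≫ R.act) := by rw [← R.act_mul]
      _ = _ := by monoidal

lemma st18_sigma_natural {R S : RMod A} (φ : R ⟶ S) :
    (forgetF A W).map (st18_mkGmap W φ) ≫ st18_sigma W S = st18_sigma W R ≫ φ := by
  apply RModHom.ext
  show (φ.hom ▷ W.X) ≫ ((S.carrier ◁ W.ε) ≫ S.act) =
    ((R.carrier ◁ W.ε) ≫ R.act) ≫ φ.hom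
  rw [← whisker_exchange_assoc, ← φ.linear, Category.assoc]

/-- The unit of the adjunction. -/
def st18_eta (M : Ent A W) : M ⟶ st18_mkG W ((forgetF A W).obj M) where
  hom := M.coact
  linear := M.coact_linear
  colinear := by
    show M.coact ≫ (M.coact ▷ W.X) = M.coact ≫ ((M.carrier ◁ W.δ) ≫ (α_ _ _ _).inv ≫
      (M.act ▷ (W.X ⊗ W.X)) ≫ (α_ _ _ _).inv)
    rw [← cancel_mono (α_ M.carrier W.X W.X).hom]
    simpa using M.coact_coassoc

lemma st18_eta_sigma (M : Ent A W) :
    (forgetF A W).map (st18_eta W M) ≫ st18_sigma W ((forgetF A W).obj M) =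
      𝟙 ((forgetF A W).obj M) := by
  apply RModHom.ext
  show M.coact ≫ ((M.carrier ◁ W.ε) ≫ M.act) = 𝟙 M.carrier
  rw [← Category.assoc]; simpa using M.coact_counit

/-- The `A`-module map `A → R` determined by a global element of `R`. -/
def st18_phi (R : RMod A) (h : 𝟙_ C ⟶ R.carrier) : regMod A ⟶ R where
  hom := (λ_ A.X).inv ≫ (h ▷ A.X) ≫ R.act
  linear := by
    show A.mul ≫ (λ_ A.X).inv ≫ (h ▷ A.X) ≫ R.act =
      (((λ_ A.X).inv ≫ (h ▷ A.X) ≫ R.act) ▷ A.X) ≫ R.act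
    calc A.mul ≫ (λ_ A.X).inv ≫ (h ▷ A.X) ≫ R.act
        = (A.mul ≫ (λ_ A.X).inv ≫ (h ▷ A.X)) ≫ R.act := by monoidal
      _ = ((λ_ (A.X ⊗ A.X)).inv ≫ (h ▷ (A.X ⊗ A.X)) ≫ (R.carrier ◁ A.mul)) ≫ R.act := by
          rw [st18_unit_pull]
      _ = 𝟙 _ ⊗≫ (h ▷ (A.X ⊗ A.X)) ⊗≫ ((R.carrier ◁ A.mul) ≫ R.act) := by monoidal
      _ = 𝟙 _ ⊗≫ (h ▷ (A.X ⊗ A.X)) ⊗≫ ((α_ _ _ _).inv ≫ (R.act ▷ A.X) ≫ R.act) := by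
          rw [← R.act_mul]
      _ = _ := by monoidal

lemma st18_phi_one (R : RMod A) (h : 𝟙_ C ⟶ R.carrier) :
    A.one ≫ (st18_phi R h).hom = h := by
  show A.one ≫ (λ_ A.X).inv ≫ (h ▷ A.X) ≫ R.act = h
  calc A.one ≫ (λ_ A.X).inv ≫ (h ▷ A.X) ≫ R.act
      = (A.one ≫ (λ_ A.X).inv ≫ (h ▷ A.X)) ≫ R.act := by monoidal
    _ = ((λ_ (𝟙_ C)).inv ≫ (h ▷ (𝟙_ C)) ≫ (R.carrier ◁ A.one)) ≫ R.act := by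
        rw [st18_unit_pull]
    _ = 𝟙 _ ⊗≫ (h ▷ (𝟙_ C)) ⊗≫ ((R.carrier ◁ A.one) ≫ R.act) := by monoidal
    _ = 𝟙 _ ⊗≫ (h ▷ (𝟙_ C)) ⊗≫ (ρ_ R.carrier).hom := by rw [R.act_one]
    _ = h := by monoidal

/-! #### The backwards direction: a Casimir morphism gives a splitting -/

lemma st18_P_linear {X : C} {ψ : X ⊗ A.X ⟶ A.X ⊗ X} {B : X ⊗ X ⟶ A.X}
    (hB1 : (α_ X X A.X).inv ≫ (B ▷ A.X) ≫ A.mul =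
      (X ◁ ψ) ≫ (α_ X A.X X).inv ≫ (ψ ▷ X) ≫ (α_ A.X X X).hom ≫ (A.X ◁ B) ≫ A.mul)
    {M N : C} {aM : M ⊗ A.X ⟶ M} {aN : N ⊗ A.X ⟶ N}
    {dM : M ⟶ M ⊗ X} {dN : N ⟶ N ⊗ X} {f : M ⟶ N}
    (aN_mul : (α_ N A.X A.X).inv ≫ (aN ▷ A.X) ≫ aN = (N ◁ A.mul) ≫ aN)
    (dM_lin : aM ≫ dM = (dM ▷ A.X) ≫ (α_ M X A.X).hom ≫ (M ◁ ψ) ≫ (α_ M A.X X).inv ≫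
      (aM ▷ X))
    (dN_lin : aN ≫ dN = (dN ▷ A.X) ≫ (α_ N X A.X).hom ≫ (N ◁ ψ) ≫ (α_ N A.X X).inv ≫
      (aN ▷ X))
    (f_lin : aM ≫ f = (f ▷ A.X) ≫ aN) :
    aM ≫ (dM ≫ (f ▷ X) ≫ (dN ▷ X) ≫ (α_ N X X).hom ≫ (N ◁ B) ≫ aN) =
    ((dM ≫ (f ▷ X) ≫ (dN ▷ X) ≫ (α_ N X X).hom ≫ (N ◁ B) ≫ aN) ▷ A.X) ≫ aN := by
  calc aM ≫ (dM ≫ (f ▷ X) ≫ (dN ▷ X) ≫ (α_ N X X).hom ≫ (N ◁ B) ≫ aN)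
      = dM ▷ A.X ≫ (α_ M X A.X).hom ≫ M ◁ ψ ≫ (α_ M A.X X).inv ≫ aM ▷ X ≫
          f ▷ X ≫ dN ▷ X ≫ (α_ N X X).hom ≫ N ◁ B ≫ aN := by
        rw [reassoc_of% dM_lin]
    _ = 𝟙 _ ⊗≫ (dM ▷ A.X) ⊗≫ (M ◁ ψ) ⊗≫ ((aM ≫ f) ▷ X) ⊗≫ (dN ▷ X) ⊗≫
          (N ◁ B) ⊗≫ aN := by monoidal
    _ = 𝟙 _ ⊗≫ (dM ▷ A.X) ⊗≫ (M ◁ ψ) ⊗≫ (((f ▷ A.X) ≫ aN) ▷ X) ⊗≫ (dN ▷ X) ⊗≫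
          (N ◁ B) ⊗≫ aN := by rw [f_lin]
    _ = 𝟙 _ ⊗≫ (dM ▷ A.X) ⊗≫ ((M ◁ ψ) ≫ (f ▷ (A.X ⊗ X))) ⊗≫ ((aN ≫ dN) ▷ X) ⊗≫
          (N ◁ B) ⊗≫ aN := by monoidal
    _ = 𝟙 _ ⊗≫ (dM ▷ A.X) ⊗≫ ((f ▷ (X ⊗ A.X)) ≫ (N ◁ ψ)) ⊗≫ ((aN ≫ dN) ▷ X) ⊗≫
          (N ◁ B) ⊗≫ aN := by rw [whisker_exchange]
    _ = 𝟙 _ ⊗≫ (dM ▷ A.X) ⊗≫ ((f ▷ (X ⊗ A.X)) ≫ (N ◁ ψ)) ⊗≫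
          (((dN ▷ A.X) ≫ (α_ N X A.X).hom ≫ (N ◁ ψ) ≫ (α_ N A.X X).inv ≫ (aN ▷ X)) ▷ X)
          ⊗≫ (N ◁ B) ⊗≫ aN := by rw [dN_lin]
    _ = 𝟙 _ ⊗≫ (dM ▷ A.X) ⊗≫ (f ▷ (X ⊗ A.X)) ⊗≫ ((N ◁ ψ) ≫ (dN ▷ (A.X ⊗ X))) ⊗≫
          ((N ◁ ψ) ▷ X) ⊗≫ ((aN ▷ (X ⊗ X)) ≫ (N ◁ B)) ⊗≫ aN := by monoidal
    _ = 𝟙 _ ⊗≫ (dM ▷ A.X) ⊗≫ (f ▷ (X ⊗ A.X)) ⊗≫ ((dN ▷ (X ⊗ A.X)) ≫ ((N ⊗ X) ◁ ψ)) ⊗≫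
          ((N ◁ ψ) ▷ X) ⊗≫ ((aN ▷ (X ⊗ X)) ≫ (N ◁ B)) ⊗≫ aN := by rw [whisker_exchange]
    _ = 𝟙 _ ⊗≫ (dM ▷ A.X) ⊗≫ (f ▷ (X ⊗ A.X)) ⊗≫ (dN ▷ (X ⊗ A.X)) ⊗≫ ((N ⊗ X) ◁ ψ) ⊗≫
          ((N ◁ ψ) ▷ X) ⊗≫ ((aN ▷ (X ⊗ X)) ≫ (N ◁ B)) ⊗≫ aN := by monoidal
    _ = 𝟙 _ ⊗≫ (dM ▷ A.X) ⊗≫ (f ▷ (X ⊗ A.X)) ⊗≫ (dN ▷ (X ⊗ A.X)) ⊗≫ ((N ⊗ X) ◁ ψ) ⊗≫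
          ((N ◁ ψ) ▷ X) ⊗≫ (((N ⊗ A.X) ◁ B) ≫ (aN ▷ A.X)) ⊗≫ aN := by
        rw [← whisker_exchange]
    _ = 𝟙 _ ⊗≫ (dM ▷ A.X) ⊗≫ (f ▷ (X ⊗ A.X)) ⊗≫ (dN ▷ (X ⊗ A.X)) ⊗≫ ((N ⊗ X) ◁ ψ) ⊗≫
          ((N ◁ ψ) ▷ X) ⊗≫ ((N ⊗ A.X) ◁ B) ⊗≫
          ((α_ N A.X A.X).inv ≫ (aN ▷ A.X) ≫ aN) := by monoidal
    _ = 𝟙 _ ⊗≫ (dM ▷ A.X) ⊗≫ (f ▷ (X ⊗ A.X)) ⊗≫ (dN ▷ (X ⊗ A.X)) ⊗≫ ((N ⊗ X) ◁ ψ) ⊗≫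
          ((N ◁ ψ) ▷ X) ⊗≫ ((N ⊗ A.X) ◁ B) ⊗≫ ((N ◁ A.mul) ≫ aN) := by rw [aN_mul]
    _ = 𝟙 _ ⊗≫ (dM ▷ A.X) ⊗≫ (f ▷ (X ⊗ A.X)) ⊗≫ (dN ▷ (X ⊗ A.X)) ⊗≫
          (N ◁ ((X ◁ ψ) ≫ (α_ X A.X X).inv ≫ (ψ ▷ X) ≫ (α_ A.X X X).hom ≫ (A.X ◁ B) ≫
            A.mul)) ⊗≫ aN := by monoidal
    _ = 𝟙 _ ⊗≫ (dM ▷ A.X) ⊗≫ (f ▷ (X ⊗ A.X)) ⊗≫ (dN ▷ (X ⊗ A.X)) ⊗≫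
          (N ◁ ((α_ X X A.X).inv ≫ (B ▷ A.X) ≫ A.mul)) ⊗≫ aN := by rw [hB1]
    _ = 𝟙 _ ⊗≫ (dM ▷ A.X) ⊗≫ (f ▷ (X ⊗ A.X)) ⊗≫ (dN ▷ (X ⊗ A.X)) ⊗≫
          (N ◁ (B ▷ A.X)) ⊗≫ ((N ◁ A.mul) ≫ aN) := by monoidal
    _ = 𝟙 _ ⊗≫ (dM ▷ A.X) ⊗≫ (f ▷ (X ⊗ A.X)) ⊗≫ (dN ▷ (X ⊗ A.X)) ⊗≫
          (N ◁ (B ▷ A.X)) ⊗≫ ((α_ N A.X A.X).inv ≫ (aN ▷ A.X) ≫ aN) := by rw [← aN_mul]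
    _ = _ := by monoidal

lemma st18_P_colinear {X : C} {ψ : X ⊗ A.X ⟶ A.X ⊗ X} {δ : X ⟶ A.X ⊗ (X ⊗ X)}
    {B : X ⊗ X ⟶ A.X}
    (hB2 : (δ ▷ X) ≫ (α_ A.X (X ⊗ X) X).hom ≫ (A.X ◁ (α_ X X X).hom) ≫
        (A.X ◁ (X ◁ B)) ≫ (A.X ◁ ψ) ≫ (α_ A.X A.X X).inv ≫ (A.mul ▷ X) =
      (X ◁ δ) ≫ (α_ X A.X (X ⊗ X)).inv ≫ (ψ ▷ (X ⊗ X)) ≫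
        (α_ A.X X (X ⊗ X)).hom ≫ (A.X ◁ (α_ X X X).inv) ≫
        (A.X ◁ (B ▷ X)) ≫ (α_ A.X A.X X).inv ≫ (A.mul ▷ X))
    {M N : C} {aM : M ⊗ A.X ⟶ M} {aN : N ⊗ A.X ⟶ N}
    {dM : M ⟶ M ⊗ X} {dN : N ⟶ N ⊗ X} {f : M ⟶ N}
    (aN_mul : (α_ N A.X A.X).inv ≫ (aN ▷ A.X) ≫ aN = (N ◁ A.mul) ≫ aN)
    (dN_lin : aN ≫ dN = (dN ▷ A.X) ≫ (α_ N X A.X).hom ≫ (N ◁ ψ) ≫ (α_ N A.X X).inv ≫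
      (aN ▷ X))
    (f_lin : aM ≫ f = (f ▷ A.X) ≫ aN)
    (hMco : dM ≫ (dM ▷ X) = dM ≫ (M ◁ δ) ≫ (α_ M A.X (X ⊗ X)).inv ≫ (aM ▷ (X ⊗ X)) ≫
      (α_ M X X).inv)
    (hNco : dN ≫ (dN ▷ X) = dN ≫ (N ◁ δ) ≫ (α_ N A.X (X ⊗ X)).inv ≫ (aN ▷ (X ⊗ X)) ≫
      (α_ N X X).inv) :
    dM ≫ ((dM ≫ (f ▷ X) ≫ (dN ▷ X) ≫ (α_ N X X).hom ≫ (N ◁ B) ≫ aN) ▷ X) =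
    (dM ≫ (f ▷ X) ≫ (dN ▷ X) ≫ (α_ N X X).hom ≫ (N ◁ B) ≫ aN) ≫ dN := by
  calc dM ≫ ((dM ≫ (f ▷ X) ≫ (dN ▷ X) ≫ (α_ N X X).hom ≫ (N ◁ B) ≫ aN) ▷ X)
      = (dM ≫ (dM ▷ X)) ≫ (𝟙 _ ⊗≫ ((f ▷ X) ▷ X) ⊗≫ ((dN ▷ X) ▷ X) ⊗≫
          ((N ◁ B) ▷ X) ⊗≫ (aN ▷ X) ⊗≫ 𝟙 _) := by monoidal
    _ = (dM ≫ (M ◁ δ) ≫ (α_ M A.X (X ⊗ X)).inv ≫ (aM ▷ (X ⊗ X)) ≫ (α_ M X X).inv) ≫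
          (𝟙 _ ⊗≫ ((f ▷ X) ▷ X) ⊗≫ ((dN ▷ X) ▷ X) ⊗≫
          ((N ◁ B) ▷ X) ⊗≫ (aN ▷ X) ⊗≫ 𝟙 _) := by rw [hMco]
    _ = 𝟙 _ ⊗≫ dM ⊗≫ (M ◁ δ) ⊗≫ ((aM ≫ f) ▷ (X ⊗ X)) ⊗≫ ((dN ▷ X) ▷ X) ⊗≫
          ((N ◁ B) ▷ X) ⊗≫ (aN ▷ X) ⊗≫ 𝟙 _ := by monoidal
    _ = 𝟙 _ ⊗≫ dM ⊗≫ (M ◁ δ) ⊗≫ (((f ▷ A.X) ≫ aN) ▷ (X ⊗ X)) ⊗≫ ((dN ▷ X) ▷ X) ⊗≫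
          ((N ◁ B) ▷ X) ⊗≫ (aN ▷ X) ⊗≫ 𝟙 _ := by rw [f_lin]
    _ = 𝟙 _ ⊗≫ dM ⊗≫ ((M ◁ δ) ≫ (f ▷ (A.X ⊗ (X ⊗ X)))) ⊗≫ ((aN ≫ dN) ▷ (X ⊗ X)) ⊗≫
          ((N ◁ B) ▷ X) ⊗≫ (aN ▷ X) ⊗≫ 𝟙 _ := by monoidal
    _ = 𝟙 _ ⊗≫ dM ⊗≫ ((f ▷ X) ≫ (N ◁ δ)) ⊗≫ ((aN ≫ dN) ▷ (X ⊗ X)) ⊗≫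
          ((N ◁ B) ▷ X) ⊗≫ (aN ▷ X) ⊗≫ 𝟙 _ := by rw [whisker_exchange]
    _ = 𝟙 _ ⊗≫ dM ⊗≫ ((f ▷ X) ≫ (N ◁ δ)) ⊗≫
          (((dN ▷ A.X) ≫ (α_ N X A.X).hom ≫ (N ◁ ψ) ≫ (α_ N A.X X).inv ≫ (aN ▷ X)) ▷
            (X ⊗ X)) ⊗≫ ((N ◁ B) ▷ X) ⊗≫ (aN ▷ X) ⊗≫ 𝟙 _ := by rw [dN_lin]
    _ = 𝟙 _ ⊗≫ dM ⊗≫ (f ▷ X) ⊗≫ ((N ◁ δ) ≫ (dN ▷ (A.X ⊗ (X ⊗ X)))) ⊗≫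
          ((N ◁ ψ) ▷ (X ⊗ X)) ⊗≫
          ((aN ▷ ((X ⊗ X) ⊗ X)) ≫ (N ◁ (B ▷ X))) ⊗≫ (aN ▷ X) ⊗≫ 𝟙 _ := by monoidal
    _ = 𝟙 _ ⊗≫ dM ⊗≫ (f ▷ X) ⊗≫ ((dN ▷ X) ≫ ((N ⊗ X) ◁ δ)) ⊗≫
          ((N ◁ ψ) ▷ (X ⊗ X)) ⊗≫
          ((aN ▷ ((X ⊗ X) ⊗ X)) ≫ (N ◁ (B ▷ X))) ⊗≫ (aN ▷ X) ⊗≫ 𝟙 _ := by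
        rw [whisker_exchange]
    _ = 𝟙 _ ⊗≫ dM ⊗≫ (f ▷ X) ⊗≫ (dN ▷ X) ⊗≫ ((N ⊗ X) ◁ δ) ⊗≫
          ((N ◁ ψ) ▷ (X ⊗ X)) ⊗≫
          ((aN ▷ ((X ⊗ X) ⊗ X)) ≫ (N ◁ (B ▷ X))) ⊗≫ (aN ▷ X) ⊗≫ 𝟙 _ := by monoidal
    _ = 𝟙 _ ⊗≫ dM ⊗≫ (f ▷ X) ⊗≫ (dN ▷ X) ⊗≫ ((N ⊗ X) ◁ δ) ⊗≫
          ((N ◁ ψ) ▷ (X ⊗ X)) ⊗≫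
          (((N ⊗ A.X) ◁ (B ▷ X)) ≫ (aN ▷ (A.X ⊗ X))) ⊗≫ (aN ▷ X) ⊗≫ 𝟙 _ := by
        rw [← whisker_exchange]
    _ = 𝟙 _ ⊗≫ dM ⊗≫ (f ▷ X) ⊗≫ (dN ▷ X) ⊗≫ ((N ⊗ X) ◁ δ) ⊗≫
          ((N ◁ ψ) ▷ (X ⊗ X)) ⊗≫ ((N ⊗ A.X) ◁ (B ▷ X)) ⊗≫
          (((α_ N A.X A.X).inv ≫ (aN ▷ A.X) ≫ aN) ▷ X) ⊗≫ 𝟙 _ := by monoidal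
    _ = 𝟙 _ ⊗≫ dM ⊗≫ (f ▷ X) ⊗≫ (dN ▷ X) ⊗≫ ((N ⊗ X) ◁ δ) ⊗≫
          ((N ◁ ψ) ▷ (X ⊗ X)) ⊗≫ ((N ⊗ A.X) ◁ (B ▷ X)) ⊗≫
          (((N ◁ A.mul) ≫ aN) ▷ X) ⊗≫ 𝟙 _ := by rw [aN_mul]
    _ = 𝟙 _ ⊗≫ dM ⊗≫ (f ▷ X) ⊗≫ (dN ▷ X) ⊗≫
          (N ◁ ((X ◁ δ) ≫ (α_ X A.X (X ⊗ X)).inv ≫ (ψ ▷ (X ⊗ X)) ≫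
            (α_ A.X X (X ⊗ X)).hom ≫ (A.X ◁ (α_ X X X).inv) ≫
            (A.X ◁ (B ▷ X)) ≫ (α_ A.X A.X X).inv ≫ (A.mul ▷ X))) ⊗≫
          (aN ▷ X) ⊗≫ 𝟙 _ := by monoidal
    _ = 𝟙 _ ⊗≫ dM ⊗≫ (f ▷ X) ⊗≫ (dN ▷ X) ⊗≫
          (N ◁ ((δ ▷ X) ≫ (α_ A.X (X ⊗ X) X).hom ≫ (A.X ◁ (α_ X X X).hom) ≫
            (A.X ◁ (X ◁ B)) ≫ (A.X ◁ ψ) ≫ (α_ A.X A.X X).inv ≫ (A.mul ▷ X))) ⊗≫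
          (aN ▷ X) ⊗≫ 𝟙 _ := by rw [← hB2]
    _ = 𝟙 _ ⊗≫ dM ⊗≫ (f ▷ X) ⊗≫ (dN ▷ X) ⊗≫ (N ◁ (δ ▷ X)) ⊗≫
          (N ◁ (A.X ◁ (X ◁ B))) ⊗≫ (N ◁ (A.X ◁ ψ)) ⊗≫
          (((N ◁ A.mul) ≫ aN) ▷ X) ⊗≫ 𝟙 _ := by monoidal
    _ = 𝟙 _ ⊗≫ dM ⊗≫ (f ▷ X) ⊗≫ (dN ▷ X) ⊗≫ (N ◁ (δ ▷ X)) ⊗≫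
          (N ◁ (A.X ◁ (X ◁ B))) ⊗≫ (N ◁ (A.X ◁ ψ)) ⊗≫
          (((α_ N A.X A.X).inv ≫ (aN ▷ A.X) ≫ aN) ▷ X) ⊗≫ 𝟙 _ := by rw [← aN_mul]
    _ = 𝟙 _ ⊗≫ dM ⊗≫ (f ▷ X) ⊗≫ (dN ▷ X) ⊗≫ (N ◁ (δ ▷ X)) ⊗≫
          (((N ⊗ A.X) ◁ ((α_ X X X).hom ≫ (X ◁ B) ≫ ψ)) ≫ (aN ▷ (A.X ⊗ X))) ⊗≫
          (aN ▷ X) ⊗≫ 𝟙 _ := by monoidal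
    _ = 𝟙 _ ⊗≫ dM ⊗≫ (f ▷ X) ⊗≫ (dN ▷ X) ⊗≫ (N ◁ (δ ▷ X)) ⊗≫
          ((aN ▷ ((X ⊗ X) ⊗ X)) ≫ (N ◁ ((α_ X X X).hom ≫ (X ◁ B) ≫ ψ))) ⊗≫
          (aN ▷ X) ⊗≫ 𝟙 _ := by rw [whisker_exchange]
    _ = 𝟙 _ ⊗≫ dM ⊗≫ (f ▷ X) ⊗≫
          ((dN ≫ (N ◁ δ) ≫ (α_ N A.X (X ⊗ X)).inv ≫ (aN ▷ (X ⊗ X)) ≫ (α_ N X X).inv)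
            ▷ X) ⊗≫ (N ◁ ((α_ X X X).hom ≫ (X ◁ B) ≫ ψ)) ⊗≫
          (aN ▷ X) ⊗≫ 𝟙 _ := by monoidal
    _ = 𝟙 _ ⊗≫ dM ⊗≫ (f ▷ X) ⊗≫ ((dN ≫ (dN ▷ X)) ▷ X) ⊗≫
          (N ◁ ((α_ X X X).hom ≫ (X ◁ B) ≫ ψ)) ⊗≫ (aN ▷ X) ⊗≫ 𝟙 _ := by rw [← hNco]
    _ = 𝟙 _ ⊗≫ dM ⊗≫ (f ▷ X) ⊗≫ (dN ▷ X) ⊗≫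
          ((dN ▷ (X ⊗ X)) ≫ ((N ⊗ X) ◁ B)) ⊗≫ (N ◁ ψ) ⊗≫ (aN ▷ X) ⊗≫ 𝟙 _ := by
        monoidal
    _ = 𝟙 _ ⊗≫ dM ⊗≫ (f ▷ X) ⊗≫ (dN ▷ X) ⊗≫
          (((N ◁ B) ≫ (dN ▷ A.X))) ⊗≫ (N ◁ ψ) ⊗≫ (aN ▷ X) ⊗≫ 𝟙 _ := by
        rw [← whisker_exchange]
    _ = 𝟙 _ ⊗≫ dM ⊗≫ (f ▷ X) ⊗≫ (dN ▷ X) ⊗≫ (N ◁ B) ⊗≫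
          ((dN ▷ A.X) ≫ (α_ N X A.X).hom ≫ (N ◁ ψ) ≫ (α_ N A.X X).inv ≫ (aN ▷ X)) := by
        monoidal
    _ = 𝟙 _ ⊗≫ dM ⊗≫ (f ▷ X) ⊗≫ (dN ▷ X) ⊗≫ (N ◁ B) ⊗≫ (aN ≫ dN) := by rw [← dN_lin]
    _ = _ := by monoidal

lemma st18_P_id {X : C} {δ : X ⟶ A.X ⊗ (X ⊗ X)} {ε : X ⟶ A.X} {B : X ⊗ X ⟶ A.X}
    {M N : C} {aN : N ⊗ A.X ⟶ N} {dM : M ⟶ M ⊗ X} {dN : N ⟶ N ⊗ X} {g : M ⟶ N}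
    (aN_mul : (α_ N A.X A.X).inv ≫ (aN ▷ A.X) ≫ aN = (N ◁ A.mul) ≫ aN)
    (hNco : dN ≫ (dN ▷ X) = dN ≫ (N ◁ δ) ≫ (α_ N A.X (X ⊗ X)).inv ≫ (aN ▷ (X ⊗ X)) ≫
      (α_ N X X).inv)
    (hB3 : δ ≫ (A.X ◁ B) ≫ A.mul = ε)
    (dN_counit : dN ≫ (N ◁ ε) ≫ aN = 𝟙 N)
    (g_col : dM ≫ (g ▷ X) = g ≫ dN) :
    dM ≫ (g ▷ X) ≫ (dN ▷ X) ≫ (α_ N X X).hom ≫ (N ◁ B) ≫ aN = g := by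
  calc dM ≫ (g ▷ X) ≫ (dN ▷ X) ≫ (α_ N X X).hom ≫ (N ◁ B) ≫ aN
      = g ≫ dN ≫ (dN ▷ X) ≫ (α_ N X X).hom ≫ (N ◁ B) ≫ aN := by
        rw [reassoc_of% g_col]
    _ = g ≫ (dN ≫ (dN ▷ X)) ≫ (α_ N X X).hom ≫ (N ◁ B) ≫ aN := by
        simp only [Category.assoc]
    _ = g ≫ (dN ≫ (N ◁ δ) ≫ (α_ N A.X (X ⊗ X)).inv ≫ (aN ▷ (X ⊗ X)) ≫
          (α_ N X X).inv) ≫ (α_ N X X).hom ≫ (N ◁ B) ≫ aN := by rw [hNco]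
    _ = g ≫ (𝟙 _ ⊗≫ dN ⊗≫ (N ◁ δ) ⊗≫ ((aN ▷ (X ⊗ X)) ≫ (N ◁ B)) ⊗≫ aN) := by
        congr 1; monoidal
    _ = g ≫ (𝟙 _ ⊗≫ dN ⊗≫ (N ◁ δ) ⊗≫ (((N ⊗ A.X) ◁ B) ≫ (aN ▷ A.X)) ⊗≫ aN) := by
        rw [← whisker_exchange]
    _ = g ≫ (𝟙 _ ⊗≫ dN ⊗≫ (N ◁ δ) ⊗≫ ((N ⊗ A.X) ◁ B) ⊗≫
          ((α_ N A.X A.X).inv ≫ (aN ▷ A.X) ≫ aN)) := by congr 1; monoidal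
    _ = g ≫ (𝟙 _ ⊗≫ dN ⊗≫ (N ◁ δ) ⊗≫ ((N ⊗ A.X) ◁ B) ⊗≫ ((N ◁ A.mul) ≫ aN)) := by
        rw [aN_mul]
    _ = g ≫ (dN ≫ (N ◁ (δ ≫ (A.X ◁ B) ≫ A.mul)) ≫ aN) := by congr 1; monoidal
    _ = g ≫ (dN ≫ (N ◁ ε) ≫ aN) := by rw [hB3]
    _ = g := by rw [dN_counit, Category.comp_id]

lemma st18_P_nat {X : C} {B : X ⊗ X ⟶ A.X} {M N M' N' : C}
    {aN : N ⊗ A.X ⟶ N} {aN' : N' ⊗ A.X ⟶ N'}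
    {dM : M ⟶ M ⊗ X} {dN : N ⟶ N ⊗ X} {dM' : M' ⟶ M' ⊗ X} {dN' : N' ⟶ N' ⊗ X}
    {f : M ⟶ N} {a : M' ⟶ M} {b : N ⟶ N'}
    (a_col : dM' ≫ (a ▷ X) = a ≫ dM)
    (b_col : dN ≫ (b ▷ X) = b ≫ dN')
    (b_lin : aN ≫ b = (b ▷ A.X) ≫ aN') :
    dM' ≫ (((a ≫ f ≫ b)) ▷ X) ≫ (dN' ▷ X) ≫ (α_ N' X X).hom ≫ (N' ◁ B) ≫ aN' =
    a ≫ (dM ≫ (f ▷ X) ≫ (dN ▷ X) ≫ (α_ N X X).hom ≫ (N ◁ B) ≫ aN) ≫ b := by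
  calc dM' ≫ (((a ≫ f ≫ b)) ▷ X) ≫ (dN' ▷ X) ≫ (α_ N' X X).hom ≫ (N' ◁ B) ≫ aN'
      = dM' ≫ (a ▷ X) ≫ (f ▷ X) ≫ ((b ≫ dN') ▷ X) ≫ (α_ N' X X).hom ≫
          (N' ◁ B) ≫ aN' := by simp only [comp_whiskerRight, Category.assoc]
    _ = dM' ≫ (a ▷ X) ≫ (f ▷ X) ≫ ((dN ≫ (b ▷ X)) ▷ X) ≫ (α_ N' X X).hom ≫
          (N' ◁ B) ≫ aN' := by rw [← b_col]
    _ = a ≫ dM ≫ (f ▷ X) ≫ ((dN ≫ (b ▷ X)) ▷ X) ≫ (α_ N' X X).hom ≫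
          (N' ◁ B) ≫ aN' := by rw [reassoc_of% a_col]
    _ = a ≫ dM ≫ (f ▷ X) ≫ (dN ▷ X) ≫ (𝟙 _ ⊗≫ ((b ▷ (X ⊗ X)) ≫ (N' ◁ B)) ⊗≫ aN') := by
        simp only [comp_whiskerRight, Category.assoc]; congr 4; monoidal
    _ = a ≫ dM ≫ (f ▷ X) ≫ (dN ▷ X) ≫ (𝟙 _ ⊗≫ ((N ◁ B) ≫ (b ▷ A.X)) ⊗≫ aN') := by
        rw [← whisker_exchange]
    _ = a ≫ dM ≫ (f ▷ X) ≫ (dN ▷ X) ≫ (𝟙 _ ⊗≫ (N ◁ B) ⊗≫ ((b ▷ A.X) ≫ aN')) := by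
        congr 4; monoidal
    _ = a ≫ dM ≫ (f ▷ X) ≫ (dN ▷ X) ≫ (𝟙 _ ⊗≫ (N ◁ B) ⊗≫ (aN ≫ b)) := by
        rw [← b_lin]
    _ = _ := by simp only [Category.assoc]; congr 3; monoidal

/-! #### The forwards direction -/

lemma st18_structure {X : C}
    (hgen : ∀ {Y Z P : C} (f g : Y ⊗ Z ⟶ P),
      (∀ h : 𝟙_ C ⟶ Y, (h ▷ Z) ≫ f = (h ▷ Z) ≫ g) → f = g)
    {R : C} (act : R ⊗ A.X ⟶ R)
    (ΘR : (R ⊗ X) ⊗ X ⟶ R ⊗ X) (Θr : (A.X ⊗ X) ⊗ X ⟶ A.X ⊗ X)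
    (φ : (𝟙_ C ⟶ R) → (A.X ⟶ R))
    (hφ : ∀ h, φ h = (λ_ A.X).inv ≫ (h ▷ A.X) ≫ act)
    (φ_one : ∀ h, A.one ≫ φ h = h)
    (tnat : ∀ h, ((φ h ▷ X) ▷ X) ≫ ΘR = Θr ≫ (φ h ▷ X)) :
    ΘR = (α_ R X X).hom ≫
      (R ◁ ((((λ_ X).inv ≫ (A.one ▷ X)) ▷ X) ≫ Θr)) ≫ (α_ R A.X X).inv ≫
      (act ▷ X) := by
  have key : ∀ h : 𝟙_ C ⟶ R,
      (h ▷ (X ⊗ X)) ≫ ((α_ R X X).inv ≫ ΘR) =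
      (h ▷ (X ⊗ X)) ≫ ((R ◁ ((((λ_ X).inv ≫ (A.one ▷ X)) ▷ X) ≫ Θr)) ≫
        (α_ R A.X X).inv ≫ (act ▷ X)) := by
    intro h
    have hφ' : (h ▷ A.X) ≫ act = (λ_ A.X).hom ≫ φ h := by
      rw [hφ]; simp
    calc (h ▷ (X ⊗ X)) ≫ ((α_ R X X).inv ≫ ΘR)
        = (α_ (𝟙_ C) X X).inv ≫ ((h ▷ X) ▷ X) ≫ ΘR := by monoidal
      _ = (α_ (𝟙_ C) X X).inv ≫ (((A.one ≫ φ h) ▷ X) ▷ X) ≫ ΘR := by rw [φ_one]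
      _ = (α_ (𝟙_ C) X X).inv ≫ ((A.one ▷ X) ▷ X) ≫ ((φ h ▷ X) ▷ X) ≫ ΘR := by
          simp only [comp_whiskerRight, Category.assoc]
      _ = (α_ (𝟙_ C) X X).inv ≫ ((A.one ▷ X) ▷ X) ≫ Θr ≫ (φ h ▷ X) := by rw [tnat]
      _ = (𝟙_ C ◁ ((((λ_ X).inv ≫ (A.one ▷ X)) ▷ X) ≫ Θr)) ≫ (λ_ (A.X ⊗ X)).hom ≫
            (φ h ▷ X) := by monoidal
      _ = (𝟙_ C ◁ ((((λ_ X).inv ≫ (A.one ▷ X)) ▷ X) ≫ Θr)) ≫ (α_ (𝟙_ C) A.X X).inv ≫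
            (((λ_ A.X).hom ≫ φ h) ▷ X) := by monoidal
      _ = (𝟙_ C ◁ ((((λ_ X).inv ≫ (A.one ▷ X)) ▷ X) ≫ Θr)) ≫ (α_ (𝟙_ C) A.X X).inv ≫
            (((h ▷ A.X) ≫ act) ▷ X) := by rw [← hφ']
      _ = ((𝟙_ C ◁ ((((λ_ X).inv ≫ (A.one ▷ X)) ▷ X) ≫ Θr)) ≫ (h ▷ (A.X ⊗ X))) ≫
            (α_ R A.X X).inv ≫ (act ▷ X) := by monoidal
      _ = ((h ▷ (X ⊗ X)) ≫ (R ◁ ((((λ_ X).inv ≫ (A.one ▷ X)) ▷ X) ≫ Θr))) ≫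
            (α_ R A.X X).inv ≫ (act ▷ X) := by rw [← whisker_exchange]
      _ = _ := by simp only [Category.assoc]
  have h2 := hgen _ _ key
  calc ΘR = (α_ R X X).hom ≫ ((α_ R X X).inv ≫ ΘR) := by simp
    _ = (α_ R X X).hom ≫ ((R ◁ ((((λ_ X).inv ≫ (A.one ▷ X)) ▷ X) ≫ Θr)) ≫
          (α_ R A.X X).inv ≫ (act ▷ X)) := by rw [h2]
    _ = _ := by simp only [Category.assoc]

lemma st18_HT0 {X : C} {δ : X ⟶ A.X ⊗ (X ⊗ X)} (t : X ⊗ X ⟶ A.X ⊗ X)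
    (Htri : (((A.X ◁ δ) ≫ (α_ A.X A.X (X ⊗ X)).inv ≫ (A.mul ▷ (X ⊗ X)) ≫
      (α_ A.X X X).inv) ≫ ((α_ A.X X X).hom ≫ (A.X ◁ t) ≫ (α_ A.X A.X X).inv ≫
      (A.mul ▷ X))) = 𝟙 (A.X ⊗ X)) :
    δ ≫ (A.X ◁ t) ≫ (α_ A.X A.X X).inv ≫ (A.mul ▷ X) = (λ_ X).inv ≫ (A.one ▷ X) := by
  calc δ ≫ (A.X ◁ t) ≫ (α_ A.X A.X X).inv ≫ (A.mul ▷ X)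
      = δ ≫ (𝟙 _ ⊗≫ (((A.one ▷ A.X) ≫ A.mul) ▷ (X ⊗ X)) ⊗≫ (A.X ◁ t) ⊗≫
          ((α_ A.X A.X X).inv ≫ (A.mul ▷ X))) := by rw [A.one_mul]; monoidal
    _ = δ ≫ (λ_ (A.X ⊗ (X ⊗ X))).inv ≫ (A.one ▷ (A.X ⊗ (X ⊗ X))) ≫
          (𝟙 _ ⊗≫ (A.mul ▷ (X ⊗ X)) ⊗≫ (A.X ◁ t) ⊗≫
          ((α_ A.X A.X X).inv ≫ (A.mul ▷ X))) := by congr 1; monoidal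
    _ = ((λ_ X).inv ≫ (A.one ▷ X) ≫ (A.X ◁ δ)) ≫
          (𝟙 _ ⊗≫ (A.mul ▷ (X ⊗ X)) ⊗≫ (A.X ◁ t) ⊗≫
          ((α_ A.X A.X X).inv ≫ (A.mul ▷ X))) := by
        rw [← reassoc_of% (st18_unit_pull A.one δ)]; simp only [Category.assoc]
    _ = ((λ_ X).inv ≫ (A.one ▷ X)) ≫ (((A.X ◁ δ) ≫ (α_ A.X A.X (X ⊗ X)).inv ≫
          (A.mul ▷ (X ⊗ X)) ≫ (α_ A.X X X).inv) ≫ ((α_ A.X X X).hom ≫ (A.X ◁ t) ≫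
          (α_ A.X A.X X).inv ≫ (A.mul ▷ X))) := by
        simp only [Category.assoc]; congr 2; monoidal
    _ = (λ_ X).inv ≫ (A.one ▷ X) := by rw [Htri]; simp

lemma st18_cond3 {X : C} {δ : X ⟶ A.X ⊗ (X ⊗ X)} {ε : X ⟶ A.X} (t : X ⊗ X ⟶ A.X ⊗ X)
    (HT0 : δ ≫ (A.X ◁ t) ≫ (α_ A.X A.X X).inv ≫ (A.mul ▷ X) =
      (λ_ X).inv ≫ (A.one ▷ X)) :
    δ ≫ (A.X ◁ (t ≫ (A.X ◁ ε) ≫ A.mul)) ≫ A.mul = ε := by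
  calc δ ≫ (A.X ◁ (t ≫ (A.X ◁ ε) ≫ A.mul)) ≫ A.mul
      = 𝟙 _ ⊗≫ δ ⊗≫ (A.X ◁ t) ⊗≫ (A.X ◁ (A.X ◁ ε)) ⊗≫
          ((α_ A.X A.X A.X).hom ≫ (A.X ◁ A.mul) ≫ A.mul) := by monoidal
    _ = 𝟙 _ ⊗≫ δ ⊗≫ (A.X ◁ t) ⊗≫ (A.X ◁ (A.X ◁ ε)) ⊗≫
          ((A.mul ▷ A.X) ≫ A.mul) := by rw [← A.mul_assoc]
    _ = 𝟙 _ ⊗≫ δ ⊗≫ (A.X ◁ t) ⊗≫ (((A.X ⊗ A.X) ◁ ε) ≫ (A.mul ▷ A.X)) ⊗≫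
          A.mul := by monoidal
    _ = 𝟙 _ ⊗≫ δ ⊗≫ (A.X ◁ t) ⊗≫ ((A.mul ▷ X) ≫ (A.X ◁ ε)) ⊗≫ A.mul := by
        rw [whisker_exchange]
    _ = (δ ≫ (A.X ◁ t) ≫ (α_ A.X A.X X).inv ≫ (A.mul ▷ X)) ≫ (A.X ◁ ε) ≫ A.mul := by
        monoidal
    _ = ((λ_ X).inv ≫ (A.one ▷ X)) ≫ (A.X ◁ ε) ≫ A.mul := by rw [HT0]
    _ = ((λ_ X).inv ≫ (A.one ▷ X) ≫ (A.X ◁ ε)) ≫ A.mul := by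
        simp only [Category.assoc]
    _ = (ε ≫ (λ_ A.X).inv ≫ (A.one ▷ A.X)) ≫ A.mul := by rw [st18_unit_pull]
    _ = ε := by simp [A.one_mul]

lemma st18_HL {X : C} {ψ : X ⊗ A.X ⟶ A.X ⊗ X} (t : X ⊗ X ⟶ A.X ⊗ X)
    (Θr : (A.X ⊗ X) ⊗ X ⟶ A.X ⊗ X)
    (ht : ((((λ_ X).inv ≫ (A.one ▷ X)) ▷ X) ≫ Θr) = t)
    (hS : Θr = (α_ A.X X X).hom ≫ (A.X ◁ t) ≫ (α_ A.X A.X X).inv ≫ (A.mul ▷ X))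
    (Hlin : (α_ (A.X ⊗ X) X A.X).hom ≫ ((A.X ⊗ X) ◁ ψ) ≫ (α_ (A.X ⊗ X) A.X X).inv ≫
      (((α_ A.X X A.X).hom ≫ (A.X ◁ ψ) ≫ (α_ A.X A.X X).inv ≫ (A.mul ▷ X)) ▷ X) ≫ Θr =
      (Θr ▷ A.X) ≫ (α_ A.X X A.X).hom ≫ (A.X ◁ ψ) ≫ (α_ A.X A.X X).inv ≫
        (A.mul ▷ X)) :
    (X ◁ ψ) ≫ (α_ X A.X X).inv ≫ (ψ ▷ X) ≫ (α_ A.X X X).hom ≫ (A.X ◁ t) ≫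
      (α_ A.X A.X X).inv ≫ (A.mul ▷ X) =
    (α_ X X A.X).inv ≫ (t ▷ A.X) ≫ (α_ A.X X A.X).hom ≫ (A.X ◁ ψ) ≫
      (α_ A.X A.X X).inv ≫ (A.mul ▷ X) := by
  calc (X ◁ ψ) ≫ (α_ X A.X X).inv ≫ (ψ ▷ X) ≫ (α_ A.X X X).hom ≫ (A.X ◁ t) ≫
      (α_ A.X A.X X).inv ≫ (A.mul ▷ X)
      = 𝟙 _ ⊗≫ (X ◁ ψ) ⊗≫ (ψ ▷ X) ⊗≫ (((A.one ▷ A.X) ≫ A.mul) ▷ (X ⊗ X)) ⊗≫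
          (A.X ◁ t) ⊗≫ ((α_ A.X A.X X).inv ≫ (A.mul ▷ X)) := by
        rw [A.one_mul]; monoidal
    _ = ((X ◁ ψ) ≫ (α_ X A.X X).inv ≫ (ψ ▷ X) ≫ (α_ A.X X X).hom) ≫
          (λ_ (A.X ⊗ (X ⊗ X))).inv ≫ (A.one ▷ (A.X ⊗ (X ⊗ X))) ≫
          (𝟙 _ ⊗≫ (A.mul ▷ (X ⊗ X)) ⊗≫ (A.X ◁ t) ⊗≫
            ((α_ A.X A.X X).inv ≫ (A.mul ▷ X))) := by monoidal
    _ = (λ_ (X ⊗ (X ⊗ A.X))).inv ≫ (A.one ▷ (X ⊗ (X ⊗ A.X))) ≫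
          (A.X ◁ ((X ◁ ψ) ≫ (α_ X A.X X).inv ≫ (ψ ▷ X) ≫ (α_ A.X X X).hom)) ≫
          (𝟙 _ ⊗≫ (A.mul ▷ (X ⊗ X)) ⊗≫ (A.X ◁ t) ⊗≫
            ((α_ A.X A.X X).inv ≫ (A.mul ▷ X))) := by
        rw [reassoc_of% (st18_unit_pull A.one
          ((X ◁ ψ) ≫ (α_ X A.X X).inv ≫ (ψ ▷ X) ≫ (α_ A.X X X).hom))]
        simp only [Category.assoc]
    _ = (α_ X X A.X).inv ≫ ((((λ_ X).inv ≫ (A.one ▷ X)) ▷ X) ▷ A.X) ≫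
          (α_ (A.X ⊗ X) X A.X).hom ≫ ((A.X ⊗ X) ◁ ψ) ≫ (α_ (A.X ⊗ X) A.X X).inv ≫
          (((α_ A.X X A.X).hom ≫ (A.X ◁ ψ) ≫ (α_ A.X A.X X).inv ≫ (A.mul ▷ X)) ▷ X) ≫
          ((α_ A.X X X).hom ≫ (A.X ◁ t) ≫ (α_ A.X A.X X).inv ≫ (A.mul ▷ X)) := by
        monoidal
    _ = (α_ X X A.X).inv ≫ ((((λ_ X).inv ≫ (A.one ▷ X)) ▷ X) ▷ A.X) ≫
          (α_ (A.X ⊗ X) X A.X).hom ≫ ((A.X ⊗ X) ◁ ψ) ≫ (α_ (A.X ⊗ X) A.X X).inv ≫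
          (((α_ A.X X A.X).hom ≫ (A.X ◁ ψ) ≫ (α_ A.X A.X X).inv ≫ (A.mul ▷ X)) ▷ X) ≫
          Θr := by rw [← hS]
    _ = (α_ X X A.X).inv ≫ ((((λ_ X).inv ≫ (A.one ▷ X)) ▷ X) ▷ A.X) ≫ (Θr ▷ A.X) ≫
          (α_ A.X X A.X).hom ≫ (A.X ◁ ψ) ≫ (α_ A.X A.X X).inv ≫ (A.mul ▷ X) := by
        rw [Hlin]
    _ = (α_ X X A.X).inv ≫ (((((λ_ X).inv ≫ (A.one ▷ X)) ▷ X) ≫ Θr) ▷ A.X) ≫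
          (α_ A.X X A.X).hom ≫ (A.X ◁ ψ) ≫ (α_ A.X A.X X).inv ≫ (A.mul ▷ X) := by
        simp only [comp_whiskerRight, Category.assoc]
    _ = _ := by rw [ht]

lemma st18_cond1 {X : C} {ψ : X ⊗ A.X ⟶ A.X ⊗ X} {ε : X ⟶ A.X} (t : X ⊗ X ⟶ A.X ⊗ X)
    (HL : (X ◁ ψ) ≫ (α_ X A.X X).inv ≫ (ψ ▷ X) ≫ (α_ A.X X X).hom ≫ (A.X ◁ t) ≫
      (α_ A.X A.X X).inv ≫ (A.mul ▷ X) =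
      (α_ X X A.X).inv ≫ (t ▷ A.X) ≫ (α_ A.X X A.X).hom ≫ (A.X ◁ ψ) ≫
      (α_ A.X A.X X).inv ≫ (A.mul ▷ X))
    (ε_compat : ψ ≫ (A.X ◁ ε) ≫ A.mul = (ε ▷ A.X) ≫ A.mul) :
    (α_ X X A.X).inv ≫ ((t ≫ (A.X ◁ ε) ≫ A.mul) ▷ A.X) ≫ A.mul =
    (X ◁ ψ) ≫ (α_ X A.X X).inv ≫ (ψ ▷ X) ≫ (α_ A.X X X).hom ≫
      (A.X ◁ (t ≫ (A.X ◁ ε) ≫ A.mul)) ≫ A.mul := by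
  calc (α_ X X A.X).inv ≫ ((t ≫ (A.X ◁ ε) ≫ A.mul) ▷ A.X) ≫ A.mul
      = 𝟙 _ ⊗≫ (t ▷ A.X) ⊗≫ ((A.X ◁ ε) ▷ A.X) ⊗≫ ((A.mul ▷ A.X) ≫ A.mul) ⊗≫ 𝟙 _ := by
        monoidal
    _ = 𝟙 _ ⊗≫ (t ▷ A.X) ⊗≫ ((A.X ◁ ε) ▷ A.X) ⊗≫
          ((α_ A.X A.X A.X).hom ≫ (A.X ◁ A.mul) ≫ A.mul) ⊗≫ 𝟙 _ := by rw [A.mul_assoc]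
    _ = 𝟙 _ ⊗≫ (t ▷ A.X) ⊗≫ (A.X ◁ ((ε ▷ A.X) ≫ A.mul)) ⊗≫ A.mul ⊗≫ 𝟙 _ := by monoidal
    _ = 𝟙 _ ⊗≫ (t ▷ A.X) ⊗≫ (A.X ◁ (ψ ≫ (A.X ◁ ε) ≫ A.mul)) ⊗≫ A.mul ⊗≫ 𝟙 _ := by
        rw [← ε_compat]
    _ = 𝟙 _ ⊗≫ (t ▷ A.X) ⊗≫ (A.X ◁ ψ) ⊗≫ (A.X ◁ (A.X ◁ ε)) ⊗≫
          ((α_ A.X A.X A.X).hom ≫ (A.X ◁ A.mul) ≫ A.mul) ⊗≫ 𝟙 _ := by monoidal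
    _ = 𝟙 _ ⊗≫ (t ▷ A.X) ⊗≫ (A.X ◁ ψ) ⊗≫ (A.X ◁ (A.X ◁ ε)) ⊗≫
          ((A.mul ▷ A.X) ≫ A.mul) ⊗≫ 𝟙 _ := by rw [← A.mul_assoc]
    _ = 𝟙 _ ⊗≫ (t ▷ A.X) ⊗≫ (A.X ◁ ψ) ⊗≫ (((A.X ⊗ A.X) ◁ ε) ≫ (A.mul ▷ A.X)) ⊗≫
          A.mul ⊗≫ 𝟙 _ := by monoidal
    _ = 𝟙 _ ⊗≫ (t ▷ A.X) ⊗≫ (A.X ◁ ψ) ⊗≫ ((A.mul ▷ X) ≫ (A.X ◁ ε)) ⊗≫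
          A.mul ⊗≫ 𝟙 _ := by rw [whisker_exchange]
    _ = (α_ X X A.X).inv ≫ (t ▷ A.X) ≫ (α_ A.X X A.X).hom ≫ (A.X ◁ ψ) ≫
          (α_ A.X A.X X).inv ≫ (A.mul ▷ X) ≫ (A.X ◁ ε) ≫ A.mul := by monoidal
    _ = (X ◁ ψ) ≫ (α_ X A.X X).inv ≫ (ψ ▷ X) ≫ (α_ A.X X X).hom ≫ (A.X ◁ t) ≫
          (α_ A.X A.X X).inv ≫ (A.mul ▷ X) ≫ (A.X ◁ ε) ≫ A.mul := by
        rw [← reassoc_of% HL]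
    _ = 𝟙 _ ⊗≫ (X ◁ ψ) ⊗≫ (ψ ▷ X) ⊗≫ (A.X ◁ t) ⊗≫ ((A.mul ▷ X) ≫ (A.X ◁ ε)) ⊗≫
          A.mul ⊗≫ 𝟙 _ := by monoidal
    _ = 𝟙 _ ⊗≫ (X ◁ ψ) ⊗≫ (ψ ▷ X) ⊗≫ (A.X ◁ t) ⊗≫
          (((A.X ⊗ A.X) ◁ ε) ≫ (A.mul ▷ A.X)) ⊗≫ A.mul ⊗≫ 𝟙 _ := by
        rw [← whisker_exchange]
    _ = 𝟙 _ ⊗≫ (X ◁ ψ) ⊗≫ (ψ ▷ X) ⊗≫ (A.X ◁ t) ⊗≫ (A.X ◁ (A.X ◁ ε)) ⊗≫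
          ((A.mul ▷ A.X) ≫ A.mul) ⊗≫ 𝟙 _ := by monoidal
    _ = 𝟙 _ ⊗≫ (X ◁ ψ) ⊗≫ (ψ ▷ X) ⊗≫ (A.X ◁ t) ⊗≫ (A.X ◁ (A.X ◁ ε)) ⊗≫
          ((α_ A.X A.X A.X).hom ≫ (A.X ◁ A.mul) ≫ A.mul) ⊗≫ 𝟙 _ := by rw [A.mul_assoc]
    _ = _ := by monoidal

lemma st18_T1 {X : C} {ψ : X ⊗ A.X ⟶ A.X ⊗ X} {δ : X ⟶ A.X ⊗ (X ⊗ X)} {ε : X ⟶ A.X}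
    (t : X ⊗ X ⟶ A.X ⊗ X) (Θr : (A.X ⊗ X) ⊗ X ⟶ A.X ⊗ X)
    (ht : ((((λ_ X).inv ≫ (A.one ▷ X)) ▷ X) ≫ Θr) = t)
    (hS : Θr = (α_ A.X X X).hom ≫ (A.X ◁ t) ≫ (α_ A.X A.X X).inv ≫ (A.mul ▷ X))
    (counit_left : δ ≫ (A.X ◁ (ε ▷ X)) ≫ (α_ A.X A.X X).inv ≫ (A.mul ▷ X) =
      (λ_ X).inv ≫ (A.one ▷ X))
    (Hcol : (((A.X ⊗ X) ◁ δ) ≫ (α_ (A.X ⊗ X) A.X (X ⊗ X)).inv ≫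
        (((α_ A.X X A.X).hom ≫ (A.X ◁ ψ) ≫ (α_ A.X A.X X).inv ≫ (A.mul ▷ X)) ▷
          (X ⊗ X)) ≫ (α_ (A.X ⊗ X) X X).inv) ≫ (Θr ▷ X) =
      Θr ≫ ((A.X ◁ δ) ≫ (α_ A.X A.X (X ⊗ X)).inv ≫ (A.mul ▷ (X ⊗ X)) ≫
        (α_ A.X X X).inv)) :
    (X ◁ δ) ≫ (α_ X A.X (X ⊗ X)).inv ≫ (ψ ▷ (X ⊗ X)) ≫ (α_ A.X X (X ⊗ X)).hom ≫
      (A.X ◁ (α_ X X X).inv) ≫ (A.X ◁ ((t ≫ (A.X ◁ ε) ≫ A.mul) ▷ X)) ≫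
      (α_ A.X A.X X).inv ≫ (A.mul ▷ X) = t := by
  calc (X ◁ δ) ≫ (α_ X A.X (X ⊗ X)).inv ≫ (ψ ▷ (X ⊗ X)) ≫ (α_ A.X X (X ⊗ X)).hom ≫
      (A.X ◁ (α_ X X X).inv) ≫ (A.X ◁ ((t ≫ (A.X ◁ ε) ≫ A.mul) ▷ X)) ≫
      (α_ A.X A.X X).inv ≫ (A.mul ▷ X)
      = 𝟙 _ ⊗≫ (X ◁ δ) ⊗≫ (ψ ▷ (X ⊗ X)) ⊗≫ (A.X ◁ (t ▷ X)) ⊗≫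
          (A.X ◁ ((A.X ◁ ε) ▷ X)) ⊗≫
          (((α_ A.X A.X A.X).hom ≫ (A.X ◁ A.mul) ≫ A.mul) ▷ X) ⊗≫ 𝟙 _ := by monoidal
    _ = 𝟙 _ ⊗≫ (X ◁ δ) ⊗≫ (ψ ▷ (X ⊗ X)) ⊗≫ (A.X ◁ (t ▷ X)) ⊗≫
          (A.X ◁ ((A.X ◁ ε) ▷ X)) ⊗≫ (((A.mul ▷ A.X) ≫ A.mul) ▷ X) ⊗≫ 𝟙 _ := by
        rw [← A.mul_assoc]
    _ = 𝟙 _ ⊗≫ (X ◁ δ) ⊗≫ (ψ ▷ (X ⊗ X)) ⊗≫ (A.X ◁ (t ▷ X)) ⊗≫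
          (((A.X ⊗ A.X) ◁ ((ε ▷ X))) ≫ (A.mul ▷ (A.X ⊗ X))) ⊗≫ (A.mul ▷ X) ⊗≫ 𝟙 _ := by
        monoidal
    _ = 𝟙 _ ⊗≫ (X ◁ δ) ⊗≫ (ψ ▷ (X ⊗ X)) ⊗≫ (A.X ◁ (t ▷ X)) ⊗≫
          ((A.mul ▷ (X ⊗ X)) ≫ (A.X ◁ (ε ▷ X))) ⊗≫ (A.mul ▷ X) ⊗≫ 𝟙 _ := by
        rw [whisker_exchange]
    _ = 𝟙 _ ⊗≫ (X ◁ δ) ⊗≫ (ψ ▷ (X ⊗ X)) ⊗≫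
          (((A.one ▷ A.X) ≫ A.mul) ▷ (X ⊗ (X ⊗ X))) ⊗≫ (A.X ◁ (t ▷ X)) ⊗≫
          ((A.mul ▷ (X ⊗ X)) ≫ (A.X ◁ (ε ▷ X))) ⊗≫ (A.mul ▷ X) ⊗≫ 𝟙 _ := by
        rw [A.one_mul]; monoidal
    _ = ((X ◁ δ) ≫ (α_ X A.X (X ⊗ X)).inv ≫ (ψ ▷ (X ⊗ X)) ≫
          (α_ A.X X (X ⊗ X)).hom) ≫ (λ_ (A.X ⊗ (X ⊗ (X ⊗ X)))).inv ≫
          (A.one ▷ (A.X ⊗ (X ⊗ (X ⊗ X)))) ≫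
          (𝟙 _ ⊗≫ (A.mul ▷ (X ⊗ (X ⊗ X))) ⊗≫ (A.X ◁ (t ▷ X)) ⊗≫
            ((A.mul ▷ (X ⊗ X)) ≫ (A.X ◁ (ε ▷ X))) ⊗≫ (A.mul ▷ X) ⊗≫ 𝟙 _) := by
        monoidal
    _ = (λ_ (X ⊗ X)).inv ≫ (A.one ▷ (X ⊗ X)) ≫
          (A.X ◁ ((X ◁ δ) ≫ (α_ X A.X (X ⊗ X)).inv ≫ (ψ ▷ (X ⊗ X)) ≫
            (α_ A.X X (X ⊗ X)).hom)) ≫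
          (𝟙 _ ⊗≫ (A.mul ▷ (X ⊗ (X ⊗ X))) ⊗≫ (A.X ◁ (t ▷ X)) ⊗≫
            ((A.mul ▷ (X ⊗ X)) ≫ (A.X ◁ (ε ▷ X))) ⊗≫ (A.mul ▷ X) ⊗≫ 𝟙 _) := by
        rw [reassoc_of% (st18_unit_pull A.one ((X ◁ δ) ≫ (α_ X A.X (X ⊗ X)).inv ≫
          (ψ ▷ (X ⊗ X)) ≫ (α_ A.X X (X ⊗ X)).hom))]
        simp only [Category.assoc]
    _ = (((λ_ X).inv ≫ (A.one ▷ X)) ▷ X) ≫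
          ((((A.X ⊗ X) ◁ δ) ≫ (α_ (A.X ⊗ X) A.X (X ⊗ X)).inv ≫
            (((α_ A.X X A.X).hom ≫ (A.X ◁ ψ) ≫ (α_ A.X A.X X).inv ≫ (A.mul ▷ X)) ▷
              (X ⊗ X)) ≫ (α_ (A.X ⊗ X) X X).inv) ≫
          (((α_ A.X X X).hom ≫ (A.X ◁ t) ≫ (α_ A.X A.X X).inv ≫ (A.mul ▷ X)) ▷ X)) ≫
          ((α_ A.X X X).hom ≫ (A.X ◁ (ε ▷ X)) ≫ (α_ A.X A.X X).inv ≫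
            (A.mul ▷ X)) := by monoidal
    _ = (((λ_ X).inv ≫ (A.one ▷ X)) ▷ X) ≫
          ((((A.X ⊗ X) ◁ δ) ≫ (α_ (A.X ⊗ X) A.X (X ⊗ X)).inv ≫
            (((α_ A.X X A.X).hom ≫ (A.X ◁ ψ) ≫ (α_ A.X A.X X).inv ≫ (A.mul ▷ X)) ▷
              (X ⊗ X)) ≫ (α_ (A.X ⊗ X) X X).inv) ≫ (Θr ▷ X)) ≫
          ((α_ A.X X X).hom ≫ (A.X ◁ (ε ▷ X)) ≫ (α_ A.X A.X X).inv ≫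
            (A.mul ▷ X)) := by rw [← hS]
    _ = (((λ_ X).inv ≫ (A.one ▷ X)) ▷ X) ≫
          (Θr ≫ ((A.X ◁ δ) ≫ (α_ A.X A.X (X ⊗ X)).inv ≫ (A.mul ▷ (X ⊗ X)) ≫
            (α_ A.X X X).inv)) ≫
          ((α_ A.X X X).hom ≫ (A.X ◁ (ε ▷ X)) ≫ (α_ A.X A.X X).inv ≫
            (A.mul ▷ X)) := by rw [Hcol]
    _ = t ≫ ((A.X ◁ δ) ≫ (α_ A.X A.X (X ⊗ X)).inv ≫ (A.mul ▷ (X ⊗ X)) ≫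
          (α_ A.X X X).inv) ≫ ((α_ A.X X X).hom ≫ (A.X ◁ (ε ▷ X)) ≫
          (α_ A.X A.X X).inv ≫ (A.mul ▷ X)) := by
        rw [← ht]; simp only [Category.assoc]
    _ = 𝟙 _ ⊗≫ t ⊗≫ (A.X ◁ δ) ⊗≫ ((A.mul ▷ (X ⊗ X)) ≫ (A.X ◁ (ε ▷ X))) ⊗≫
          ((α_ A.X A.X X).inv ≫ (A.mul ▷ X)) := by monoidal
    _ = 𝟙 _ ⊗≫ t ⊗≫ (A.X ◁ δ) ⊗≫ (((A.X ⊗ A.X) ◁ (ε ▷ X)) ≫ (A.mul ▷ (A.X ⊗ X))) ⊗≫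
          ((α_ A.X A.X X).inv ≫ (A.mul ▷ X)) := by rw [← whisker_exchange]
    _ = 𝟙 _ ⊗≫ t ⊗≫ (A.X ◁ δ) ⊗≫ (A.X ◁ (A.X ◁ (ε ▷ X))) ⊗≫
          (((A.mul ▷ A.X) ≫ A.mul) ▷ X) ⊗≫ 𝟙 _ := by monoidal
    _ = 𝟙 _ ⊗≫ t ⊗≫ (A.X ◁ δ) ⊗≫ (A.X ◁ (A.X ◁ (ε ▷ X))) ⊗≫
          (((α_ A.X A.X A.X).hom ≫ (A.X ◁ A.mul) ≫ A.mul) ▷ X) ⊗≫ 𝟙 _ := by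
        rw [A.mul_assoc]
    _ = 𝟙 _ ⊗≫ t ⊗≫ (A.X ◁ (δ ≫ (A.X ◁ (ε ▷ X)) ≫ (α_ A.X A.X X).inv ≫
          (A.mul ▷ X))) ⊗≫ ((α_ A.X A.X X).inv ≫ (A.mul ▷ X)) := by monoidal
    _ = 𝟙 _ ⊗≫ t ⊗≫ (A.X ◁ ((λ_ X).inv ≫ (A.one ▷ X))) ⊗≫
          ((α_ A.X A.X X).inv ≫ (A.mul ▷ X)) := by rw [counit_left]
    _ = 𝟙 _ ⊗≫ t ⊗≫ (((A.X ◁ A.one) ≫ A.mul) ▷ X) ⊗≫ 𝟙 _ := by monoidal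
    _ = 𝟙 _ ⊗≫ t ⊗≫ ((ρ_ A.X).hom ▷ X) ⊗≫ 𝟙 _ := by rw [A.mul_one]
    _ = t := by monoidal

lemma st18_T2 {X : C} {ψ : X ⊗ A.X ⟶ A.X ⊗ X} {δ : X ⟶ A.X ⊗ (X ⊗ X)} {ε : X ⟶ A.X}
    (t : X ⊗ X ⟶ A.X ⊗ X) (Θr : (A.X ⊗ X) ⊗ X ⟶ A.X ⊗ X)
    (Θf : ((A.X ⊗ X) ⊗ X) ⊗ X ⟶ (A.X ⊗ X) ⊗ X)
    (ht : ((((λ_ X).inv ≫ (A.one ▷ X)) ▷ X) ≫ Θr) = t)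
    (ψ_mul : (X ◁ A.mul) ≫ ψ = (α_ X A.X A.X).inv ≫ (ψ ▷ A.X) ≫ (α_ A.X X A.X).hom ≫
      (A.X ◁ ψ) ≫ (α_ A.X A.X X).inv ≫ (A.mul ▷ X))
    (counit_right : δ ≫ (A.X ◁ (X ◁ ε)) ≫ (A.X ◁ ψ) ≫ (α_ A.X A.X X).inv ≫
      (A.mul ▷ X) = (λ_ X).inv ≫ (A.one ▷ X))
    (hSf : Θf = (α_ (A.X ⊗ X) X X).hom ≫ ((A.X ⊗ X) ◁ t) ≫ (α_ (A.X ⊗ X) A.X X).inv ≫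
      (((α_ A.X X A.X).hom ≫ (A.X ◁ ψ) ≫ (α_ A.X A.X X).inv ≫ (A.mul ▷ X)) ▷ X))
    (Hnat : ((((A.X ◁ δ) ≫ (α_ A.X A.X (X ⊗ X)).inv ≫ (A.mul ▷ (X ⊗ X)) ≫
        (α_ A.X X X).inv)) ▷ X) ≫ Θf =
      Θr ≫ ((A.X ◁ δ) ≫ (α_ A.X A.X (X ⊗ X)).inv ≫ (A.mul ▷ (X ⊗ X)) ≫
        (α_ A.X X X).inv)) :
    (δ ▷ X) ≫ (α_ A.X (X ⊗ X) X).hom ≫ (A.X ◁ (α_ X X X).hom) ≫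
      (A.X ◁ (X ◁ (t ≫ (A.X ◁ ε) ≫ A.mul))) ≫ (A.X ◁ ψ) ≫ (α_ A.X A.X X).inv ≫
      (A.mul ▷ X) = t := by
  calc (δ ▷ X) ≫ (α_ A.X (X ⊗ X) X).hom ≫ (A.X ◁ (α_ X X X).hom) ≫
      (A.X ◁ (X ◁ (t ≫ (A.X ◁ ε) ≫ A.mul))) ≫ (A.X ◁ ψ) ≫ (α_ A.X A.X X).inv ≫
      (A.mul ▷ X)
      = 𝟙 _ ⊗≫ (δ ▷ X) ⊗≫ (A.X ◁ (X ◁ t)) ⊗≫ (A.X ◁ (X ◁ (A.X ◁ ε))) ⊗≫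
          (A.X ◁ ((X ◁ A.mul) ≫ ψ)) ⊗≫ ((α_ A.X A.X X).inv ≫ (A.mul ▷ X)) := by
        monoidal
    _ = 𝟙 _ ⊗≫ (δ ▷ X) ⊗≫ (A.X ◁ (X ◁ t)) ⊗≫ (A.X ◁ (X ◁ (A.X ◁ ε))) ⊗≫
          (A.X ◁ ((α_ X A.X A.X).inv ≫ (ψ ▷ A.X) ≫ (α_ A.X X A.X).hom ≫
            (A.X ◁ ψ) ≫ (α_ A.X A.X X).inv ≫ (A.mul ▷ X))) ⊗≫
          ((α_ A.X A.X X).inv ≫ (A.mul ▷ X)) := by rw [ψ_mul]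
    _ = 𝟙 _ ⊗≫ (δ ▷ X) ⊗≫ (A.X ◁ (X ◁ t)) ⊗≫
          (A.X ◁ (((X ⊗ A.X) ◁ ε) ≫ (ψ ▷ A.X))) ⊗≫ (A.X ◁ (A.X ◁ ψ)) ⊗≫
          (A.X ◁ (A.mul ▷ X)) ⊗≫ ((α_ A.X A.X X).inv ≫ (A.mul ▷ X)) := by monoidal
    _ = 𝟙 _ ⊗≫ (δ ▷ X) ⊗≫ (A.X ◁ (X ◁ t)) ⊗≫
          (A.X ◁ ((ψ ▷ X) ≫ ((A.X ⊗ X) ◁ ε))) ⊗≫ (A.X ◁ (A.X ◁ ψ)) ⊗≫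
          (A.X ◁ (A.mul ▷ X)) ⊗≫ ((α_ A.X A.X X).inv ≫ (A.mul ▷ X)) := by
        rw [whisker_exchange]
    _ = 𝟙 _ ⊗≫ (δ ▷ X) ⊗≫ (A.X ◁ (X ◁ t)) ⊗≫ (A.X ◁ (ψ ▷ X)) ⊗≫
          (A.X ◁ ((A.X ⊗ X) ◁ ε)) ⊗≫ (A.X ◁ (A.X ◁ ψ)) ⊗≫
          (((α_ A.X A.X A.X).hom ≫ (A.X ◁ A.mul) ≫ A.mul) ▷ X) ⊗≫ 𝟙 _ := by monoidal
    _ = 𝟙 _ ⊗≫ (δ ▷ X) ⊗≫ (A.X ◁ (X ◁ t)) ⊗≫ (A.X ◁ (ψ ▷ X)) ⊗≫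
          (A.X ◁ ((A.X ⊗ X) ◁ ε)) ⊗≫ (A.X ◁ (A.X ◁ ψ)) ⊗≫
          (((A.mul ▷ A.X) ≫ A.mul) ▷ X) ⊗≫ 𝟙 _ := by rw [← A.mul_assoc]
    _ = 𝟙 _ ⊗≫ (δ ▷ X) ⊗≫ (A.X ◁ (X ◁ t)) ⊗≫ (A.X ◁ (ψ ▷ X)) ⊗≫
          (((A.X ⊗ A.X) ◁ ((X ◁ ε) ≫ ψ)) ≫ (A.mul ▷ (A.X ⊗ X))) ⊗≫
          (A.mul ▷ X) ⊗≫ 𝟙 _ := by monoidal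
    _ = 𝟙 _ ⊗≫ (δ ▷ X) ⊗≫ (A.X ◁ (X ◁ t)) ⊗≫ (A.X ◁ (ψ ▷ X)) ⊗≫
          ((A.mul ▷ (X ⊗ X)) ≫ (A.X ◁ ((X ◁ ε) ≫ ψ))) ⊗≫ (A.mul ▷ X) ⊗≫ 𝟙 _ := by
        rw [whisker_exchange]
    _ = 𝟙 _ ⊗≫ (δ ▷ X) ⊗≫ (((A.one ▷ A.X) ≫ A.mul) ▷ ((X ⊗ X) ⊗ X)) ⊗≫
          (A.X ◁ (X ◁ t)) ⊗≫ (A.X ◁ (ψ ▷ X)) ⊗≫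
          ((A.mul ▷ (X ⊗ X)) ≫ (A.X ◁ ((X ◁ ε) ≫ ψ))) ⊗≫ (A.mul ▷ X) ⊗≫ 𝟙 _ := by
        rw [A.one_mul]; monoidal
    _ = (δ ▷ X) ≫ (λ_ ((A.X ⊗ (X ⊗ X)) ⊗ X)).inv ≫
          (A.one ▷ ((A.X ⊗ (X ⊗ X)) ⊗ X)) ≫
          (𝟙 _ ⊗≫ (A.mul ▷ ((X ⊗ X) ⊗ X)) ⊗≫ (A.X ◁ (X ◁ t)) ⊗≫
            (A.X ◁ (ψ ▷ X)) ⊗≫ ((A.mul ▷ (X ⊗ X)) ≫ (A.X ◁ ((X ◁ ε) ≫ ψ))) ⊗≫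
            (A.mul ▷ X) ⊗≫ 𝟙 _) := by monoidal
    _ = (λ_ (X ⊗ X)).inv ≫ (A.one ▷ (X ⊗ X)) ≫ (A.X ◁ (δ ▷ X)) ≫
          (𝟙 _ ⊗≫ (A.mul ▷ ((X ⊗ X) ⊗ X)) ⊗≫ (A.X ◁ (X ◁ t)) ⊗≫
            (A.X ◁ (ψ ▷ X)) ⊗≫ ((A.mul ▷ (X ⊗ X)) ≫ (A.X ◁ ((X ◁ ε) ≫ ψ))) ⊗≫
            (A.mul ▷ X) ⊗≫ 𝟙 _) := by
        rw [reassoc_of% (st18_unit_pull A.one (δ ▷ X))]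
    _ = (((λ_ X).inv ≫ (A.one ▷ X)) ▷ X) ≫
          ((((A.X ◁ δ) ≫ (α_ A.X A.X (X ⊗ X)).inv ≫ (A.mul ▷ (X ⊗ X)) ≫
            (α_ A.X X X).inv)) ▷ X) ≫
          ((α_ (A.X ⊗ X) X X).hom ≫ ((A.X ⊗ X) ◁ t) ≫ (α_ (A.X ⊗ X) A.X X).inv ≫
            (((α_ A.X X A.X).hom ≫ (A.X ◁ ψ) ≫ (α_ A.X A.X X).inv ≫ (A.mul ▷ X)) ▷ X))
          ≫ (((A.X ⊗ X) ◁ ε) ≫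
            ((α_ A.X X A.X).hom ≫ (A.X ◁ ψ) ≫ (α_ A.X A.X X).inv ≫ (A.mul ▷ X))) := by
        monoidal
    _ = (((λ_ X).inv ≫ (A.one ▷ X)) ▷ X) ≫
          ((((A.X ◁ δ) ≫ (α_ A.X A.X (X ⊗ X)).inv ≫ (A.mul ▷ (X ⊗ X)) ≫
            (α_ A.X X X).inv)) ▷ X) ≫ Θf ≫
          (((A.X ⊗ X) ◁ ε) ≫
            ((α_ A.X X A.X).hom ≫ (A.X ◁ ψ) ≫ (α_ A.X A.X X).inv ≫ (A.mul ▷ X))) := by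
        rw [← hSf]
    _ = (((λ_ X).inv ≫ (A.one ▷ X)) ▷ X) ≫ Θr ≫
          ((A.X ◁ δ) ≫ (α_ A.X A.X (X ⊗ X)).inv ≫ (A.mul ▷ (X ⊗ X)) ≫
            (α_ A.X X X).inv) ≫
          (((A.X ⊗ X) ◁ ε) ≫
            ((α_ A.X X A.X).hom ≫ (A.X ◁ ψ) ≫ (α_ A.X A.X X).inv ≫ (A.mul ▷ X))) := by
        rw [reassoc_of% Hnat]; simp only [Category.assoc]
    _ = t ≫ ((A.X ◁ δ) ≫ (α_ A.X A.X (X ⊗ X)).inv ≫ (A.mul ▷ (X ⊗ X)) ≫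
          (α_ A.X X X).inv) ≫
          (((A.X ⊗ X) ◁ ε) ≫
            ((α_ A.X X A.X).hom ≫ (A.X ◁ ψ) ≫ (α_ A.X A.X X).inv ≫ (A.mul ▷ X))) := by
        rw [← ht]; simp only [Category.assoc]
    _ = 𝟙 _ ⊗≫ t ⊗≫ (A.X ◁ δ) ⊗≫
          ((A.mul ▷ (X ⊗ X)) ≫ (A.X ◁ ((X ◁ ε) ≫ ψ))) ⊗≫
          ((α_ A.X A.X X).inv ≫ (A.mul ▷ X)) := by monoidal
    _ = 𝟙 _ ⊗≫ t ⊗≫ (A.X ◁ δ) ⊗≫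
          (((A.X ⊗ A.X) ◁ ((X ◁ ε) ≫ ψ)) ≫ (A.mul ▷ (A.X ⊗ X))) ⊗≫
          ((α_ A.X A.X X).inv ≫ (A.mul ▷ X)) := by rw [← whisker_exchange]
    _ = 𝟙 _ ⊗≫ t ⊗≫ (A.X ◁ δ) ⊗≫ (A.X ◁ (A.X ◁ ((X ◁ ε) ≫ ψ))) ⊗≫
          (((A.mul ▷ A.X) ≫ A.mul) ▷ X) ⊗≫ 𝟙 _ := by monoidal
    _ = 𝟙 _ ⊗≫ t ⊗≫ (A.X ◁ δ) ⊗≫ (A.X ◁ (A.X ◁ ((X ◁ ε) ≫ ψ))) ⊗≫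
          (((α_ A.X A.X A.X).hom ≫ (A.X ◁ A.mul) ≫ A.mul) ▷ X) ⊗≫ 𝟙 _ := by
        rw [A.mul_assoc]
    _ = 𝟙 _ ⊗≫ t ⊗≫ (A.X ◁ (δ ≫ (A.X ◁ (X ◁ ε)) ≫ (A.X ◁ ψ) ≫
          (α_ A.X A.X X).inv ≫ (A.mul ▷ X))) ⊗≫
          ((α_ A.X A.X X).inv ≫ (A.mul ▷ X)) := by monoidal
    _ = 𝟙 _ ⊗≫ t ⊗≫ (A.X ◁ ((λ_ X).inv ≫ (A.one ▷ X))) ⊗≫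
          ((α_ A.X A.X X).inv ≫ (A.mul ▷ X)) := by rw [counit_right]
    _ = 𝟙 _ ⊗≫ t ⊗≫ (((A.X ◁ A.one) ≫ A.mul) ▷ X) ⊗≫ 𝟙 _ := by monoidal
    _ = 𝟙 _ ⊗≫ t ⊗≫ ((ρ_ A.X).hom ▷ X) ⊗≫ 𝟙 _ := by rw [A.mul_one]
    _ = t := by monoidal

end Stmt18Aux

/-- if `𝟙` is a left `⊗`-generator of `C`, the forgetful functor
`F : C(ψ)_A^X ⥤ C_A` is separable if and only if there is a Casimir morphism
`B : X ⊗ X ⟶ A` for `(X, ψ)` in `T_A^#` (a morphism `X ⊗ X → 𝟙` in `T_A^#` satisfying the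
Casimir condition (c) of Lemma 4.3) such that `m ∘ (A ⊗ B) ∘ δ = ε`. -/
theorem stmt18 (A : Mon_ C) (W : Cowreath A)
    (hgen : ∀ {Y Z P : C} (f g : Y ⊗ Z ⟶ P),
      (∀ h : 𝟙_ C ⟶ Y, (h ▷ Z) ≫ f = (h ▷ Z) ≫ g) → f = g) :
    FunctorSeparable (forgetF A W) ↔
    (∃ B : W.X ⊗ W.X ⟶ A.X,
      -- `B` is a morphism `X ⊗ X → 𝟙` in `T_A^#`
      ((α_ W.X W.X A.X).inv ≫ (B ▷ A.X) ≫ A.mul =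
        (W.X ◁ W.ψ) ≫ (α_ W.X A.X W.X).inv ≫ (W.ψ ▷ W.X) ≫
          (α_ A.X W.X W.X).hom ≫ (A.X ◁ B) ≫ A.mul) ∧
      -- the Casimir condition (c) with respect to `δ`
      ((W.δ ▷ W.X) ≫ (α_ A.X (W.X ⊗ W.X) W.X).hom ≫ (A.X ◁ (α_ W.X W.X W.X).hom) ≫
          (A.X ◁ (W.X ◁ B)) ≫ (A.X ◁ W.ψ) ≫ (α_ A.X A.X W.X).inv ≫ (A.mul ▷ W.X) =
        (W.X ◁ W.δ) ≫ (α_ W.X A.X (W.X ⊗ W.X)).inv ≫ (W.ψ ▷ (W.X ⊗ W.X)) ≫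
          (α_ A.X W.X (W.X ⊗ W.X)).hom ≫ (A.X ◁ (α_ W.X W.X W.X).inv) ≫
          (A.X ◁ (B ▷ W.X)) ≫ (α_ A.X A.X W.X).inv ≫ (A.mul ▷ W.X)) ∧
      -- the normalization condition `m ∘ (A ⊗ B) ∘ δ = ε`
      (W.δ ≫ (A.X ◁ B) ≫ A.mul = W.ε)) := by
  constructor
  · -- separable → Casimir morphism
    rintro ⟨P, hP1, hP2⟩
    -- the unit-splitting (Rafael) natural transformation
    have hη : ∀ M : Ent A W,
        M.coact ≫ (P (st18_mkG W ((forgetF A W).obj M)) M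
          (st18_sigma W ((forgetF A W).obj M))).hom = 𝟙 M.carrier := by
      intro M
      have h0 : (forgetF A W).map (st18_eta W M) ≫
          st18_sigma W ((forgetF A W).obj M) ≫ (forgetF A W).map (𝟙 M) =
          (forgetF A W).map (𝟙 M) := by
        rw [CategoryTheory.Functor.map_id, Category.comp_id]
        exact st18_eta_sigma W M
      have h1 := hP2 (st18_mkG W ((forgetF A W).obj M)) M M M (st18_eta W M) (𝟙 M)
        (st18_sigma W ((forgetF A W).obj M))
      rw [h0, hP1] at h1
      have h2 := congrArg EntHom.hom h1.symm
      simp [st18_eta] at h2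
      exact h2
    have hnat : ∀ {M₁ M₂ : Ent A W} (g : M₁ ⟶ M₂),
        st18_mkGmap W ((forgetF A W).map g) ≫
          P (st18_mkG W ((forgetF A W).obj M₂)) M₂
            (st18_sigma W ((forgetF A W).obj M₂)) =
        P (st18_mkG W ((forgetF A W).obj M₁)) M₁
          (st18_sigma W ((forgetF A W).obj M₁)) ≫ g := by
      intro M₁ M₂ g
      have e1 := hP2 (st18_mkG W ((forgetF A W).obj M₁))
        (st18_mkG W ((forgetF A W).obj M₁)) M₁ M₂ (𝟙 _) g
        (st18_sigma W ((forgetF A W).obj M₁))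
      have e2 := hP2 (st18_mkG W ((forgetF A W).obj M₂))
        (st18_mkG W ((forgetF A W).obj M₁)) M₂ M₂
        (st18_mkGmap W ((forgetF A W).map g)) (𝟙 M₂)
        (st18_sigma W ((forgetF A W).obj M₂))
      rw [CategoryTheory.Functor.map_id, Category.id_comp, Category.id_comp] at e1
      rw [CategoryTheory.Functor.map_id, Category.comp_id, Category.comp_id,
        st18_sigma_natural W ((forgetF A W).map g)] at e2
      exact e2.symm.trans e1
    have tnat : ∀ {R S : RMod A} (φ : R ⟶ S),
        ((φ.hom ▷ W.X) ▷ W.X) ≫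
          (P (st18_mkG W ((forgetF A W).obj (st18_mkG W S))) (st18_mkG W S)
            (st18_sigma W ((forgetF A W).obj (st18_mkG W S)))).hom =
        (P (st18_mkG W ((forgetF A W).obj (st18_mkG W R))) (st18_mkG W R)
          (st18_sigma W ((forgetF A W).obj (st18_mkG W R)))).hom ≫
          (φ.hom ▷ W.X) := by
      intro R S φ
      have h2 := congrArg EntHom.hom (hnat (st18_mkGmap W φ))
      simp only [Ent_comp_hom] at h2
      exact h2
    have hS : ∀ R : RMod A,
        (P (st18_mkG W ((forgetF A W).obj (st18_mkG W R))) (st18_mkG W R)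
          (st18_sigma W ((forgetF A W).obj (st18_mkG W R)))).hom =
        (α_ R.carrier W.X W.X).hom ≫
          (R.carrier ◁ ((((λ_ W.X).inv ≫ (A.one ▷ W.X)) ▷ W.X) ≫
            (P (st18_mkG W ((forgetF A W).obj (st18_mkG W (regMod A))))
              (st18_mkG W (regMod A))
              (st18_sigma W ((forgetF A W).obj (st18_mkG W (regMod A))))).hom)) ≫
          (α_ R.carrier A.X W.X).inv ≫ (R.act ▷ W.X) := by
      intro R
      exact st18_structure hgen R.act _ _ (fun h => (st18_phi R h).hom)
        (fun h => rfl) (fun h => st18_phi_one R h) (fun h => tnat (st18_phi R h))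
    -- abbreviations (as plain terms, for definitional transparency)
    have hSreg := hS (regMod A)
    have hSFN := hS ((forgetF A W).obj (st18_mkG W (regMod A)))
    have hHtri := hη (st18_mkG W (regMod A))
    rw [hSreg] at hHtri
    have hHlin : ((α_ (A.X ⊗ W.X) W.X A.X).hom ≫ ((A.X ⊗ W.X) ◁ W.ψ) ≫
        (α_ (A.X ⊗ W.X) A.X W.X).inv ≫
        (((α_ A.X W.X A.X).hom ≫ (A.X ◁ W.ψ) ≫ (α_ A.X A.X W.X).inv ≫
          (A.mul ▷ W.X)) ▷ W.X)) ≫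
        (P (st18_mkG W ((forgetF A W).obj (st18_mkG W (regMod A))))
          (st18_mkG W (regMod A))
          (st18_sigma W ((forgetF A W).obj (st18_mkG W (regMod A))))).hom =
        ((P (st18_mkG W ((forgetF A W).obj (st18_mkG W (regMod A))))
          (st18_mkG W (regMod A))
          (st18_sigma W ((forgetF A W).obj (st18_mkG W (regMod A))))).hom ▷ A.X) ≫
        ((α_ A.X W.X A.X).hom ≫ (A.X ◁ W.ψ) ≫ (α_ A.X A.X W.X).inv ≫
          (A.mul ▷ W.X)) :=
      (P (st18_mkG W ((forgetF A W).obj (st18_mkG W (regMod A))))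
        (st18_mkG W (regMod A))
        (st18_sigma W ((forgetF A W).obj (st18_mkG W (regMod A))))).linear
    erw [Category.assoc, Category.assoc, Category.assoc] at hHlin
    have hHcol := (P (st18_mkG W ((forgetF A W).obj (st18_mkG W (regMod A))))
      (st18_mkG W (regMod A))
      (st18_sigma W ((forgetF A W).obj (st18_mkG W (regMod A))))).colinear
    have hHnat := congrArg EntHom.hom (hnat (st18_eta W (st18_mkG W (regMod A))))
    simp only [Ent_comp_hom] at hHnat
    refine ⟨((((λ_ W.X).inv ≫ (A.one ▷ W.X)) ▷ W.X) ≫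
        (P (st18_mkG W ((forgetF A W).obj (st18_mkG W (regMod A))))
          (st18_mkG W (regMod A))
          (st18_sigma W ((forgetF A W).obj (st18_mkG W (regMod A))))).hom) ≫
        (A.X ◁ W.ε) ≫ A.mul, ?_, ?_, ?_⟩
    · exact st18_cond1 _ (st18_HL _ _ rfl hSreg hHlin) W.ε_compat
    · exact (st18_T2 _ _ _ rfl W.ψ_mul W.counit_right hSFN hHnat).trans
        (st18_T1 _ _ rfl hSreg W.counit_left hHcol).symm
    · exact st18_cond3 _ (st18_HT0 _ hHtri)
  · -- Casimir morphism → separable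
    rintro ⟨B, hB1, hB2, hB3⟩
    have hco : ∀ M : Ent A W, M.coact ≫ (M.coact ▷ W.X) =
        M.coact ≫ (M.carrier ◁ W.δ) ≫ (α_ M.carrier A.X (W.X ⊗ W.X)).inv ≫
        (M.act ▷ (W.X ⊗ W.X)) ≫ (α_ M.carrier W.X W.X).inv := by
      intro M
      rw [← cancel_mono (α_ M.carrier W.X W.X).hom]
      simpa using M.coact_coassoc
    refine ⟨fun M N f =>
      { hom := M.coact ≫ (f.hom ▷ W.X) ≫ (N.coact ▷ W.X) ≫
          (α_ N.carrier W.X W.X).hom ≫ (N.carrier ◁ B) ≫ N.act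
        linear := st18_P_linear hB1 N.act_mul M.coact_linear N.coact_linear f.linear
        colinear := st18_P_colinear hB2 N.act_mul N.coact_linear f.linear
          (hco M) (hco N) }, ?_, ?_⟩
    · intro M N f
      apply EntHom.ext
      exact st18_P_id N.act_mul (hco N) hB3 N.coact_counit f.colinear
    · intro M M' N N' a b f
      apply EntHom.ext
      simp only [Ent_comp_hom, RMod_comp_hom]
      exact st18_P_nat a.colinear b.colinear b.linear
end
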